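/- arXiv:2105.09238 — 6 statements merged into one kernel-verified Lean document; each statement's English description precedes it below -/
import Mathlib

section
/- The kernel I of h equals the ideal of F[t_1, …, t_m] generated by the polynomials P_L, where L ranges over the minimal linear relations only. -/
open scoped TensorProduct
open MvPolynomial

noncomputable section

def zpoly {F : Type} [Field F] {n m : ℕ} (c : Fin m → Fin n → F) (i : Fin m) :
    MvPolynomial (Fin n) F :=
  ∑ j, C (c i j) * X j

def lsupp {F : Type} [Field F] {m : ℕ} (a : Fin m → F) : Finset (Fin m) :=
  @Finset.filter _ (fun i => a i ≠ 0) (Classical.decPred _) Finset.univ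

def IsLinRel {F : Type} [Field F] {n m : ℕ} (c : Fin m → Fin n → F) (a : Fin m → F) : Prop :=
  2 ≤ (lsupp a).card ∧ ∑ i ∈ lsupp a, C (a i) * zpoly c i = 0

def tMon {F : Type} [Field F] {m : ℕ} (M : Finset (Fin m)) : MvPolynomial (Fin m) F :=
  ∏ i ∈ M, X i

def PL {F : Type} [Field F] {m : ℕ} (a : Fin m → F) : MvPolynomial (Fin m) F :=
  ∑ i ∈ lsupp a, C (a i) * tMon (lsupp a \ {i})

abbrev ExtAlg (F : Type) [Field F] (k : ℕ) := ExteriorAlgebra F (Fin k → F)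

def uGen {F : Type} [Field F] {m : ℕ} (i : Fin m) : ExtAlg F m :=
  ExteriorAlgebra.ι F (Pi.single i 1)

def uList {F : Type} [Field F] {m : ℕ} (l : List (Fin m)) : ExtAlg F m :=
  (l.map uGen).prod

def uM {F : Type} [Field F] {m : ℕ} (M : Finset (Fin m)) : ExtAlg F m :=
  uList (M.sort (· ≤ ·))

abbrev XiAlg (F : Type) [Field F] (m : ℕ) := MvPolynomial (Fin m) F ⊗[F] ExtAlg F m

def PLS {F : Type} [Field F] {m : ℕ} (a : Fin m → F) (S : Finset (Fin m)) : XiAlg F m :=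
  ∑ i ∈ lsupp a \ S,
    (C (a i) * tMon (lsupp a \ insert i S)) ⊗ₜ[F]
      (uM S - ∑ s ∈ Finset.range (S.sort (· ≤ ·)).length, uList ((S.sort (· ≤ ·)).set s i))

/-- A linear relation is minimal if it is not the sum of two linear relations with
strictly smaller supports. -/
def IsMinRel {F : Type} [Field F] {n m : ℕ} (c : Fin m → Fin n → F) (a : Fin m → F) : Prop :=
  IsLinRel c a ∧
    ¬ ∃ a₁ a₂ : Fin m → F, IsLinRel c a₁ ∧ IsLinRel c a₂ ∧ a = a₁ + a₂ ∧
      lsupp a₁ ⊂ lsupp a ∧ lsupp a₂ ⊂ lsupp a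


namespace OT
variable {F : Type} [Field F] {n m : ℕ}

lemma mem_lsupp {a : Fin m → F} {i : Fin m} : i ∈ lsupp a ↔ a i ≠ 0 := by
  simp [lsupp]

lemma zpoly_ne_zero (c : Fin m → Fin n → F) (i : Fin m) (h : c i ≠ 0) : zpoly c i ≠ 0 := by
  obtain ⟨j, hj⟩ := Function.ne_iff.mp h
  intro h0
  have := congrArg (MvPolynomial.eval (Pi.single j (1:F))) h0
  simp [zpoly, Pi.single_apply, Finset.sum_ite_eq'] at this
  exact hj this

/-- Dependence of a set of rows. -/
def Dep (c : Fin m → Fin n → F) (S : Finset (Fin m)) : Prop :=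
  ∃ a : Fin m → F, (∀ i, a i ≠ 0 → i ∈ S) ∧ a ≠ 0 ∧ ∑ i, a i • zpoly c i = 0

def Circuit (c : Fin m → Fin n → F) (C : Finset (Fin m)) : Prop :=
  Dep c C ∧ ∀ T ⊂ C, ¬ Dep c T

/-- no broken circuit contained -/
def NBC (c : Fin m → Fin n → F) (B : Finset (Fin m)) : Prop :=
  ∀ C, Circuit c C → ∀ i0 ∈ C, (∀ j ∈ C, i0 ≤ j) → ¬ (C \ {i0} ⊆ B)

lemma not_dep_singleton {c : Fin m → Fin n → F} (hc : ∀ i, c i ≠ 0) (i : Fin m) :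
    ¬ Dep c {i} := by
  rintro ⟨a, h1, h2, h3⟩
  have hsum : ∑ j, a j • zpoly c j = a i • zpoly c i := by
    apply Finset.sum_eq_single
    · intro j _ hj
      have : a j = 0 := by
        by_contra h
        exact hj (Finset.mem_singleton.mp (h1 j h))
      simp [this]
    · simp
  rw [hsum] at h3
  have hai : a i = 0 := by
    rcases smul_eq_zero.mp h3 with h | h
    · exact h
    · exact absurd h (zpoly_ne_zero c i (hc i))
  apply h2
  funext j
  by_cases hj : a j = 0
  · simp [hj]
  · have := Finset.mem_singleton.mp (h1 j hj)
    subst this; simp [hai] at hj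

lemma not_dep_empty {c : Fin m → Fin n → F} : ¬ Dep c (∅ : Finset (Fin m)) := by
  rintro ⟨a, h1, h2, h3⟩
  apply h2
  funext j
  by_contra hj
  simpa using h1 j hj

lemma dep_exists_circuit {c : Fin m → Fin n → F} :
    ∀ (S : Finset (Fin m)), Dep c S → ∃ C ⊆ S, Circuit c C := by
  intro S
  induction S using Finset.strongInduction with
  | _ S ih =>
    intro hS
    by_cases h : ∀ T ⊂ S, ¬ Dep c T
    · exact ⟨S, Finset.Subset.refl S, hS, h⟩
    · push_neg at h
      obtain ⟨T, hT, hTd⟩ := h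
      obtain ⟨C, hCT, hC⟩ := ih T hT hTd
      exact ⟨C, hCT.trans hT.subset, hC⟩

/-- a circuit carries a relation with full support -/
lemma circuit_rel {c : Fin m → Fin n → F} {C : Finset (Fin m)} (hC : Circuit c C) :
    ∃ a : Fin m → F, (∀ i, a i ≠ 0 ↔ i ∈ C) ∧ ∑ i, a i • zpoly c i = 0 := by
  obtain ⟨⟨a, h1, h2, h3⟩, hmin⟩ := hC
  refine ⟨a, fun i => ⟨h1 i, ?_⟩, h3⟩
  intro hi
  by_contra hai
  have : Dep c (C.erase i) := by
    refine ⟨a, fun j hj => Finset.mem_erase.mpr ⟨?_, h1 j hj⟩, h2, h3⟩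
    rintro rfl; exact hj hai
  exact hmin _ (Finset.erase_ssubset hi) this

lemma circuit_card {c : Fin m → Fin n → F} (hc : ∀ i, c i ≠ 0) {C : Finset (Fin m)}
    (hC : Circuit c C) : 2 ≤ C.card := by
  by_contra h
  push_neg at h
  interval_cases hcard : C.card
  · rw [Finset.card_eq_zero] at hcard
    subst hcard
    exact not_dep_empty hC.1
  · rw [Finset.card_eq_one] at hcard
    obtain ⟨i, rfl⟩ := hcard
    exact not_dep_singleton hc i hC.1

lemma lsupp_eq_of_rel {a : Fin m → F} {C : Finset (Fin m)}
    (h : ∀ i, a i ≠ 0 ↔ i ∈ C) : lsupp a = C := by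
  ext i; simp [mem_lsupp, h i]

/-- A relation supported on a circuit is a linear relation in the sense of the problem. -/
lemma circuit_isLinRel {c : Fin m → Fin n → F} (hc : ∀ i, c i ≠ 0) {C : Finset (Fin m)}
    (hC : Circuit c C) {a : Fin m → F} (ha : ∀ i, a i ≠ 0 ↔ i ∈ C)
    (hrel : ∑ i, a i • zpoly c i = 0) : IsLinRel c a := by
  have hls : lsupp a = C := lsupp_eq_of_rel ha
  constructor
  · rw [hls]; exact circuit_card hc hC
  · rw [hls]
    rw [← hrel]
    rw [Finset.sum_subset (Finset.subset_univ C)]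
    · apply Finset.sum_congr rfl
      intro i _
      rw [MvPolynomial.smul_eq_C_mul]
    · intro i _ hi
      have : a i = 0 := by
        by_contra h; exact hi ((ha i).mp h)
      simp [this]

/-- conversely a linear relation witnesses dependence of its support -/
lemma isLinRel_dep {c : Fin m → Fin n → F} {a : Fin m → F} (h : IsLinRel c a) :
    Dep c (lsupp a) := by
  obtain ⟨hcard, hrel⟩ := h
  refine ⟨a, fun i hi => mem_lsupp.mpr hi, ?_, ?_⟩
  · have : (lsupp a).Nonempty := Finset.card_pos.mp (by omega)
    obtain ⟨i, hi⟩ := this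
    intro h0
    exact (mem_lsupp.mp hi) (by rw [h0]; rfl)
  · rw [← hrel, Finset.sum_subset (Finset.subset_univ (lsupp a))]
    · apply Finset.sum_congr rfl
      intro i _
      rw [MvPolynomial.smul_eq_C_mul]
    · intro i _ hi
      have : a i = 0 := by
        by_contra h; exact hi (mem_lsupp.mpr h)
      simp [this]

lemma circuit_isMinRel {c : Fin m → Fin n → F} (hc : ∀ i, c i ≠ 0) {C : Finset (Fin m)}
    (hC : Circuit c C) {a : Fin m → F} (ha : ∀ i, a i ≠ 0 ↔ i ∈ C)
    (hrel : ∑ i, a i • zpoly c i = 0) : IsMinRel c a := by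
  have hls : lsupp a = C := lsupp_eq_of_rel ha
  refine ⟨circuit_isLinRel hc hC ha hrel, ?_⟩
  rintro ⟨a₁, a₂, h₁, h₂, rfl, hs₁, hs₂⟩
  rw [hls] at hs₁
  exact hC.2 _ hs₁ (isLinRel_dep h₁)

end OT
namespace OT2
open OT MvPolynomial
variable {F : Type} [Field F] {n m : ℕ}

/-- exponent of the squarefree monomial on M -/
def indM (M : Finset (Fin m)) : Fin m →₀ ℕ := ∑ j ∈ M, Finsupp.single j 1

lemma indM_apply (M : Finset (Fin m)) (j : Fin m) :
    indM M j = if j ∈ M then 1 else 0 := by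
  classical
  simp only [indM, Finsupp.finset_sum_apply, Finsupp.single_apply]
  rw [Finset.sum_ite_eq' M j (fun _ => 1)]

lemma indM_insert {j : Fin m} {M : Finset (Fin m)} (h : j ∉ M) :
    indM (insert j M) = Finsupp.single j 1 + indM M := by
  rw [indM, Finset.sum_insert h, indM]

lemma tMon_eq (M : Finset (Fin m)) :
    (tMon M : MvPolynomial (Fin m) F) = monomial (indM M) 1 := by
  classical
  induction M using Finset.induction with
  | empty => simp [tMon, indM]
  | insert j M' h ih =>
    rw [tMon, Finset.prod_insert h, ← tMon, ih, X, monomial_mul, one_mul, indM_insert h]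

/-- the weight used for termination of the straightening algorithm -/
def w (d : Fin m →₀ ℕ) : ℕ := ∑ i, d i * (m+1)^(i : ℕ)

lemma w_add (d e : Fin m →₀ ℕ) : w (d + e) = w d + w e := by
  simp [w, add_mul, Finset.sum_add_distrib]

lemma w_single (j : Fin m) : w (Finsupp.single j 1) = (m+1)^(j:ℕ) := by
  rw [w]
  rw [Finset.sum_eq_single j]
  · simp
  · intro i _ hij; simp [Finsupp.single_apply, Ne.symm hij]
  · simp

lemma sub_add_single (d : Fin m →₀ ℕ) (i : Fin m) (hd : d i ≠ 0) :
    (d - Finsupp.single i 1) + Finsupp.single i 1 = d := by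
  ext j
  simp only [Finsupp.add_apply, Finsupp.tsub_apply, Finsupp.single_apply]
  by_cases h : i = j
  · subst h; simp; omega
  · simp [h]

lemma w_lt {d : Fin m →₀ ℕ} {i i0 : Fin m} (h : i0 < i) (hd : d i ≠ 0) :
    w (d - Finsupp.single i 1 + Finsupp.single i0 1) < w d := by
  have h1 : w d = w (d - Finsupp.single i 1) + (m+1)^(i:ℕ) := by
    conv_lhs => rw [← sub_add_single d i hd]
    rw [w_add, w_single]
  rw [w_add, w_single, h1]
  have : (m+1)^(i0:ℕ) < (m+1)^(i:ℕ) :=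
    Nat.pow_lt_pow_right (by omega) (by exact_mod_cast h)
  omega

end OT2
namespace OT3
open OT OT2 MvPolynomial
variable {F : Type} [Field F] {n m : ℕ}

lemma claim1 {d : Fin m →₀ ℕ} {Ci : Finset (Fin m)} {i0 : Fin m}
    (hd : ∀ j ∈ Ci, j ≠ i0 → d j ≠ 0) :
    d - indM (Ci \ {i0}) + indM (Ci \ {i0}) = d := by
  ext j
  simp only [Finsupp.add_apply, Finsupp.tsub_apply, indM_apply, Finset.mem_sdiff,
    Finset.mem_singleton]
  by_cases hj : j ∈ Ci ∧ ¬ j = i0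
  · have := hd j hj.1 hj.2
    simp only [if_pos hj]
    omega
  · simp [if_neg hj]

lemma claim2 {d : Fin m →₀ ℕ} {Ci : Finset (Fin m)} {i0 i : Fin m}
    (hd : ∀ j ∈ Ci, j ≠ i0 → d j ≠ 0) (hi0 : i0 ∈ Ci) (hi : i ∈ Ci) (hne : i ≠ i0) :
    d - indM (Ci \ {i0}) + indM (Ci \ {i}) = d - Finsupp.single i 1 + Finsupp.single i0 1 := by
  ext j
  have hd' : j ∈ Ci → j ≠ i0 → 1 ≤ d j :=
    fun h1 h2 => Nat.one_le_iff_ne_zero.mpr (hd j h1 h2)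
  simp only [Finsupp.add_apply, Finsupp.tsub_apply, indM_apply, Finset.mem_sdiff,
    Finset.mem_singleton, Finsupp.single_apply]
  by_cases hjC : j ∈ Ci
  · by_cases hji : j = i
    · have hj0 : ¬ j = i0 := fun h => hne (hji.symm.trans h)
      rw [if_pos (⟨hjC, hj0⟩ : j ∈ Ci ∧ ¬j = i0),
        if_neg (show ¬(j ∈ Ci ∧ ¬j = i) by tauto),
        if_pos hji.symm, if_neg (show ¬i0 = j from fun h => hj0 h.symm)]
    · by_cases hji0 : j = i0
      · rw [if_neg (show ¬(j ∈ Ci ∧ ¬j = i0) by tauto),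
          if_pos (⟨hjC, hji⟩ : j ∈ Ci ∧ ¬j = i),
          if_neg (show ¬i = j from fun h => hji h.symm), if_pos hji0.symm]
      · rw [if_pos (⟨hjC, hji0⟩ : j ∈ Ci ∧ ¬j = i0),
          if_pos (⟨hjC, hji⟩ : j ∈ Ci ∧ ¬j = i),
          if_neg (show ¬i = j from fun h => hji h.symm),
          if_neg (show ¬i0 = j from fun h => hji0 h.symm)]
        have := hd' hjC hji0; omega
  · rw [if_neg (show ¬(j ∈ Ci ∧ ¬j = i0) by tauto),
      if_neg (show ¬(j ∈ Ci ∧ ¬j = i) by tauto),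
      if_neg (show ¬i = j from fun h => hjC (h ▸ hi)),
      if_neg (show ¬i0 = j from fun h => hjC (h ▸ hi0))]

def Jmin (c : Fin m → Fin n → F) : Ideal (MvPolynomial (Fin m) F) :=
  Ideal.span {p | ∃ a : Fin m → F, IsMinRel c a ∧ p = PL a}

def NBCspan (c : Fin m → Fin n → F) : Submodule F (MvPolynomial (Fin m) F) :=
  Submodule.span F {p | ∃ e : Fin m →₀ ℕ, NBC c e.support ∧ p = monomial e 1}

lemma mono_mul (e f : Fin m →₀ ℕ) (b : F) :
    (monomial e 1 : MvPolynomial (Fin m) F) * (C b * monomial f 1)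
      = C b * monomial (e + f) 1 := by
  rw [mul_left_comm, monomial_mul, one_mul]

lemma monomial_reduce (c : Fin m → Fin n → F) (hc : ∀ i, c i ≠ 0) (d : Fin m →₀ ℕ) :
    ∃ q ∈ Jmin c, (monomial d 1 : MvPolynomial (Fin m) F) - q ∈ NBCspan c := by
  generalize hw : w d = k
  induction k using Nat.strong_induction_on generalizing d with
  | _ k ih =>
  subst hw
  by_cases hnbc : NBC c d.support
  · exact ⟨0, Ideal.zero_mem _, by
      rw [sub_zero]; exact Submodule.subset_span ⟨d, hnbc, rfl⟩⟩
  · rw [NBC] at hnbc; push_neg at hnbc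
    obtain ⟨Ci, hC, i0, hi0, hmin, hsub⟩ := hnbc
    obtain ⟨a, ha, hrel⟩ := circuit_rel hC
    have hls : lsupp a = Ci := lsupp_eq_of_rel ha
    have hai0 : a i0 ≠ 0 := (ha i0).mpr hi0
    have hd : ∀ j ∈ Ci, j ≠ i0 → d j ≠ 0 := by
      intro j hj hji
      exact Finsupp.mem_support_iff.mp
        (hsub (Finset.mem_sdiff.mpr ⟨hj, by simp [hji]⟩))
    set e := d - indM (Ci \ {i0}) with he
    set dd : Fin m → (Fin m →₀ ℕ) :=
      fun i => d - Finsupp.single i 1 + Finsupp.single i0 1 with hdd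
    have key : (monomial e 1 : MvPolynomial (Fin m) F) * PL a
        = C (a i0) * monomial d 1
          + ∑ i ∈ Finset.erase Ci i0, C (a i) * monomial (dd i) 1 := by
      rw [PL, hls, Finset.mul_sum]
      simp_rw [tMon_eq, mono_mul]
      rw [← Finset.add_sum_erase _ _ hi0]
      congr 1
      · rw [he, claim1 hd]
      · apply Finset.sum_congr rfl
        intro i hi
        rw [he, claim2 hd hi0 (Finset.mem_of_mem_erase hi) (Finset.ne_of_mem_erase hi)]
    have hinv : (C ((a i0)⁻¹) : MvPolynomial (Fin m) F) * C (a i0) = 1 := by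
      rw [← map_mul, inv_mul_cancel₀ hai0, map_one]
    have hmono : (monomial d 1 : MvPolynomial (Fin m) F)
        = C ((a i0)⁻¹) * (monomial e 1 * PL a)
          - ∑ i ∈ Finset.erase Ci i0, C ((a i0)⁻¹ * a i) * monomial (dd i) 1 := by
      rw [key, mul_add, Finset.mul_sum]
      simp_rw [map_mul, mul_assoc]
      rw [← mul_assoc (C ((a i0)⁻¹)) (C (a i0)), hinv, one_mul]
      rw [add_sub_cancel_right]
    have hrec : ∀ i ∈ Finset.erase Ci i0,
        ∃ q ∈ Jmin c, (monomial (dd i) 1 : MvPolynomial (Fin m) F) - q ∈ NBCspan c := by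
      intro i hi
      have hlt : w (dd i) < w d := by
        apply w_lt
        · exact lt_of_le_of_ne (hmin i (Finset.mem_of_mem_erase hi))
            (Ne.symm (Finset.ne_of_mem_erase hi))
        · exact hd i (Finset.mem_of_mem_erase hi) (Finset.ne_of_mem_erase hi)
      exact ih _ hlt _ rfl
    choose! qf hqJ hqr using hrec
    refine ⟨C ((a i0)⁻¹) * (monomial e 1 * PL a)
      - ∑ i ∈ Finset.erase Ci i0, C ((a i0)⁻¹ * a i) * qf i, ?_, ?_⟩
    · apply Ideal.sub_mem
      · exact Ideal.mul_mem_left _ _ (Ideal.mul_mem_left _ _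
          (Ideal.subset_span ⟨a, circuit_isMinRel hc hC ha hrel, rfl⟩))
      · apply Ideal.sum_mem
        intro i hi
        exact Ideal.mul_mem_left _ _ (hqJ i hi)
    · have heq : (monomial d 1 : MvPolynomial (Fin m) F)
          - (C ((a i0)⁻¹) * (monomial e 1 * PL a)
            - ∑ i ∈ Finset.erase Ci i0, C ((a i0)⁻¹ * a i) * qf i)
          = ∑ i ∈ Finset.erase Ci i0,
              (-((a i0)⁻¹ * a i)) • ((monomial (dd i) 1 : MvPolynomial (Fin m) F) - qf i) := by
        conv_lhs => rw [hmono]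
        rw [sub_sub_sub_cancel_left, ← Finset.sum_sub_distrib]
        apply Finset.sum_congr rfl
        intro i _
        rw [neg_smul, smul_sub, smul_eq_C_mul, smul_eq_C_mul]
        ring
      rw [heq]
      apply Submodule.sum_mem
      intro i hi
      exact Submodule.smul_mem _ _ (hqr i hi)

lemma nbcspan_support {c : Fin m → Fin n → F} {p : MvPolynomial (Fin m) F}
    (hp : p ∈ NBCspan c) : ∀ d ∈ p.support, NBC c d.support := by
  refine Submodule.span_induction ?_ ?_ ?_ ?_ hp
  · rintro x ⟨e, he, rfl⟩ d hd
    have : d = e := by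
      have := MvPolynomial.support_monomial_subset hd
      simpa using this
    subst this; exact he
  · simp
  · intro x y _ _ hx hy d hd
    rcases Finset.mem_union.mp (MvPolynomial.support_add hd) with h | h
    · exact hx d h
    · exact hy d h
  · intro b x _ hx d hd
    exact hx d (MvPolynomial.support_smul hd)

/-- every polynomial splits as ideal part + NBC part -/
lemma poly_reduce (c : Fin m → Fin n → F) (hc : ∀ i, c i ≠ 0) (f : MvPolynomial (Fin m) F) :
    ∃ q ∈ Jmin c, f - q ∈ NBCspan c := by
  have hex : ∀ d ∈ f.support, ∃ q ∈ Jmin c,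
      (monomial d 1 : MvPolynomial (Fin m) F) - q ∈ NBCspan c :=
    fun d _ => monomial_reduce c hc d
  choose! qf hqJ hqr using hex
  refine ⟨∑ d ∈ f.support, C (f.coeff d) * qf d, ?_, ?_⟩
  · exact Ideal.sum_mem _ (fun d hd => Ideal.mul_mem_left _ _ (hqJ d hd))
  · have heq : f - ∑ d ∈ f.support, C (f.coeff d) * qf d
        = ∑ d ∈ f.support, (f.coeff d) • ((monomial d 1 : MvPolynomial (Fin m) F) - qf d) := by
      nth_rewrite 1 [f.as_sum]
      rw [← Finset.sum_sub_distrib]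
      apply Finset.sum_congr rfl
      intro d _
      rw [smul_sub, MvPolynomial.smul_monomial, smul_eq_mul, mul_one, smul_eq_C_mul]
    rw [heq]
    apply Submodule.sum_mem
    intro d hd
    exact Submodule.smul_mem _ _ (hqr d hd)

end OT3
namespace OT4
open OT MvPolynomial
variable {F : Type} [Field F] {n m : ℕ}

variable (c : Fin m → Fin n → F)
  {R : Type} [CommRing R] [Algebra F R] [Algebra (MvPolynomial (Fin n) F) R]
  [IsScalarTower F (MvPolynomial (Fin n) F) R]
  (zinv : Fin m → R)

/-- image of a linear relation polynomial is zero -/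
lemma aeval_PL_eq_zero
    (hzinv : ∀ i, algebraMap (MvPolynomial (Fin n) F) R (zpoly c i) * zinv i = 1)
    {a : Fin m → F} (ha : IsLinRel c a) :
    MvPolynomial.aeval zinv (PL a) = 0 := by
  set A := algebraMap (MvPolynomial (Fin n) F) R with hA
  set P : R := ∏ j ∈ lsupp a, A (zpoly c j) with hP
  have hunit : P * (∏ j ∈ lsupp a, zinv j) = 1 := by
    rw [hP, ← Finset.prod_mul_distrib]
    rw [Finset.prod_congr rfl (fun j _ => hzinv j)]
    exact Finset.prod_const_one
  have hkey : MvPolynomial.aeval zinv (PL a) * P = 0 := by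
    have h1 : MvPolynomial.aeval zinv (PL a)
        = ∑ i ∈ lsupp a, algebraMap F R (a i) * ∏ j ∈ lsupp a \ {i}, zinv j := by
      rw [PL, map_sum]
      apply Finset.sum_congr rfl
      intro i _
      rw [map_mul, MvPolynomial.aeval_C, tMon, map_prod]
      congr 1
      exact Finset.prod_congr rfl (fun j _ => MvPolynomial.aeval_X zinv j)
    rw [h1, Finset.sum_mul]
    have h2 : ∀ i ∈ lsupp a,
        (algebraMap F R (a i) * ∏ j ∈ lsupp a \ {i}, zinv j) * P
          = algebraMap F R (a i) * A (zpoly c i) := by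
      intro i hi
      have hsd : lsupp a \ {i} = (lsupp a).erase i := by
        rw [Finset.erase_eq]
      rw [hP, ← Finset.mul_prod_erase _ _ hi, hsd]
      rw [show (algebraMap F R (a i) * ∏ j ∈ (lsupp a).erase i, zinv j)
          * (A (zpoly c i) * ∏ j ∈ (lsupp a).erase i, A (zpoly c j))
          = algebraMap F R (a i) * A (zpoly c i)
            * ∏ j ∈ (lsupp a).erase i, (A (zpoly c j) * zinv j) by
        rw [Finset.prod_mul_distrib]; ring]
      rw [Finset.prod_congr rfl (fun j _ => hzinv j), Finset.prod_const_one, mul_one]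
    rw [Finset.sum_congr rfl h2]
    have h3 : ∀ i ∈ lsupp a, algebraMap F R (a i) * A (zpoly c i)
        = A (MvPolynomial.C (a i) * zpoly c i) := by
      intro i _
      rw [map_mul, hA, ← MvPolynomial.algebraMap_eq, ← IsScalarTower.algebraMap_apply]
    rw [Finset.sum_congr rfl h3, ← map_sum, ha.2, map_zero]
  calc MvPolynomial.aeval zinv (PL a)
      = MvPolynomial.aeval zinv (PL a) * (P * ∏ j ∈ lsupp a, zinv j) := by
        rw [hunit, mul_one]
    _ = (MvPolynomial.aeval zinv (PL a) * P) * ∏ j ∈ lsupp a, zinv j := by ring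
    _ = 0 := by rw [hkey, zero_mul]

/-- clearing denominators -/
lemma bridge [IsLocalization.Away (∏ i, zpoly c i) R]
    (hzinv : ∀ i, algebraMap (MvPolynomial (Fin n) F) R (zpoly c i) * zinv i = 1)
    (hc : ∀ i, c i ≠ 0)
    (p : MvPolynomial (Fin m) F) (hp : MvPolynomial.aeval zinv p = 0) (N : ℕ)
    (hN : ∀ d ∈ p.support, ∀ i, d i ≤ N) :
    ∑ d ∈ p.support, (p.coeff d) • ∏ i, (zpoly c i)^(N - d i) = 0 := by
  set A := algebraMap (MvPolynomial (Fin n) F) R with hA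
  have hinj : Function.Injective A := by
    apply IsLocalization.injective (M := Submonoid.powers (∏ i, zpoly c i)) R
    apply powers_le_nonZeroDivisors_of_noZeroDivisors
    exact Finset.prod_ne_zero_iff.mpr (fun i _ => zpoly_ne_zero c i (hc i))
  apply hinj
  rw [map_zero]
  have hAH : ∀ (x : MvPolynomial (Fin n) F) (b : F), A (b • x) = b • A x := by
    intro x b
    rw [Algebra.smul_def, Algebra.smul_def, map_mul, hA,
      ← IsScalarTower.algebraMap_apply]
  rw [map_sum]
  set Q : R := ∏ i, A (zpoly c i) ^ N with hQ
  have hterm : ∀ d ∈ p.support,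
      A ((p.coeff d) • ∏ i, (zpoly c i)^(N - d i))
        = (p.coeff d) • (MvPolynomial.aeval zinv (monomial d (1:F)) * Q) := by
    intro d hd
    rw [hAH]
    congr 1
    rw [map_prod]
    have hmono : MvPolynomial.aeval zinv (monomial d (1:F)) = ∏ i, zinv i ^ d i := by
      rw [MvPolynomial.aeval_monomial, map_one, one_mul]
      exact Finsupp.prod_fintype _ _ (fun i => pow_zero (zinv i))
    rw [hmono, hQ, ← Finset.prod_mul_distrib]
    apply Finset.prod_congr rfl
    intro i _
    rw [map_pow]
    calc A (zpoly c i) ^ (N - d i)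
        = A (zpoly c i) ^ (N - d i) * ((A (zpoly c i) * zinv i) ^ (d i)) := by
          rw [hzinv i, one_pow, mul_one]
      _ = zinv i ^ d i * A (zpoly c i) ^ N := by
          rw [mul_pow, ← mul_assoc, ← pow_add]
          rw [Nat.sub_add_cancel (hN d hd i)]
          ring
  rw [Finset.sum_congr rfl hterm]
  have hpsum : p = ∑ d ∈ p.support, (p.coeff d) • monomial d (1:F) := by
    conv_lhs => rw [p.as_sum]
    apply Finset.sum_congr rfl
    intro d _
    rw [MvPolynomial.smul_monomial, smul_eq_mul, mul_one]
  have hsum : ∑ d ∈ p.support, (p.coeff d) •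
      (MvPolynomial.aeval zinv (monomial d (1:F)) * Q)
      = MvPolynomial.aeval zinv p * Q := by
    conv_rhs => rw [hpsum]
    rw [map_sum, Finset.sum_mul]
    apply Finset.sum_congr rfl
    intro d _
    rw [map_smul, smul_mul_assoc]
  rw [hsum, hp, zero_mul]

end OT4
namespace OT5
open OT MvPolynomial
variable {F : Type} [Field F] {n : ℕ}

def fsupp {m : ℕ} (β : Fin m → ℕ) : Finset (Fin m) :=
  @Finset.filter _ (fun i => β i ≠ 0) (Classical.decPred _) Finset.univ

lemma mem_fsupp {m : ℕ} {β : Fin m → ℕ} {i : Fin m} : i ∈ fsupp β ↔ β i ≠ 0 := by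
  simp [fsupp]

/-- computation of the substitution map on linear forms -/
lemma sigma_z {m : ℕ} (c : Fin m → Fin n → F) (v : Fin n → F)
    (zz : MvPolynomial (Fin n) F) (i : Fin m) :
    (MvPolynomial.aeval
      (fun j => Polynomial.C (X j - v j • zz)
        + Polynomial.C (C (v j)) * (Polynomial.X : Polynomial (MvPolynomial (Fin n) F))))
      (zpoly c i)
      = Polynomial.C (zpoly c i - (∑ j, c i j * v j) • zz)
        + Polynomial.C (C (∑ j, c i j * v j)) * Polynomial.X := by
  rw [zpoly, map_sum]
  have hterm : ∀ j, (MvPolynomial.aeval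
      (fun j => Polynomial.C (X j - v j • zz)
        + Polynomial.C (C (v j)) * (Polynomial.X : Polynomial (MvPolynomial (Fin n) F))))
      (C (c i j) * X j)
      = Polynomial.C (C (c i j) * X j - (c i j * v j) • zz)
        + Polynomial.C (C (c i j * v j)) * Polynomial.X := by
    intro j
    rw [map_mul, MvPolynomial.aeval_C, MvPolynomial.aeval_X]
    have halg : (algebraMap F (Polynomial (MvPolynomial (Fin n) F))) (c i j)
        = Polynomial.C (C (c i j)) := rfl
    rw [halg, mul_add, ← Polynomial.C_mul, ← mul_assoc, ← Polynomial.C_mul, ← map_mul]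
    congr 2
    rw [mul_sub]
    congr 1
    rw [smul_eq_C_mul, smul_eq_C_mul, ← mul_assoc, ← map_mul]
  rw [Finset.sum_congr rfl (fun j _ => hterm j)]
  rw [Finset.sum_add_distrib, ← map_sum, ← Finset.sum_mul, ← map_sum, ← map_sum]
  congr 3
  · rw [Finset.sum_sub_distrib, ← zpoly]
    congr 1
    rw [Finset.sum_smul]

end OT5
namespace OT6
open OT OT5 MvPolynomial
variable {F : Type} [Field F] {n m : ℕ}

lemma circuit_nonempty {c : Fin m → Fin n → F} {C : Finset (Fin m)} (hC : Circuit c C) :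
    C.Nonempty := by
  rcases Finset.eq_empty_or_nonempty C with h | h
  · subst h; exact absurd hC.1 not_dep_empty
  · exact h

/-- NBC transport under restriction to the last hyperplane -/
lemma NBC_restrict {c : Fin (m+1) → Fin n → F} {lam : Fin (m+1) → F}
    {c'' : Fin m → Fin n → F}
    (hwz : ∀ i : Fin m, zpoly c'' i
      = zpoly c (Fin.castSucc i) - lam (Fin.castSucc i) • zpoly c (Fin.last m))
    {B : Finset (Fin (m+1))} (hB : NBC c B) (hL : Fin.last m ∈ B)
    {B' : Finset (Fin m)} (hB' : ∀ i, i ∈ B' ↔ Fin.castSucc i ∈ B) :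
    NBC c'' B' := by
  intro S hS i1 hi1 hminS hsub
  obtain ⟨μ, hμ, hμrel⟩ := circuit_rel hS
  -- build a dependence relation for the original rows
  have hμrel' : ∑ i, μ i • zpoly c (Fin.castSucc i)
      = (∑ i, μ i * lam (Fin.castSucc i)) • zpoly c (Fin.last m) := by
    have h1 : ∑ i, μ i • (zpoly c (Fin.castSucc i)
        - lam (Fin.castSucc i) • zpoly c (Fin.last m)) = 0 := by
      rw [← hμrel]
      exact Finset.sum_congr rfl (fun i _ => by rw [hwz i])
    have h2 : ∑ i, μ i • (zpoly c (Fin.castSucc i)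
        - lam (Fin.castSucc i) • zpoly c (Fin.last m))
        = ∑ i, μ i • zpoly c (Fin.castSucc i)
          - (∑ i, μ i * lam (Fin.castSucc i)) • zpoly c (Fin.last m) := by
      rw [Finset.sum_smul]
      rw [← Finset.sum_sub_distrib]
      apply Finset.sum_congr rfl
      intro i _
      rw [smul_sub, smul_smul]
    rw [h2] at h1
    linear_combination (norm := module) h1
  set t : F := -∑ i, μ i * lam (Fin.castSucc i) with ht
  set a : Fin (m+1) → F := Fin.snoc (fun i => μ i) t with hasnoc
  have haT : ∀ x, a x ≠ 0 → x ∈ insert (Fin.last m) (S.image Fin.castSucc) := by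
    intro x hx
    induction x using Fin.lastCases with
    | last => exact Finset.mem_insert_self _ _
    | cast i =>
      apply Finset.mem_insert_of_mem
      apply Finset.mem_image_of_mem
      apply (hμ i).mp
      rw [hasnoc, Fin.snoc_castSucc] at hx
      exact hx
  have hdep : Dep c (insert (Fin.last m) (S.image Fin.castSucc)) := by
    refine ⟨a, haT, ?_, ?_⟩
    · obtain ⟨i, hi⟩ := circuit_nonempty hS
      intro h0
      have : a (Fin.castSucc i) = μ i := by rw [hasnoc, Fin.snoc_castSucc]
      rw [h0] at this
      exact ((hμ i).mpr hi) (by simpa using this.symm)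
    · rw [Fin.sum_univ_castSucc]
      have h3 : ∀ i : Fin m, a (Fin.castSucc i) = μ i :=
        fun i => by rw [hasnoc, Fin.snoc_castSucc]
      have h4 : a (Fin.last m) = t := by rw [hasnoc, Fin.snoc_last]
      rw [Finset.sum_congr rfl (fun i _ => by rw [h3 i]), h4, hμrel', ht, neg_smul,
        add_neg_cancel]
  obtain ⟨Ci, hCiT, hCi⟩ := dep_exists_circuit _ hdep
  have hCne : Ci.Nonempty := circuit_nonempty hCi
  set i0 := Ci.min' hCne with hi0
  refine hB Ci hCi i0 (Ci.min'_mem hCne) (fun j hj => Ci.min'_le j hj) ?_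
  -- show Ci \ {i0} ⊆ B
  intro x hx
  obtain ⟨hxC, hxne⟩ := Finset.mem_sdiff.mp hx
  have hxne' : x ≠ i0 := by simpa using hxne
  rcases Finset.mem_insert.mp (hCiT hxC) with h | h
  · subst h; exact hL
  · obtain ⟨i, hiS, rfl⟩ := Finset.mem_image.mp h
    by_cases hii1 : i = i1
    · subst hii1
      -- then castSucc i is the minimum of Ci, contradiction
      exfalso
      apply hxne'
      have hle : ∀ y ∈ Ci, Fin.castSucc i ≤ y := by
        intro y hy
        rcases Finset.mem_insert.mp (hCiT hy) with h' | h'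
        · subst h'; exact (Fin.castSucc_lt_last i).le
        · obtain ⟨i', hi'S, rfl⟩ := Finset.mem_image.mp h'
          exact Fin.castSucc_le_castSucc_iff.mpr (hminS i' hi'S)
      exact le_antisymm (hle i0 (Ci.min'_mem hCne)) (Ci.min'_le _ hxC)
    · exact (hB' i).mp (hsub (Finset.mem_sdiff.mpr ⟨hiS, by simpa using hii1⟩))
      
/-- NBC transport under deletion of the last element -/
lemma NBC_delete {c : Fin (m+1) → Fin n → F}
    {B : Finset (Fin (m+1))} (hB : NBC c B)
    {B' : Finset (Fin m)} (hB' : ∀ i, i ∈ B' ↔ Fin.castSucc i ∈ B) :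
    NBC (fun i => c (Fin.castSucc i)) B' := by
  intro S hS i1 hi1 hminS hsub
  obtain ⟨μ, hμ, hμrel⟩ := circuit_rel hS
  set a : Fin (m+1) → F := Fin.snoc (fun i => μ i) 0 with hasnoc
  have h3 : ∀ i : Fin m, a (Fin.castSucc i) = μ i :=
    fun i => by rw [hasnoc, Fin.snoc_castSucc]
  have hdep : Dep c (S.image Fin.castSucc) := by
    refine ⟨a, ?_, ?_, ?_⟩
    · intro x hx
      induction x using Fin.lastCases with
      | last => rw [hasnoc, Fin.snoc_last] at hx; exact absurd rfl hx
      | cast i =>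
        rw [h3 i] at hx
        exact Finset.mem_image_of_mem _ ((hμ i).mp hx)
    · obtain ⟨i, hi⟩ := circuit_nonempty hS
      intro h0
      have : a (Fin.castSucc i) = μ i := h3 i
      rw [h0] at this
      exact ((hμ i).mpr hi) (by simpa using this.symm)
    · rw [Fin.sum_univ_castSucc]
      rw [Finset.sum_congr rfl (fun i _ => by rw [h3 i]), hasnoc, Fin.snoc_last, zero_smul,
        add_zero]
      exact hμrel
  obtain ⟨Ci, hCiT, hCi⟩ := dep_exists_circuit _ hdep
  have hCne : Ci.Nonempty := circuit_nonempty hCi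
  set i0 := Ci.min' hCne with hi0
  refine hB Ci hCi i0 (Ci.min'_mem hCne) (fun j hj => Ci.min'_le j hj) ?_
  intro x hx
  obtain ⟨hxC, hxne⟩ := Finset.mem_sdiff.mp hx
  have hxne' : x ≠ i0 := by simpa using hxne
  obtain ⟨i, hiS, rfl⟩ := Finset.mem_image.mp (hCiT hxC)
  by_cases hii1 : i = i1
  · subst hii1
    exfalso
    apply hxne'
    have hle : ∀ y ∈ Ci, Fin.castSucc i ≤ y := by
      intro y hy
      obtain ⟨i', hi'S, rfl⟩ := Finset.mem_image.mp (hCiT hy)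
      exact Fin.castSucc_le_castSucc_iff.mpr (hminS i' hi'S)
    exact le_antisymm (hle i0 (Ci.min'_mem hCne)) (Ci.min'_le _ hxC)
  · exact (hB' i).mp (hsub (Finset.mem_sdiff.mpr ⟨hiS, by simpa using hii1⟩))

end OT6
namespace OT7
open OT OT5 OT6 MvPolynomial
variable {F : Type} [Field F] {n : ℕ}

theorem indep : ∀ (m : ℕ) (c : Fin m → Fin n → F), (∀ i, c i ≠ 0) → ∀ (N : ℕ)
    (s : Finset (Fin m → ℕ)) (γ : (Fin m → ℕ) → F),
    (∀ β ∈ s, γ β ≠ 0) →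
    (∀ β ∈ s, ∀ i, β i ≤ N) →
    (∀ β ∈ s, NBC c (fsupp β)) →
    (∑ β ∈ s, γ β • ∏ i, zpoly c i ^ (N - β i)) = 0 →
    s = ∅ := by
  intro m
  induction m with
  | zero =>
    intro c hc N s γ hnz hb hnbc heq
    by_contra hs
    obtain ⟨β, hβ⟩ := Finset.nonempty_iff_ne_empty.mpr hs
    have hs1 : s = {β} := by
      apply Finset.Subset.antisymm
      · exact fun β' _ => Finset.mem_singleton.mpr (funext fun i => i.elim0)
      · exact Finset.singleton_subset_iff.mpr hβ
    rw [hs1, Finset.sum_singleton] at heq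
    have h1 : γ β • (1 : MvPolynomial (Fin n) F) = 0 := by
      simpa using heq
    rcases smul_eq_zero.mp h1 with h | h
    · exact hnz β hβ h
    · exact one_ne_zero h
  | succ m ih =>
    intro c hc N s γ hnz hb hnbc heq
    by_contra hs
    have hsne : s.Nonempty := Finset.nonempty_iff_ne_empty.mpr hs
    obtain ⟨βs, hβs, hβsk⟩ := Finset.exists_mem_eq_sup s hsne (fun β => β (Fin.last m))
    set k := s.sup (fun β => β (Fin.last m)) with hk
    have hβle : ∀ β ∈ s, β (Fin.last m) ≤ k := by
      intro β hβ
      exact Finset.le_sup (f := fun β => β (Fin.last m)) hβ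
    clear_value k
    clear hk
    rcases Nat.eq_zero_or_pos k with hk0 | hkpos
    · -- deletion case : no β involves the last variable
      have hβ0 : ∀ β ∈ s, β (Fin.last m) = 0 := by
        intro β hβ; have := hβle β hβ; omega
      have hsplit : ∀ β ∈ s, (∏ i, zpoly c i ^ (N - β i))
          = (∏ i : Fin m, zpoly c (Fin.castSucc i) ^ (N - β (Fin.castSucc i)))
            * zpoly c (Fin.last m) ^ N := by
        intro β hβ
        rw [Fin.prod_univ_castSucc, hβ0 β hβ, Nat.sub_zero]
      have heq2 : (∑ β ∈ s, γ β • ∏ i : Fin m,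
          zpoly c (Fin.castSucc i) ^ (N - β (Fin.castSucc i)))
          * zpoly c (Fin.last m) ^ N = 0 := by
        rw [Finset.sum_mul, ← heq]
        apply Finset.sum_congr rfl
        intro β hβ
        rw [hsplit β hβ, smul_mul_assoc]
      have heq3 : (∑ β ∈ s, γ β • ∏ i : Fin m,
          zpoly c (Fin.castSucc i) ^ (N - β (Fin.castSucc i))) = 0 := by
        rcases mul_eq_zero.mp heq2 with h | h
        · exact h
        · exact absurd h (pow_ne_zero _ (zpoly_ne_zero c _ (hc _)))
      set res : (Fin (m+1) → ℕ) → (Fin m → ℕ) := fun β => β ∘ Fin.castSucc with hres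
      have hinj : Set.InjOn res s := by
        intro β1 h1 β2 h2 h12
        funext x
        induction x using Fin.lastCases with
        | last => rw [hβ0 β1 h1, hβ0 β2 h2]
        | cast i => exact congrFun h12 i
      have hsnoc : ∀ β ∈ s, Fin.snoc (res β) 0 = β := by
        intro β hβ
        funext x
        induction x using Fin.lastCases with
        | last => rw [Fin.snoc_last, hβ0 β hβ]
        | cast i => rw [Fin.snoc_castSucc]; rfl
      have himg : (s.image res) = ∅ := by
        refine ih (fun i => c (Fin.castSucc i)) (fun i => hc (Fin.castSucc i)) N
          (s.image res) (fun b => γ (Fin.snoc b 0)) ?_ ?_ ?_ ?_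
        · intro b hb'
          obtain ⟨β, hβ, rfl⟩ := Finset.mem_image.mp hb'
          simp only [hsnoc β hβ]
          exact hnz β hβ
        · intro b hb'
          obtain ⟨β, hβ, rfl⟩ := Finset.mem_image.mp hb'
          exact fun i => hb β hβ _
        · intro b hb'
          obtain ⟨β, hβ, rfl⟩ := Finset.mem_image.mp hb'
          exact NBC_delete (hnbc β hβ) (fun i => by rw [mem_fsupp, mem_fsupp]; rfl)
        · rw [Finset.sum_image hinj, ← heq3]
          apply Finset.sum_congr rfl
          intro β hβ
          simp only [hsnoc β hβ]
          rfl
      rw [Finset.image_eq_empty] at himg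
      exact hs himg
    · -- restriction case
      have hkN : k ≤ N := by
        rw [hβsk]
        exact hb βs hβs (Fin.last m)
      -- choose the vector v with ⟨c L, v⟩ = 1
      obtain ⟨j0, hj0⟩ := Function.ne_iff.mp (hc (Fin.last m))
      set v : Fin n → F := Pi.single j0 (c (Fin.last m) j0)⁻¹ with hv
      set lam : Fin (m+1) → F := fun i => ∑ j, c i j * v j with hlam
      have hlamL : lam (Fin.last m) = 1 := by
        rw [hlam]
        simp only [hv]
        rw [Finset.sum_eq_single j0]
        · rw [Pi.single_eq_same, mul_inv_cancel₀ (by simpa using hj0)]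
        · intro j _ hjj; rw [Pi.single_eq_of_ne hjj, mul_zero]
        · intro h; exact absurd (Finset.mem_univ j0) h
      set c'' : Fin m → Fin n → F :=
        fun i j => c (Fin.castSucc i) j - lam (Fin.castSucc i) * c (Fin.last m) j with hc''def
      have hwz : ∀ i : Fin m, zpoly c'' i
          = zpoly c (Fin.castSucc i) - lam (Fin.castSucc i) • zpoly c (Fin.last m) := by
        intro i
        rw [zpoly, zpoly, zpoly, Finset.smul_sum, ← Finset.sum_sub_distrib]
        apply Finset.sum_congr rfl
        intro j _
        rw [hc''def]
        rw [map_sub, map_mul, sub_mul, smul_eq_C_mul, ← mul_assoc]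
      have hβsL : βs (Fin.last m) = k := hβsk.symm
      -- no earlier row is parallel to the last one
      have hc'' : ∀ i, c'' i ≠ 0 := by
        intro i h0
        have hz0 : zpoly c'' i = 0 := by
          rw [zpoly]
          apply Finset.sum_eq_zero
          intro j _
          have hj : c'' i j = 0 := by rw [congrFun h0 j]; rfl
          rw [hj, map_zero, zero_mul]
        have hzz : zpoly c (Fin.castSucc i)
            - lam (Fin.castSucc i) • zpoly c (Fin.last m) = 0 := by
          rw [← hwz i, hz0]
        -- the pair {castSucc i, last} is dependent
        set a : Fin (m+1) → F := Fin.snoc (Pi.single i (1:F) : Fin m → F) (-(lam (Fin.castSucc i))) with ha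
        have h1 : ∀ x : Fin m, a (Fin.castSucc x) = (Pi.single i (1:F) : Fin m → F) x :=
          fun x => by rw [ha, Fin.snoc_castSucc]
        have haC : ∀ x, a x ≠ 0 → x ∈ ({Fin.castSucc i, Fin.last m} : Finset (Fin (m+1))) := by
          intro x hx
          induction x using Fin.lastCases with
          | last => simp
          | cast i' =>
            rw [h1 i'] at hx
            have : i' = i := by
              by_contra hne
              exact hx (Pi.single_eq_of_ne hne 1)
            subst this
            simp
        have hdep : Dep c ({Fin.castSucc i, Fin.last m} : Finset (Fin (m+1))) := by
          refine ⟨a, haC, ?_, ?_⟩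
          · intro h0'
            have h2 : a (Fin.castSucc i) = 0 := by rw [h0']; rfl
            rw [h1 i, Pi.single_eq_same] at h2
            exact one_ne_zero h2
          · rw [Fin.sum_univ_castSucc]
            rw [Finset.sum_congr rfl (fun x _ => by rw [h1 x]), ha, Fin.snoc_last]
            rw [Finset.sum_eq_single i]
            · rw [Pi.single_eq_same, one_smul, neg_smul, ← sub_eq_add_neg, hzz]
            · intro x _ hxi; rw [Pi.single_eq_of_ne hxi, zero_smul]
            · intro h; exact absurd (Finset.mem_univ i) h
        obtain ⟨Ci, hCiT, hCi⟩ := dep_exists_circuit _ hdep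
        have hCieq : Ci = ({Fin.castSucc i, Fin.last m} : Finset (Fin (m+1))) := by
          apply Finset.eq_of_subset_of_card_le hCiT
          have hcard : ({Fin.castSucc i, Fin.last m} : Finset (Fin (m+1))).card = 2 := by
            rw [Finset.card_insert_of_notMem (by
              simp only [Finset.mem_singleton]
              exact (Fin.castSucc_lt_last i).ne), Finset.card_singleton]
          rw [hcard]
          exact circuit_card hc hCi
        subst hCieq
        -- broken circuit {last} contained in the support of βs : contradiction
        refine hnbc βs hβs _ hCi (Fin.castSucc i) (by simp) ?_ ?_
        · intro j hj
          rcases Finset.mem_insert.mp hj with h | h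
          · subst h; exact le_refl _
          · rw [Finset.mem_singleton.mp h]
            exact (Fin.castSucc_lt_last i).le
        · intro x hx
          obtain ⟨hx1, hx2⟩ := Finset.mem_sdiff.mp hx
          have hxL : x = Fin.last m := by
            rcases Finset.mem_insert.mp hx1 with h | h
            · exact absurd h (by simpa using hx2)
            · exact Finset.mem_singleton.mp h
          subst hxL
          rw [mem_fsupp, hβsL]
          omega
      -- now apply the substitution homomorphism σ and take the coefficient of X^(N-k)
      have hσz : ∀ i : Fin (m+1),
          (MvPolynomial.aeval (fun j => Polynomial.C (X j - v j • zpoly c (Fin.last m))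
            + Polynomial.C (C (v j)) * Polynomial.X)) (zpoly c i)
          = Polynomial.C (zpoly c i - lam i • zpoly c (Fin.last m))
            + Polynomial.C (C (lam i)) * Polynomial.X := by
        intro i
        have h := sigma_z c v (zpoly c (Fin.last m)) i
        rw [hlam]
        exact h
      have hσzL : (MvPolynomial.aeval (fun j => Polynomial.C (X j - v j • zpoly c (Fin.last m))
            + Polynomial.C (C (v j)) * Polynomial.X)) (zpoly c (Fin.last m))
          = Polynomial.X := by
        rw [hσz (Fin.last m), hlamL, one_smul, sub_self, map_zero, map_one, map_one,
          one_mul, zero_add]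
      have hσeq : ∑ β ∈ s, γ β •
          ((∏ i : Fin m, (Polynomial.C (zpoly c'' i)
              + Polynomial.C (C (lam (Fin.castSucc i))) * Polynomial.X)
                ^ (N - β (Fin.castSucc i)))
            * Polynomial.X ^ (N - β (Fin.last m))) = 0 := by
        have h1 : (MvPolynomial.aeval (fun j => Polynomial.C (X j - v j • zpoly c (Fin.last m))
            + Polynomial.C (C (v j)) * Polynomial.X))
            (∑ β ∈ s, γ β • ∏ i, zpoly c i ^ (N - β i)) = 0 := by
          rw [heq, map_zero]
        rw [map_sum] at h1
        rw [← h1]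
        apply Finset.sum_congr rfl
        intro β hβ
        rw [map_smul]
        congr 1
        rw [map_prod, Fin.prod_univ_castSucc, map_pow, hσzL]
        congr 1
        apply Finset.prod_congr rfl
        intro i _
        rw [map_pow, hσz (Fin.castSucc i), ← hwz i]
      have hcoeff : ∑ β ∈ s, γ β •
          (if β (Fin.last m) = k
            then ∏ i : Fin m, (zpoly c'' i) ^ (N - β (Fin.castSucc i))
            else 0) = 0 := by
        have h2 := congrArg (fun p : Polynomial (MvPolynomial (Fin n) F) =>
          p.coeff (N - k)) hσeq
        simp only [Polynomial.coeff_zero] at h2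
        rw [Polynomial.finset_sum_coeff] at h2
        have h3 : ∀ b ∈ s, (γ b •
            ((∏ i : Fin m, (Polynomial.C (zpoly c'' i)
              + Polynomial.C (C (lam (Fin.castSucc i))) * Polynomial.X)
                ^ (N - b (Fin.castSucc i)))
              * Polynomial.X ^ (N - b (Fin.last m)))).coeff (N - k)
            = γ b • (if b (Fin.last m) = k
              then ∏ i : Fin m, (zpoly c'' i) ^ (N - b (Fin.castSucc i))
              else 0) := by
          intro b hb'
          rw [Polynomial.coeff_smul]
          congr 1
          rw [Polynomial.coeff_mul_X_pow']
          by_cases hβk : b (Fin.last m) = k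
          · rw [hβk, if_pos (le_refl (N - k)), Nat.sub_self, if_pos rfl]
            rw [← Polynomial.constantCoeff_apply, map_prod]
            apply Finset.prod_congr rfl
            intro i _
            rw [map_pow]
            congr 1
            simp [Polynomial.constantCoeff_apply, Polynomial.coeff_mul_X_zero]
          · have hlt : b (Fin.last m) < k := lt_of_le_of_ne (hβle b hb') hβk
            rw [if_neg (by omega : ¬ (N - b (Fin.last m) ≤ N - k)), if_neg hβk]
        rw [Finset.sum_congr rfl h3] at h2
        exact h2
      have hfil : ∑ β ∈ s.filter (fun β => β (Fin.last m) = k),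
          γ β • ∏ i : Fin m, (zpoly c'' i) ^ (N - β (Fin.castSucc i)) = 0 := by
        rw [Finset.sum_filter]
        have hsw : ∑ β ∈ s, (if β (Fin.last m) = k
              then γ β • ∏ i : Fin m, (zpoly c'' i) ^ (N - β (Fin.castSucc i)) else 0)
            = ∑ β ∈ s, γ β • (if β (Fin.last m) = k
              then ∏ i : Fin m, (zpoly c'' i) ^ (N - β (Fin.castSucc i)) else 0) := by
          apply Finset.sum_congr rfl
          intro β _
          by_cases h : β (Fin.last m) = k <;> simp [h]
        rw [hsw]
        exact hcoeff
      set sf := s.filter (fun β => β (Fin.last m) = k) with hsf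
      have hmemf : ∀ β ∈ sf, β ∈ s ∧ β (Fin.last m) = k := by
        intro β hβ
        exact Finset.mem_filter.mp hβ
      set res : (Fin (m+1) → ℕ) → (Fin m → ℕ) := fun β => β ∘ Fin.castSucc with hres
      have hsnoc : ∀ β ∈ sf, Fin.snoc (res β) k = β := by
        intro β hβ
        funext x
        induction x using Fin.lastCases with
        | last => rw [Fin.snoc_last, (hmemf β hβ).2]
        | cast i => rw [Fin.snoc_castSucc]; rfl
      have hinj : Set.InjOn res sf := by
        intro β1 h1 β2 h2 h12
        have := congrArg (fun b => Fin.snoc b k : (Fin m → ℕ) → (Fin (m+1) → ℕ)) h12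
        rw [hsnoc β1 h1, hsnoc β2 h2] at this
        exact this
      have himg : (sf.image res) = ∅ := by
        refine ih c'' hc'' N (sf.image res) (fun b => γ (Fin.snoc b k)) ?_ ?_ ?_ ?_
        · intro b hb'
          obtain ⟨β, hβ, rfl⟩ := Finset.mem_image.mp hb'
          simp only [hsnoc β hβ]
          exact hnz β (hmemf β hβ).1
        · intro b hb'
          obtain ⟨β, hβ, rfl⟩ := Finset.mem_image.mp hb'
          exact fun i => hb β (hmemf β hβ).1 _
        · intro b hb'
          obtain ⟨β, hβ, rfl⟩ := Finset.mem_image.mp hb'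
          apply NBC_restrict hwz (hnbc β (hmemf β hβ).1)
          · rw [mem_fsupp, (hmemf β hβ).2]
            omega
          · intro i
            rw [mem_fsupp, mem_fsupp]
            rfl
        · rw [Finset.sum_image hinj, ← hfil]
          apply Finset.sum_congr rfl
          intro β hβ
          simp only [hsnoc β hβ]
          rfl
      rw [Finset.image_eq_empty] at himg
      have : βs ∈ sf := Finset.mem_filter.mpr ⟨hβs, hβsL⟩
      rw [himg] at this
      exact absurd this (Finset.notMem_empty βs)

end OT7

open OT OT3 OT4 OT5 OT7 in
/-- The kernel `I` of `h` equals the ideal of `F[t₁,…,t_m]` generated by the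
polynomials `P_L`, for `L` a *minimal* linear relation. -/
theorem statement2
    (F : Type) [Field F] (n m : ℕ) (hn : 0 < n) (hm : 0 < m)
    (c : Fin m → Fin n → F) (hc : ∀ i, c i ≠ 0)
    (R : Type) [CommRing R] [Algebra F R] [Algebra (MvPolynomial (Fin n) F) R]
    [IsScalarTower F (MvPolynomial (Fin n) F) R]
    [IsLocalization.Away (∏ i, zpoly c i) R]
    (zinv : Fin m → R)
    (hzinv : ∀ i, algebraMap (MvPolynomial (Fin n) F) R (zpoly c i) * zinv i = 1) :
    RingHom.ker (MvPolynomial.aeval zinv : MvPolynomial (Fin m) F →ₐ[F] R).toRingHom =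
      Ideal.span {p : MvPolynomial (Fin m) F | ∃ a : Fin m → F, IsMinRel c a ∧ p = PL a} := by
  have hspan : Ideal.span {p : MvPolynomial (Fin m) F | ∃ a : Fin m → F, IsMinRel c a ∧ p = PL a}
      ≤ RingHom.ker (MvPolynomial.aeval zinv : MvPolynomial (Fin m) F →ₐ[F] R).toRingHom := by
    rw [Ideal.span_le]
    rintro p ⟨a, ha, rfl⟩
    rw [SetLike.mem_coe, RingHom.mem_ker]
    exact aeval_PL_eq_zero c zinv hzinv ha.1
  apply le_antisymm _ hspan
  intro f hf
  have hf0 : MvPolynomial.aeval zinv f = 0 := RingHom.mem_ker.mp hf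
  obtain ⟨q, hqJ, hqr⟩ := poly_reduce c hc f
  have hq0 : MvPolynomial.aeval zinv q = 0 := RingHom.mem_ker.mp (hspan hqJ)
  set r := f - q with hr
  have hr0 : MvPolynomial.aeval zinv r = 0 := by
    rw [hr, map_sub, hf0, hq0, sub_zero]
  -- bound on exponents
  set N : ℕ := r.support.sup (fun d => ∑ i, d i) with hN
  have hbound : ∀ d ∈ r.support, ∀ i, d i ≤ N := by
    intro d hd i
    calc d i ≤ ∑ j, d j :=
          Finset.single_le_sum (fun j _ => Nat.zero_le (d j)) (Finset.mem_univ i)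
      _ ≤ N := Finset.le_sup (f := fun d : Fin m →₀ ℕ => ∑ i, d i) hd
  have hbridge := bridge c zinv hzinv hc r hr0 N hbound
  -- apply independence
  have himg : (r.support.image (fun d : Fin m →₀ ℕ => (d : Fin m → ℕ))) = ∅ := by
    apply indep m c hc N _ (fun b => r.coeff (Finsupp.equivFunOnFinite.symm b))
    · intro b hb
      obtain ⟨d, hd, rfl⟩ := Finset.mem_image.mp hb
      rw [Finsupp.equivFunOnFinite_symm_coe]
      exact MvPolynomial.mem_support_iff.mp hd
    · intro b hb
      obtain ⟨d, hd, rfl⟩ := Finset.mem_image.mp hb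
      exact fun i => hbound d hd i
    · intro b hb
      obtain ⟨d, hd, rfl⟩ := Finset.mem_image.mp hb
      have hsupp : fsupp (d : Fin m → ℕ) = d.support := by
        ext i
        rw [mem_fsupp, Finsupp.mem_support_iff]
      rw [hsupp]
      exact nbcspan_support hqr d hd
    · rw [Finset.sum_image (fun d1 _ d2 _ h => DFunLike.coe_injective h)]
      rw [← hbridge]
      apply Finset.sum_congr rfl
      intro d _
      rw [Finsupp.equivFunOnFinite_symm_coe]
  rw [Finset.image_eq_empty] at himg
  have hrz : r = 0 := by
    rwa [← MvPolynomial.support_eq_empty]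
  have hfq : f = q := by
    have := sub_eq_zero.mp (hr ▸ hrz)
    exact this
  rw [hfq]
  exact hqJ
end
end

section
/- The kernel I of h equals the ideal of F[t_1, …, t_m] generated by the polynomials P_L, where L ranges over all linear relations; in other words, the subring of R generated by z_1^{-1}, …, z_m^{-1} is isomorphic to F[t_1, …, t_m]/(P_L : L a linear relation). -/
open scoped TensorProduct
open MvPolynomial

set_option maxHeartbeats 1000000

noncomputable section

section OT
variable {F : Type} [Field F] {n m : ℕ}
open Finset

def lin (v : Fin n → F) : MvPolynomial (Fin n) F := ∑ j, C (v j) * X j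

lemma zpoly_eq_lin (c : Fin m → Fin n → F) (i : Fin m) : zpoly c i = lin (c i) := rfl

lemma lin_coeff (v : Fin n → F) (j : Fin n) : coeff (Finsupp.single j 1) (lin v) = v j := by
  classical
  simp [lin, coeff_sum, coeff_C_mul, coeff_X', Finsupp.single_left_inj (one_ne_zero)]

lemma lin_ne_zero {v : Fin n → F} (hv : v ≠ 0) : lin v ≠ 0 := by
  intro h
  apply hv
  funext j
  have := lin_coeff v j
  rw [h] at this
  simpa using this.symm

lemma lin_smul (l : F) (v : Fin n → F) : lin (l • v) = C l * lin v := by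
  simp [lin, Finset.mul_sum, mul_assoc, map_mul]

lemma lin_sub (v w : Fin n → F) : lin (v - w) = lin v - lin w := by
  simp [lin, sub_mul, Finset.sum_sub_distrib, map_sub]

lemma mem_lsupp {a : Fin m → F} {i : Fin m} : i ∈ lsupp a ↔ a i ≠ 0 := by
  simp [lsupp]

/-- evaluation of tMon -/
lemma aeval_tMon {A : Type} [CommRing A] [Algebra F A] (v : Fin m → A) (M : Finset (Fin m)) :
    aeval v (tMon (F := F) M) = ∏ i ∈ M, v i := by
  simp [tMon]

/-- L3: PL maps to zero under any evaluation where v i inverts z i. -/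
lemma aeval_PL_eq_zero {A : Type} [CommRing A] [Algebra F A]
    (φ : MvPolynomial (Fin n) F →ₐ[F] A) (c : Fin m → Fin n → F) {a : Fin m → F}
    (ha : IsLinRel c a) (v : Fin m → A)
    (hv : ∀ i ∈ lsupp a, φ (zpoly c i) * v i = 1) :
    aeval v (PL a) = 0 := by
  have key : ∀ i ∈ lsupp a, ∏ j ∈ lsupp a \ {i}, v j = φ (zpoly c i) * ∏ j ∈ lsupp a, v j := by
    intro i hi
    rw [← Finset.erase_eq, ← Finset.mul_prod_erase _ _ hi, ← mul_assoc, hv i hi, one_mul]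
  have : aeval v (PL a) = ∑ i ∈ lsupp a, algebraMap F A (a i) * ∏ j ∈ lsupp a \ {i}, v j := by
    simp [PL, aeval_tMon]
  rw [this, Finset.sum_congr rfl (fun i hi => by rw [key i hi])]
  have : ∑ i ∈ lsupp a, algebraMap F A (a i) * (φ (zpoly c i) * ∏ j ∈ lsupp a, v j)
      = φ (∑ i ∈ lsupp a, C (a i) * zpoly c i) * ∏ j ∈ lsupp a, v j := by
    rw [map_sum, Finset.sum_mul]
    refine Finset.sum_congr rfl fun i hi => ?_
    rw [map_mul, ← mul_assoc]
    congr 1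
    congr 1
    exact (AlgHom.commutes φ (a i)).trans rfl |>.symm ▸ rfl
  rw [this, ha.2, map_zero, zero_mul]


/-- clearing denominators -/
lemma clear_denoms {A : Type} [Field A] [Algebra F A]
    (φ : MvPolynomial (Fin n) F →ₐ[F] A) (c : Fin m → Fin n → F)
    (B : Finset (Fin m)) (hB : ∀ i ∈ B, φ (zpoly c i) ≠ 0)
    (N : Fin m → ℕ) (p : MvPolynomial (Fin m) F)
    (hsupp : ∀ s ∈ p.support, (∀ i, s i ≠ 0 → i ∈ B) ∧ ∀ i ∈ B, s i ≤ N i) :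
    aeval (fun i => (φ (zpoly c i))⁻¹) p * ∏ i ∈ B, φ (zpoly c i) ^ N i
      = φ (∑ s ∈ p.support, C (coeff s p) * ∏ i ∈ B, zpoly c i ^ (N i - s i)) := by
  classical
  conv_lhs => rw [p.as_sum]
  rw [map_sum, map_sum, Finset.sum_mul]
  refine Finset.sum_congr rfl fun s hs => ?_
  rw [aeval_monomial, map_mul, map_prod]
  have h1 : (s.prod fun i e => ((φ (zpoly c i))⁻¹) ^ e)
      = ∏ i ∈ B, ((φ (zpoly c i))⁻¹) ^ s i := by
    rw [Finsupp.prod]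
    apply Finset.prod_subset
    · intro i hi
      exact (hsupp s hs).1 i (Finsupp.mem_support_iff.mp hi)
    · intro i _ hi
      rw [Finsupp.notMem_support_iff.mp hi, pow_zero]
  rw [h1, mul_assoc, ← Finset.prod_mul_distrib]
  congr 1
  · simp [algebraMap_eq]
  · refine Finset.prod_congr rfl fun i hi => ?_
    rw [map_pow]
    have hz := hB i hi
    have hle := (hsupp s hs).2 i hi
    rw [pow_sub₀ _ hz hle, inv_pow]
    ring

/-- substitution modulo an ideal -/
lemma sub_mem_ideal (I : Ideal (MvPolynomial (Fin m) F)) (g : Fin m → MvPolynomial (Fin m) F)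
    (hg : ∀ i, g i - X i ∈ I) (f : MvPolynomial (Fin m) F) : f - bind₁ g f ∈ I := by
  have h : (Ideal.Quotient.mkₐ F I).comp (bind₁ g) = Ideal.Quotient.mkₐ F I := by
    apply MvPolynomial.algHom_ext
    intro i
    simp only [AlgHom.comp_apply, bind₁_X_right, Ideal.Quotient.mkₐ_eq_mk]
    exact Ideal.Quotient.eq.mpr (hg i)
  have := congrArg (fun ψ => ψ f) h
  simp only [AlgHom.comp_apply, Ideal.Quotient.mkₐ_eq_mk] at this
  exact Ideal.Quotient.eq.mp this.symm

lemma aeval_congr_vars {A : Type} [CommRing A] [Algebra F A] (v w : Fin m → A)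
    (f : MvPolynomial (Fin m) F) (h : ∀ i ∈ f.vars, v i = w i) : aeval v f = aeval w f := by
  rw [aeval_def, aeval_def]
  apply eval₂_congr
  intro i s his hc
  exact h i ((mem_vars i).mpr ⟨s, mem_support_iff.mpr hc, his⟩)

/-- substitution lemma for linear polys -/
lemma bind₁_lin (k : Fin n) (w : Fin n → F) (v : Fin n → F) :
    bind₁ (fun j => X j - if j = k then C ((w k)⁻¹) * lin w else 0) (lin v)
      = lin (v - (v k * (w k)⁻¹) • w) := by
  classical
  rw [lin_sub, lin_smul]
  simp only [lin, map_sum, map_mul, bind₁_C_right, bind₁_X_right]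
  rw [Finset.sum_congr rfl (fun j _ => mul_sub (C (v j)) (X j) _)]
  rw [Finset.sum_sub_distrib]
  congr 1
  simp only [mul_ite, mul_zero]
  rw [Finset.sum_ite_eq' Finset.univ k]
  simp [map_mul, mul_assoc, mul_left_comm]

section Slice
variable {F : Type} [Field F] {m : ℕ}

/-- the J-th otSlice in variable k -/
def otSlice (k : Fin m) (J : ℕ) (f : MvPolynomial (Fin m) F) : MvPolynomial (Fin m) F :=
  ∑ s ∈ f.support.filter (fun s => s k = J), monomial (Finsupp.erase k s) (coeff s f)

def otSliceRest (k : Fin m) (J : ℕ) (f : MvPolynomial (Fin m) F) : MvPolynomial (Fin m) F :=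
  ∑ s ∈ f.support.filter (fun s => s k ≠ J), monomial s (coeff s f)

lemma slice_decomp (k : Fin m) (J : ℕ) (f : MvPolynomial (Fin m) F) :
    f = otSlice k J f * X k ^ J + otSliceRest k J f := by
  classical
  have h1 : otSlice k J f * X k ^ J
      = ∑ s ∈ f.support.filter (fun s => s k = J), monomial s (coeff s f) := by
    rw [otSlice, Finset.sum_mul]
    refine Finset.sum_congr rfl fun s hs => ?_
    have hsk : s k = J := (Finset.mem_filter.mp hs).2
    rw [X_pow_eq_monomial, monomial_mul, mul_one]
    congr 1
    rw [← hsk, add_comm, Finsupp.single_add_erase]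
  rw [h1, otSliceRest, Finset.sum_filter_add_sum_filter_not]
  exact f.as_sum

lemma slice_support (k : Fin m) (J : ℕ) (f : MvPolynomial (Fin m) F) (s' : Fin m →₀ ℕ)
    (hs' : s' ∈ (otSlice k J f).support) :
    ∃ s ∈ f.support, s k = J ∧ s' = Finsupp.erase k s := by
  classical
  have h := MvPolynomial.support_sum hs'
  rw [Finset.mem_biUnion] at h
  obtain ⟨s, hs, hmem⟩ := h
  have := support_monomial_subset hmem
  rw [Finset.mem_singleton] at this
  exact ⟨s, (Finset.mem_filter.mp hs).1, (Finset.mem_filter.mp hs).2, this⟩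

lemma sliceRest_support (k : Fin m) (J : ℕ) (f : MvPolynomial (Fin m) F) (s : Fin m →₀ ℕ)
    (hs : s ∈ (otSliceRest k J f).support) : s ∈ f.support ∧ s k ≠ J := by
  classical
  have h := MvPolynomial.support_sum hs
  rw [Finset.mem_biUnion] at h
  obtain ⟨t, ht, hmem⟩ := h
  have := support_monomial_subset hmem
  rw [Finset.mem_singleton] at this
  subst this
  exact ⟨(Finset.mem_filter.mp ht).1, (Finset.mem_filter.mp ht).2⟩

end Slice

section Lift
variable {F : Type} [Field F] {n m : ℕ}
open Finset

lemma tMon_insert {k : Fin m} {M : Finset (Fin m)} (h : k ∉ M) :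
    tMon (F := F) (insert k M) = X k * tMon M := Finset.prod_insert h

lemma lsupp_subset_of_sum {a : Fin m → F} : (lsupp a : Finset (Fin m)) = lsupp a := rfl

/-- lifting a relation of the restricted arrangement -/
lemma lift_rel (c c' : Fin m → Fin n → F) (mstar : Fin m) (β : Fin m → F)
    (hcc : ∀ i, zpoly c' i = zpoly c i - C (β i) * zpoly c mstar)
    (S : Finset (Fin m)) (hmS : mstar ∈ S) (B : Finset (Fin m)) (hB : B ⊆ S.erase mstar)
    {a : Fin m → F} (ha : IsLinRel c' a) (hsupp : lsupp a ⊆ B) :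
    ∃ μ : F, X mstar * PL a - C μ * tMon (lsupp a) ∈
      Ideal.span {p : MvPolynomial (Fin m) F | ∃ b, IsLinRel c b ∧ lsupp b ⊆ S ∧ p = PL b} := by
  classical
  have hmB : mstar ∉ B := fun h => (Finset.mem_erase.mp (hB h)).1 rfl
  have hmL : mstar ∉ lsupp a := fun h => hmB (hsupp h)
  set μ : F := ∑ i ∈ lsupp a, a i * β i with hμdef
  have hsum : ∑ i ∈ lsupp a, C (a i) * zpoly c i = C μ * zpoly c mstar := by
    have h2 := ha.2
    rw [Finset.sum_congr rfl (fun i _ => by rw [hcc i])] at h2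
    rw [Finset.sum_congr rfl (fun i (_ : i ∈ lsupp a) =>
      mul_sub (C (a i)) (zpoly c i) (C (β i) * zpoly c mstar))] at h2
    rw [Finset.sum_sub_distrib, sub_eq_zero] at h2
    rw [h2, hμdef, map_sum, Finset.sum_mul]
    refine Finset.sum_congr rfl fun i _ => by rw [map_mul]; ring
  refine ⟨μ, ?_⟩
  by_cases hμ : μ = 0
  · have hrel : IsLinRel c a := ⟨ha.1, by rw [hsum, hμ, map_zero, zero_mul]⟩
    rw [hμ, map_zero, zero_mul, sub_zero]
    exact Ideal.mul_mem_left _ _ (Ideal.subset_span ⟨a, hrel, by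
      exact fun i hi => Finset.mem_erase.mp (hB (hsupp hi)) |>.2, rfl⟩)
  · set b : Fin m → F := Function.update a mstar (-μ) with hbdef
    have hbL : lsupp b = insert mstar (lsupp a) := by
      ext i
      rcases eq_or_ne i mstar with rfl | hne
      · simp [mem_lsupp, hbdef, Function.update_self, hμ]
      · simp [mem_lsupp, hbdef, Function.update_of_ne hne, hne]
    have hbv : ∀ i ∈ lsupp a, b i = a i := fun i hi =>
      Function.update_of_ne (by rintro rfl; exact hmL hi) _ _
    have hbm : b mstar = -μ := Function.update_self _ _ _
    have hrel : IsLinRel c b := by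
      constructor
      · rw [hbL]
        exact le_trans ha.1 (Finset.card_le_card (Finset.subset_insert _ _))
      · rw [hbL, Finset.sum_insert hmL]
        rw [Finset.sum_congr rfl (fun i hi => by rw [hbv i hi])]
        rw [hsum, hbm, map_neg]
        ring
    have hPL : PL b = X mstar * PL a - C μ * tMon (lsupp a) := by
      rw [PL, hbL, Finset.sum_insert hmL]
      have e1 : insert mstar (lsupp a) \ {mstar} = lsupp a := by
        rw [← Finset.erase_eq, Finset.erase_insert hmL]
      have e2 : ∀ i ∈ lsupp a, insert mstar (lsupp a) \ {i} = insert mstar (lsupp a \ {i}) := by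
        intro i hi
        ext j
        simp only [Finset.mem_sdiff, Finset.mem_insert, Finset.mem_singleton]
        constructor
        · rintro ⟨h1 | h1, h2⟩
          · exact Or.inl h1
          · exact Or.inr ⟨h1, h2⟩
        · rintro (rfl | ⟨h1, h2⟩)
          · exact ⟨Or.inl rfl, fun h => hmL (h ▸ hi)⟩
          · exact ⟨Or.inr h1, h2⟩
      rw [e1, hbm, map_neg]
      rw [Finset.sum_congr rfl (fun i hi => by
        rw [hbv i hi, e2 i hi, tMon_insert (fun h => hmL (Finset.mem_sdiff.mp h).1)])]
      rw [PL, Finset.mul_sum]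
      rw [Finset.sum_congr rfl (fun i _ => (by ring :
        C (a i) * (X mstar * tMon (lsupp a \ {i})) = X mstar * (C (a i) * tMon (lsupp a \ {i}))))]
      ring
    rw [← hPL]
    refine Ideal.subset_span ⟨b, hrel, ?_, rfl⟩
    rw [hbL]
    intro i hi
    rcases Finset.mem_insert.mp hi with rfl | h
    · exact hmS
    · exact Finset.mem_erase.mp (hB (hsupp h)) |>.2
end Lift

section Main
variable {F : Type} [Field F] {n m : ℕ}
open Finset

def OTphi (F : Type) [Field F] (n : ℕ) :
    MvPolynomial (Fin n) F →ₐ[F] FractionRing (MvPolynomial (Fin n) F) :=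
  IsScalarTower.toAlgHom F _ _

def OTu (c : Fin m → Fin n → F) : Fin m → FractionRing (MvPolynomial (Fin n) F) :=
  fun i => (OTphi F n (zpoly c i))⁻¹

def OTgens (c : Fin m → Fin n → F) (S : Finset (Fin m)) : Set (MvPolynomial (Fin m) F) :=
  {p | ∃ a, IsLinRel c a ∧ lsupp a ⊆ S ∧ p = PL a}

lemma OTphi_inj : Function.Injective (OTphi F n) :=
  IsFractionRing.injective _ _

lemma OTphi_ne_zero {p : MvPolynomial (Fin n) F} (hp : p ≠ 0) : OTphi F n p ≠ 0 := by
  intro h; exact hp (OTphi_inj (by rw [h, map_zero]))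

lemma lin_zero : lin (0 : Fin n → F) = 0 := by simp [lin]

lemma zpoly_ne_zero {c : Fin m → Fin n → F} {i : Fin m} (h : c i ≠ 0) : zpoly c i ≠ 0 :=
  lin_ne_zero h

lemma vars_tMon (M : Finset (Fin m)) : (tMon (F := F) M).vars ⊆ M := by
  classical
  refine Finset.Subset.trans (vars_prod _) ?_
  intro i hi
  rw [Finset.mem_biUnion] at hi
  obtain ⟨j, hj, hij⟩ := hi
  rw [vars_X, Finset.mem_singleton] at hij
  exact hij ▸ hj

lemma vars_PL (a : Fin m → F) : (PL a).vars ⊆ lsupp a := by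
  classical
  rw [PL]
  refine Finset.Subset.trans (vars_sum_subset _ _) ?_
  intro i hi
  rw [Finset.mem_biUnion] at hi
  obtain ⟨j, hj, hij⟩ := hi
  have := vars_mul (C (a j)) (tMon (lsupp a \ {j})) hij
  rw [Finset.mem_union] at this
  rcases this with h | h
  · rw [vars_C] at h; exact absurd h (Finset.notMem_empty i)
  · exact (Finset.mem_sdiff.mp (vars_tMon _ h)).1

lemma OTspan_ker {c : Fin m → Fin n → F} {S : Finset (Fin m)} (hc : ∀ i ∈ S, c i ≠ 0) :
    ∀ x ∈ Ideal.span (OTgens c S), aeval (OTu c) x = 0 := by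
  have hle : Ideal.span (OTgens c S)
      ≤ RingHom.ker (aeval (OTu c) : MvPolynomial (Fin m) F →ₐ[F]
          FractionRing (MvPolynomial (Fin n) F)).toRingHom := by
    rw [Ideal.span_le]
    rintro p ⟨a, ha, hs, rfl⟩
    have : aeval (OTu c) (PL a) = 0 := by
      refine aeval_PL_eq_zero (OTphi F n) c ha _ (fun i hi => ?_)
      exact mul_inv_cancel₀ (OTphi_ne_zero (zpoly_ne_zero (hc i (hs hi))))
    exact this
  intro x hx
  exact hle hx

lemma bind₁_eq_self {B : Finset (Fin m)} (g : Fin m → MvPolynomial (Fin m) F)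
    (hg : ∀ i ∈ B, g i = X i) {p : MvPolynomial (Fin m) F} (hp : p.vars ⊆ B) :
    bind₁ g p = p := by
  show aeval g p = p
  rw [aeval_congr_vars g X p (fun i hi => hg i (hp hi)), aeval_X_left_apply]

lemma exp_le_totalDegree {f : MvPolynomial (Fin m) F} {s : Fin m →₀ ℕ}
    (hs : s ∈ f.support) (i : Fin m) : s i ≤ f.totalDegree := by
  refine le_trans ?_ (le_totalDegree hs)
  by_cases h : s i = 0
  · omega
  · exact Finset.single_le_sum (f := fun j => s j) (fun _ _ => Nat.zero_le _)
      (Finsupp.mem_support_iff.mpr h)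

lemma degreeOf_eq_zero_of_vars {h : MvPolynomial (Fin m) F} {B : Finset (Fin m)}
    {k : Fin m} (hv : h.vars ⊆ B) (hk : k ∉ B) : degreeOf k h = 0 := by
  rw [← Nat.le_zero]
  rw [degreeOf_le_iff]
  intro s hs
  by_contra hc
  exact hk (hv ((mem_vars k).mpr ⟨s, hs, Finsupp.mem_support_iff.mpr (by omega)⟩))

lemma OT_main (NN : ℕ) : ∀ (S : Finset (Fin m)), S.card ≤ NN →
    ∀ (c : Fin m → Fin n → F), (∀ i ∈ S, c i ≠ 0) →
    ∀ f : MvPolynomial (Fin m) F, f.vars ⊆ S →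
    aeval (OTu c) f = 0 → f ∈ Ideal.span (OTgens c S) := by
  classical
  induction NN with
  | zero =>
    intro S hS c hc f hvars h0
    have hSempty : S = ∅ := Finset.card_eq_zero.mp (Nat.le_zero.mp hS)
    subst hSempty
    have hfC : f = C (coeff 0 f) := by
      ext s
      by_cases hs : s = 0
      · subst hs; simp
      · rw [coeff_C, if_neg (Ne.symm hs)]
        by_contra hne
        obtain ⟨i, hi⟩ : ∃ i, s i ≠ 0 := by
          by_contra hall
          push_neg at hall
          exact hs (Finsupp.ext hall)
        exact absurd (hvars ((mem_vars i).mpr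
          ⟨s, mem_support_iff.mpr hne, Finsupp.mem_support_iff.mpr hi⟩)) (Finset.notMem_empty i)
    rw [hfC] at h0 ⊢
    rw [aeval_C] at h0
    have : coeff 0 f = 0 := by
      have := (algebraMap F (FractionRing (MvPolynomial (Fin n) F))).injective
      exact this (by simpa using h0)
    rw [this, map_zero]
    exact Ideal.zero_mem _
  | succ NN ih =>
    intro S hS c hc f hvars h0
    rcases S.eq_empty_or_nonempty with rfl | ⟨mstar, hmS⟩
    · exact ih ∅ (by simp) c hc f hvars h0
    · obtain ⟨k, hk⟩ : ∃ k, c mstar k ≠ 0 := by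
        by_contra hall; push_neg at hall; exact hc mstar hmS (funext hall)
      set β : Fin m → F := fun i => c i k * (c mstar k)⁻¹ with hβdef
      set c' : Fin m → Fin n → F := fun i => c i - β i • c mstar with hc'def
      have hcc : ∀ i, zpoly c' i = zpoly c i - C (β i) * zpoly c mstar := by
        intro i
        rw [zpoly_eq_lin c' i]
        show lin (c i - β i • c mstar) = _
        rw [lin_sub, lin_smul, zpoly_eq_lin, zpoly_eq_lin]
      have hc'mstar : c' mstar = 0 := by
        show c mstar - (c mstar k * (c mstar k)⁻¹) • c mstar = 0
        rw [mul_inv_cancel₀ hk, one_smul, sub_self]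
      set B : Finset (Fin m) := (S.erase mstar).filter (fun i => c' i ≠ 0) with hBdef
      have hBsub : B ⊆ S.erase mstar := Finset.filter_subset _ _
      have hBS : B ⊆ S := fun i hi => Finset.mem_of_mem_erase (hBsub hi)
      have hmB : mstar ∉ B := fun h => (Finset.mem_erase.mp (hBsub h)).1 rfl
      have hBcard : B.card ≤ NN := by
        have h1 := Finset.card_le_card hBsub
        have h2 := Finset.card_erase_of_mem hmS
        have h3 : 1 ≤ S.card := Finset.card_pos.mpr ⟨mstar, hmS⟩
        omega
      have hc'B : ∀ i ∈ B, c' i ≠ 0 := fun i hi => (Finset.mem_filter.mp hi).2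
      set xsub : Fin n → MvPolynomial (Fin n) F :=
        (fun j => X j - if j = k then C ((c mstar k)⁻¹) * lin (c mstar) else 0) with hxsub
      have hsigma : ∀ i, bind₁ xsub (zpoly c i) = zpoly c' i := by
        intro i
        rw [zpoly_eq_lin c i, hxsub, bind₁_lin]
        rfl
      have hsigmam : bind₁ xsub (zpoly c mstar) = 0 := by
        rw [hsigma, zpoly_eq_lin, hc'mstar, lin_zero]
      have hZne : ∀ i ∈ S, OTphi F n (zpoly c i) ≠ 0 :=
        fun i hi => OTphi_ne_zero (zpoly_ne_zero (hc i hi))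
      have hZ'ne : ∀ i ∈ B, OTphi F n (zpoly c' i) ≠ 0 :=
        fun i hi => OTphi_ne_zero (zpoly_ne_zero (hc'B i hi))
      have hker := OTspan_ker (n := n) (m := m) (c := c) (S := S) hc
      -- inner induction on the degree in X mstar
      have inner : ∀ (J : ℕ) (f : MvPolynomial (Fin m) F), degreeOf mstar f ≤ J →
          f.vars ⊆ insert mstar B → aeval (OTu c) f = 0 →
          f ∈ Ideal.span (OTgens c S) := by
        intro J
        induction J with
        | zero =>
          intro f hdeg hvars h0
          have hvB : f.vars ⊆ B := by
            intro i hi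
            rcases Finset.mem_insert.mp (hvars hi) with rfl | h
            · exfalso
              obtain ⟨s, hs, his⟩ := (mem_vars i).mp hi
              have := degreeOf_le_iff.mp hdeg s hs
              exact Finsupp.mem_support_iff.mp his (by omega)
            · exact h
          refine Ideal.span_mono ?_ (ih B hBcard c (fun i hi => hc i (hBS hi)) f hvB h0)
          rintro p ⟨a, h1, h2, rfl⟩
          exact ⟨a, h1, h2.trans hBS, rfl⟩
        | succ J ihJ =>
          intro f hdeg hvars h0
          set g := otSlice mstar (J+1) f with hgdef
          set r := otSliceRest mstar (J+1) f with hrdef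
          have hdecomp := slice_decomp mstar (J+1) f
          set Nf := f.totalDegree + 1 with hNfdef
          have hgsupp : ∀ s ∈ g.support, (∀ i, s i ≠ 0 → i ∈ B) ∧ ∀ i ∈ B, s i ≤ Nf := by
            intro s hs
            obtain ⟨s0, hs0, hs0k, rfl⟩ := slice_support mstar (J+1) f s hs
            constructor
            · intro i hi
              have hine : i ≠ mstar := by
                rintro rfl; rw [Finsupp.erase_same] at hi; exact hi rfl
              rw [Finsupp.erase_ne hine] at hi
              have hiv : i ∈ f.vars :=
                (mem_vars i).mpr ⟨s0, hs0, Finsupp.mem_support_iff.mpr hi⟩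
              rcases Finset.mem_insert.mp (hvars hiv) with h | h
              · exact absurd h hine
              · exact h
            · intro i hiB
              have h1 : Finsupp.erase mstar s0 i ≤ s0 i := by
                rcases eq_or_ne i mstar with rfl | hne
                · rw [Finsupp.erase_same]; omega
                · rw [Finsupp.erase_ne hne]
              have h2 := exp_le_totalDegree hs0 i
              omega
          have hvg : g.vars ⊆ B := by
            intro i hi
            obtain ⟨s, hsg, his⟩ := (mem_vars i).mp hi
            exact (hgsupp s hsg).1 i (Finsupp.mem_support_iff.mp his)
          set N' : Fin m → ℕ := fun i => if i = mstar then J+1 else Nf with hN'def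
          have hN'm : N' mstar = J+1 := by simp [hN'def]
          have hN'ne : ∀ i, i ≠ mstar → N' i = Nf := fun i hi => by simp [hN'def, hi]
          have hrsupp : ∀ s ∈ r.support,
              (∀ i, s i ≠ 0 → i ∈ insert mstar B) ∧ ∀ i ∈ insert mstar B, s i ≤ N' i := by
            intro s hs
            obtain ⟨hsf, hsk⟩ := sliceRest_support mstar (J+1) f s hs
            constructor
            · intro i hi
              exact hvars ((mem_vars i).mpr ⟨s, hsf, Finsupp.mem_support_iff.mpr hi⟩)
            · intro i _
              by_cases hie : i = mstar
              · subst hie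
                have h1 : s i ≤ J + 1 := degreeOf_le_iff.mp hdeg s hsf
                have h2 : N' i = J + 1 := by simp [hN'def]
                omega
              · rw [hN'ne i hie]
                have := exp_le_totalDegree hsf i
                omega
          have hBins : ∀ i ∈ insert mstar B, OTphi F n (zpoly c i) ≠ 0 := by
            intro i hi
            rcases Finset.mem_insert.mp hi with rfl | h
            · exact hZne i hmS
            · exact hZne i (hBS h)
          have hOTufun : (fun i => ((OTphi F n) (zpoly c i))⁻¹) = OTu c := rfl
          have hOTufun' : (fun i => ((OTphi F n) (zpoly c' i))⁻¹) = OTu c' := rfl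
          have hclearg := clear_denoms (OTphi F n) c B (fun i hi => hZne i (hBS hi))
            (fun _ => Nf) g hgsupp
          have hclearr := clear_denoms (OTphi F n) c (insert mstar B) hBins N' r hrsupp
          beta_reduce at hclearg hclearr
          rw [hOTufun] at hclearg hclearr
          set Tg := ∑ s ∈ g.support, C (coeff s g) * ∏ i ∈ B, zpoly c i ^ (Nf - s i) with hTgdef
          set Tr := ∑ s ∈ r.support, C (coeff s r) * ∏ i ∈ insert mstar B,
            zpoly c i ^ (N' i - s i) with hTrdef
          have hprod_eq : ∏ i ∈ insert mstar B, OTphi F n (zpoly c i) ^ N' i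
              = OTphi F n (zpoly c mstar) ^ (J+1) * ∏ i ∈ B, OTphi F n (zpoly c i) ^ Nf := by
            rw [Finset.prod_insert hmB]
            congr 1
            · rw [hN'm]
            · refine Finset.prod_congr rfl fun i hi => ?_
              rw [hN'ne i (by rintro rfl; exact hmB hi)]
          have hmain0 : OTphi F n (Tg + Tr) = 0 := by
            have t1 : aeval (OTu c) g * OTu c mstar ^ (J+1) *
                ∏ i ∈ insert mstar B, OTphi F n (zpoly c i) ^ N' i = OTphi F n Tg := by
              rw [hprod_eq]
              have e2 : aeval (OTu c) g * OTu c mstar ^ (J + 1) *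
                  (OTphi F n (zpoly c mstar) ^ (J + 1) * ∏ i ∈ B, OTphi F n (zpoly c i) ^ Nf)
                  = (aeval (OTu c) g * ∏ i ∈ B, OTphi F n (zpoly c i) ^ Nf) *
                    (OTu c mstar * OTphi F n (zpoly c mstar)) ^ (J+1) := by
                ring
              rw [e2, hclearg, show OTu c mstar * OTphi F n (zpoly c mstar) = 1 from
                inv_mul_cancel₀ (hZne mstar hmS), one_pow, mul_one]
            have e1 : aeval (OTu c) f * ∏ i ∈ insert mstar B, OTphi F n (zpoly c i) ^ N' i
                = OTphi F n Tg + OTphi F n Tr := by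
              conv_lhs => rw [hdecomp]
              rw [map_add, add_mul, map_mul, map_pow, aeval_X, t1, hclearr]
            rw [map_add, ← e1, h0, zero_mul]
          have hTgTr : Tg + Tr = 0 := by
            apply OTphi_inj
            rwa [map_zero]
          have hsTr : bind₁ xsub Tr = 0 := by
            rw [hTrdef, map_sum]
            refine Finset.sum_eq_zero fun s hs => ?_
            rw [map_mul, map_prod, Finset.prod_insert hmB, map_pow, hsigmam]
            obtain ⟨hsf, hsk⟩ := sliceRest_support mstar (J+1) f s hs
            have h1 : s mstar ≤ J + 1 := degreeOf_le_iff.mp hdeg s hsf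
            have h2 : N' mstar - s mstar ≠ 0 := by
              rw [hN'm]
              omega
            rw [zero_pow h2, zero_mul, mul_zero]
          have hsTg : bind₁ xsub Tg = 0 := by
            have := congrArg (bind₁ xsub) hTgTr
            rwa [map_add, map_zero, hsTr, add_zero] at this
          have hTg' : bind₁ xsub Tg
              = ∑ s ∈ g.support, C (coeff s g) * ∏ i ∈ B, zpoly c' i ^ (Nf - s i) := by
            rw [hTgdef, map_sum]
            refine Finset.sum_congr rfl fun s _ => ?_
            rw [map_mul, bind₁_C_right, map_prod]
            exact congrArg _ (Finset.prod_congr rfl fun i _ => by rw [map_pow, hsigma])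
          have hclearg' := clear_denoms (OTphi F n) c' B hZ'ne (fun _ => Nf) g hgsupp
          beta_reduce at hclearg'
          rw [hOTufun'] at hclearg'
          have hgval : aeval (OTu c') g = 0 := by
            have e3 : aeval (OTu c') g * ∏ i ∈ B, OTphi F n (zpoly c' i) ^ Nf = 0 := by
              rw [hclearg', ← hTg', hsTg, map_zero]
            rcases mul_eq_zero.mp e3 with h | h
            · exact h
            · exact absurd h (Finset.prod_ne_zero_iff.mpr
                (fun i hi => pow_ne_zero _ (hZ'ne i hi)))
          have hgmem : g ∈ Ideal.span (OTgens c' B) := ih B hBcard c' hc'B g hvg hgval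
          obtain ⟨ξ, hξsupp, hξsum⟩ := Submodule.mem_span_set.mp hgmem
          set ρ : MvPolynomial (Fin m) F →ₐ[F] MvPolynomial (Fin m) F :=
            bind₁ (fun i => if i ∈ B then X i else 0) with hρdef
          have hρvars : ∀ q : MvPolynomial (Fin m) F, (ρ q).vars ⊆ B := by
            intro q
            rw [hρdef]
            refine (vars_bind₁ _ q).trans ?_
            intro i hi
            rw [Finset.mem_biUnion] at hi
            obtain ⟨j, hj, hij⟩ := hi
            by_cases hjB : j ∈ B
            · rw [if_pos hjB, vars_X, Finset.mem_singleton] at hij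
              exact hij ▸ hjB
            · rw [if_neg hjB, vars_0] at hij
              exact absurd hij (Finset.notMem_empty i)
          have hρid : ∀ q : MvPolynomial (Fin m) F, q.vars ⊆ B → ρ q = q :=
            fun q hq => bind₁_eq_self _ (fun i hi => if_pos hi) hq
          have hgens_vars : ∀ p ∈ ξ.support, (p : MvPolynomial (Fin m) F).vars ⊆ B := by
            intro p hp
            obtain ⟨a, h1, h2, rfl⟩ := hξsupp hp
            exact (vars_PL a).trans h2
          have hg_eq : g = ∑ p ∈ ξ.support, ρ (ξ p) * p := by
            conv_lhs => rw [← hρid g hvg, ← hξsum]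
            rw [Finsupp.sum, map_sum]
            exact Finset.sum_congr rfl fun p hp => by
              rw [smul_eq_mul, map_mul, hρid p (hgens_vars p hp)]
          have hchoice : ∀ p ∈ ξ.support, ∃ aμ : (Fin m → F) × F,
              lsupp aμ.1 ⊆ B ∧
              X mstar * p - C aμ.2 * tMon (lsupp aμ.1) ∈ Ideal.span (OTgens c S) := by
            intro p hp
            obtain ⟨a, h1, h2, rfl⟩ := hξsupp hp
            obtain ⟨μ, hμ⟩ := lift_rel c c' mstar β hcc S hmS B hBsub h1 h2
            exact ⟨⟨a, μ⟩, h2, hμ⟩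
          set aμ : {p // p ∈ ξ.support} → (Fin m → F) × F :=
            fun p => Classical.choose (hchoice p.1 p.2) with haμdef
          have haμ : ∀ p : {p // p ∈ ξ.support}, lsupp (aμ p).1 ⊆ B ∧
              X mstar * p.1 - C (aμ p).2 * tMon (lsupp (aμ p).1) ∈ Ideal.span (OTgens c S) :=
            fun p => Classical.choose_spec (hchoice p.1 p.2)
          set hpoly := ∑ p ∈ ξ.support.attach, ρ (ξ p.1) * (C (aμ p).2 * tMon (lsupp (aμ p).1))
            with hhdef
          set f2 := r + X mstar ^ J * hpoly with hf2def
          have hg_attach : g = ∑ p ∈ ξ.support.attach, ρ (ξ p.1) * p.1 := by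
            rw [hg_eq]
            exact (Finset.sum_attach _ _).symm
          have hdiff : f - f2 = ∑ p ∈ ξ.support.attach, (ρ (ξ p.1) * X mstar ^ J) *
              (X mstar * p.1 - C (aμ p).2 * tMon (lsupp (aμ p).1)) := by
            have e1 : ∑ p ∈ ξ.support.attach, (ρ (ξ p.1) * X mstar ^ J) *
                (X mstar * p.1 - C (aμ p).2 * tMon (lsupp (aμ p).1))
                = (∑ p ∈ ξ.support.attach, ρ (ξ p.1) * p.1) * (X mstar * X mstar ^ J)
                  - X mstar ^ J * hpoly := by
              rw [hhdef, Finset.sum_mul, Finset.mul_sum, ← Finset.sum_sub_distrib]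
              exact Finset.sum_congr rfl fun p _ => by ring
            rw [e1, ← hg_attach, hf2def]
            conv_lhs => rw [hdecomp]
            ring
          have hdiffmem : f - f2 ∈ Ideal.span (OTgens c S) := by
            rw [hdiff]
            exact Ideal.sum_mem _ fun p _ => Ideal.mul_mem_left _ _ (haμ p).2
          have hvh : hpoly.vars ⊆ B := by
            rw [hhdef]
            refine (vars_sum_subset _ _).trans ?_
            intro i hi
            rw [Finset.mem_biUnion] at hi
            obtain ⟨p, _, hip⟩ := hi
            rcases Finset.mem_union.mp (vars_mul _ _ hip) with h | h
            · exact hρvars _ h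
            · rcases Finset.mem_union.mp (vars_mul _ _ h) with h' | h'
              · rw [vars_C] at h'; exact absurd h' (Finset.notMem_empty i)
              · exact (haμ p).1 (vars_tMon _ h')
          have hrsub := sliceRest_support mstar (J+1) f
          have hf2deg : degreeOf mstar f2 ≤ J := by
            rw [hf2def]
            refine le_trans (degreeOf_add_le _ _ _) ?_
            rw [max_le_iff]
            constructor
            · rw [degreeOf_le_iff]
              intro s hs
              obtain ⟨hsf, hsk⟩ := hrsub s hs
              have := degreeOf_le_iff.mp hdeg s hsf
              omega
            · refine le_trans (degreeOf_mul_le _ _ _) ?_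
              have hd1 : degreeOf mstar (X mstar ^ J : MvPolynomial (Fin m) F) ≤ J := by
                refine le_trans (degreeOf_pow_le _ _ _) ?_
                rw [degreeOf_X, if_pos rfl, mul_one]
              have hd2 : degreeOf mstar hpoly = 0 := degreeOf_eq_zero_of_vars hvh hmB
              omega
          have hf2vars : f2.vars ⊆ insert mstar B := by
            rw [hf2def]
            refine (vars_add_subset _ _).trans ?_
            intro i hi
            rcases Finset.mem_union.mp hi with h | h
            · obtain ⟨s, hs, his⟩ := (mem_vars i).mp h
              obtain ⟨hsf, _⟩ := hrsub s hs
              exact hvars ((mem_vars i).mpr ⟨s, hsf, his⟩)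
            · rcases Finset.mem_union.mp (vars_mul _ _ h) with h' | h'
              · have := vars_pow (X mstar : MvPolynomial (Fin m) F) J h'
                rw [vars_X, Finset.mem_singleton] at this
                exact this ▸ Finset.mem_insert_self _ _
              · exact Finset.mem_insert_of_mem (hvh h')
          have hf2val : aeval (OTu c) f2 = 0 := by
            have e4 : f2 = f - (f - f2) := by ring
            rw [e4, map_sub, h0, hker _ hdiffmem, sub_zero]
          have hf2mem := ihJ f2 hf2deg hf2vars hf2val
          have e5 : f = (f - f2) + f2 := by ring
          rw [e5]
          exact Ideal.add_mem _ hdiffmem hf2mem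
      -- parallel substitution, then apply inner
      set gsub : Fin m → MvPolynomial (Fin m) F :=
        fun i => if i ∈ S.erase mstar ∧ c' i = 0 then C ((β i)⁻¹) * X mstar else X i
        with hgsubdef
      have hpar : ∀ i, i ∈ S.erase mstar → c' i = 0 →
          (C ((β i)⁻¹) * X mstar - X i ∈ Ideal.span (OTgens c S)) ∧
          algebraMap F (FractionRing (MvPolynomial (Fin n) F)) ((β i)⁻¹) * OTu c mstar
            = OTu c i := by
        intro i hi hz
        have hine : i ≠ mstar := (Finset.mem_erase.mp hi).1
        have hiS : i ∈ S := Finset.mem_of_mem_erase hi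
        have hci : c i = β i • c mstar := by
          have : c i - β i • c mstar = 0 := hz
          linear_combination (norm := module) this
        have hβne : β i ≠ 0 := by
          intro h
          exact hc i hiS (by rw [hci, h, zero_smul])
        have hzi : zpoly c i = C (β i) * zpoly c mstar := by
          rw [zpoly_eq_lin c i, hci, lin_smul, zpoly_eq_lin]
        set a : Fin m → F := fun j => if j = i then (-1 : F) else if j = mstar then β i else 0
          with hadef
        have hlsupp : lsupp a = {i, mstar} := by
          ext j
          rw [mem_lsupp, hadef]
          rcases eq_or_ne j i with rfl | hji
          · simp [hβne]
          · rcases eq_or_ne j mstar with rfl | hjm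
            · simp [hji, hβne]
            · simp [hji, hjm]
        have hrel : IsLinRel c a := by
          constructor
          · rw [hlsupp, Finset.card_pair hine]
          · have ha1 : a i = -1 := by rw [hadef]; simp
            have ha2 : a mstar = β i := by rw [hadef]; simp [Ne.symm hine]
            rw [hlsupp, Finset.sum_pair hine, ha1, ha2, hzi]
            simp only [map_neg, map_one]
            ring
        have hPLa : PL a = C (β i) * X i - X mstar := by
          have ha1 : a i = -1 := by rw [hadef]; simp
          have ha2 : a mstar = β i := by rw [hadef]; simp [Ne.symm hine]
          rw [PL, hlsupp, Finset.sum_pair hine, ha1, ha2]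
          have e1 : ({i, mstar} : Finset (Fin m)) \ {i} = {mstar} := by
            ext j
            simp only [Finset.mem_sdiff, Finset.mem_insert, Finset.mem_singleton]
            constructor
            · rintro ⟨h1 | h1, h2⟩
              · exact absurd h1 h2
              · exact h1
            · rintro rfl
              exact ⟨Or.inr rfl, Ne.symm hine⟩
          have e2 : ({i, mstar} : Finset (Fin m)) \ {mstar} = {i} := by
            ext j
            simp only [Finset.mem_sdiff, Finset.mem_insert, Finset.mem_singleton]
            constructor
            · rintro ⟨h1 | h1, h2⟩
              · exact h1
              · exact absurd h1 h2
            · rintro rfl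
              exact ⟨Or.inl rfl, hine⟩
          rw [e1, e2, tMon, tMon, Finset.prod_singleton, Finset.prod_singleton]
          simp only [map_neg, map_one]
          ring
        constructor
        · have hmem : PL a ∈ Ideal.span (OTgens c S) := Ideal.subset_span ⟨a, hrel, by
            rw [hlsupp]
            intro j hj
            rcases Finset.mem_insert.mp hj with rfl | hj'
            · exact hiS
            · exact (Finset.mem_singleton.mp hj') ▸ hmS, rfl⟩
          have hCC : C ((β i)⁻¹) * C (β i) = (1 : MvPolynomial (Fin m) F) := by
            rw [← map_mul, inv_mul_cancel₀ hβne, map_one]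
          have e3 : C ((β i)⁻¹) * X mstar - X i = C (-(β i)⁻¹) * PL a := by
            rw [hPLa, map_neg]
            linear_combination (X i : MvPolynomial (Fin m) F) * hCC
          rw [e3]
          exact Ideal.mul_mem_left _ _ hmem
        · have hCβ : OTphi F n (C (β i)) = algebraMap F _ (β i) := by
            rw [← MvPolynomial.algebraMap_eq]
            exact (OTphi F n).commutes (β i)
          have hZm : OTphi F n (zpoly c mstar) ≠ 0 := hZne mstar hmS
          have key : OTphi F n (zpoly c i) *
              (algebraMap F (FractionRing (MvPolynomial (Fin n) F)) ((β i)⁻¹) *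
                (OTphi F n (zpoly c mstar))⁻¹) = 1 := by
            rw [hzi, map_mul, hCβ, mul_mul_mul_comm, ← map_mul, mul_inv_cancel₀ hβne,
              map_one, mul_inv_cancel₀ hZm, one_mul]
          exact (inv_eq_of_mul_eq_one_right key).symm
      set f1 := bind₁ gsub f with hf1def
      have hsubmem : f - f1 ∈ Ideal.span (OTgens c S) := by
        rw [hf1def]
        refine sub_mem_ideal _ gsub (fun i => ?_) f
        simp only [hgsubdef]
        by_cases hcond : i ∈ S.erase mstar ∧ c' i = 0
        · rw [if_pos hcond]
          exact (hpar i hcond.1 hcond.2).1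
        · rw [if_neg hcond, sub_self]
          exact Ideal.zero_mem _
      have hf1val : aeval (OTu c) f1 = 0 := by
        have h1 : aeval (OTu c) f1 = aeval (fun i => aeval (OTu c) (gsub i)) f := by
          rw [hf1def]; exact aeval_bind₁ _ _ f
        have h2 : aeval (fun i => aeval (OTu c) (gsub i)) f = aeval (OTu c) f := by
          refine aeval_congr_vars _ _ f (fun i hi => ?_)
          simp only [hgsubdef]
          by_cases hcond : i ∈ S.erase mstar ∧ c' i = 0
          · rw [if_pos hcond, map_mul, aeval_X, aeval_C]
            exact (hpar i hcond.1 hcond.2).2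
          · rw [if_neg hcond, aeval_X]
        rw [h1, h2, h0]
      have hf1vars : f1.vars ⊆ insert mstar B := by
        rw [hf1def]
        refine (vars_bind₁ _ f).trans ?_
        intro i hi
        rw [Finset.mem_biUnion] at hi
        obtain ⟨j, hj, hij⟩ := hi
        simp only [hgsubdef] at hij
        by_cases hcond : j ∈ S.erase mstar ∧ c' j = 0
        · rw [if_pos hcond] at hij
          rcases Finset.mem_union.mp (vars_mul _ _ hij) with h | h
          · rw [vars_C] at h; exact absurd h (Finset.notMem_empty i)
          · rw [vars_X, Finset.mem_singleton] at h
            exact h ▸ Finset.mem_insert_self _ _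
        · rw [if_neg hcond, vars_X, Finset.mem_singleton] at hij
          subst hij
          have hjS : i ∈ S := hvars hj
          rcases eq_or_ne i mstar with rfl | hjm
          · exact Finset.mem_insert_self _ _
          · have hjerase : i ∈ S.erase mstar := Finset.mem_erase.mpr ⟨hjm, hjS⟩
            have hc'j : c' i ≠ 0 := fun h => hcond ⟨hjerase, h⟩
            exact Finset.mem_insert_of_mem (Finset.mem_filter.mpr ⟨hjerase, hc'j⟩)
      have hf1mem := inner (degreeOf mstar f1) f1 le_rfl hf1vars hf1val
      have e6 : f = (f - f1) + f1 := by ring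
      rw [e6]
      exact Ideal.add_mem _ hsubmem hf1mem
end Main


/-- The kernel `I` of `h` equals the ideal of `F[t₁,…,t_m]` generated by the
polynomials `P_L`, where `L` ranges over all linear relations. -/
theorem statement3
    (F : Type) [Field F] (n m : ℕ) (hn : 0 < n) (hm : 0 < m)
    (c : Fin m → Fin n → F) (hc : ∀ i, c i ≠ 0)
    (R : Type) [CommRing R] [Algebra F R] [Algebra (MvPolynomial (Fin n) F) R]
    [IsScalarTower F (MvPolynomial (Fin n) F) R]
    [IsLocalization.Away (∏ i, zpoly c i) R]
    (zinv : Fin m → R)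
    (hzinv : ∀ i, algebraMap (MvPolynomial (Fin n) F) R (zpoly c i) * zinv i = 1) :
    RingHom.ker (MvPolynomial.aeval zinv : MvPolynomial (Fin m) F →ₐ[F] R).toRingHom =
      Ideal.span {p : MvPolynomial (Fin m) F | ∃ a : Fin m → F, IsLinRel c a ∧ p = PL a} := by
    classical
  have hOTphi : ∀ x : MvPolynomial (Fin n) F,
      OTphi F n x = algebraMap (MvPolynomial (Fin n) F) (FractionRing (MvPolynomial (Fin n) F)) x :=
    fun x => rfl
  apply le_antisymm
  · intro f hf
    rw [RingHom.mem_ker] at hf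
    have hz : (∏ i, zpoly c i) ≠ 0 :=
      Finset.prod_ne_zero_iff.mpr (fun i _ => zpoly_ne_zero (hc i))
    have hunit : ∀ y : Submonoid.powers (∏ i, zpoly c i),
        IsUnit (algebraMap (MvPolynomial (Fin n) F)
          (FractionRing (MvPolynomial (Fin n) F)) y) := by
      rintro ⟨y, k, rfl⟩
      refine isUnit_iff_ne_zero.mpr ?_
      rw [← hOTphi, map_pow]
      exact pow_ne_zero _ (OTphi_ne_zero hz)
    set ψ : R →+* FractionRing (MvPolynomial (Fin n) F) := IsLocalization.lift hunit with hψdef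
    have hψalg : ∀ x : MvPolynomial (Fin n) F, ψ (algebraMap _ R x)
        = algebraMap (MvPolynomial (Fin n) F) (FractionRing (MvPolynomial (Fin n) F)) x :=
      fun x => IsLocalization.lift_eq hunit x
    have hψu : ∀ i, ψ (zinv i) = OTu c i := by
      intro i
      have h1 : algebraMap (MvPolynomial (Fin n) F) (FractionRing (MvPolynomial (Fin n) F))
          (zpoly c i) * ψ (zinv i) = 1 := by
        have := congrArg ψ (hzinv i)
        rwa [map_mul, map_one, hψalg] at this
      exact (inv_eq_of_mul_eq_one_right h1).symm
    have hcomm : ψ.comp ((aeval zinv : MvPolynomial (Fin m) F →ₐ[F] R) : MvPolynomial (Fin m) F →+* R)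
        = ((aeval (OTu c) : MvPolynomial (Fin m) F →ₐ[F] FractionRing (MvPolynomial (Fin n) F)) :
            MvPolynomial (Fin m) F →+* FractionRing (MvPolynomial (Fin n) F)) := by
      apply MvPolynomial.ringHom_ext
      · intro r
        simp only [RingHom.comp_apply, RingHom.coe_coe, aeval_C]
        rw [IsScalarTower.algebraMap_apply F (MvPolynomial (Fin n) F) R, hψalg,
          ← IsScalarTower.algebraMap_apply]
      · intro i
        simp only [RingHom.comp_apply, RingHom.coe_coe, aeval_X]
        exact hψu i
    have h2 : aeval (OTu c) f = 0 := by
      have := RingHom.congr_fun hcomm f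
      simp only [RingHom.comp_apply, RingHom.coe_coe] at this
      have hf' : aeval zinv f = 0 := hf
      rw [← this, hf', map_zero]
    have h3 := OT_main (F := F) (n := n) (m := m) m Finset.univ (by simp) c
      (fun i _ => hc i) f (Finset.subset_univ _) h2
    refine Ideal.span_mono ?_ h3
    rintro p ⟨a, h1', _, rfl⟩
    exact ⟨a, h1', rfl⟩
  · rw [Ideal.span_le]
    rintro p ⟨a, ha, rfl⟩
    have h0 : aeval zinv (PL a) = 0 := by
      refine aeval_PL_eq_zero (IsScalarTower.toAlgHom F (MvPolynomial (Fin n) F) R) c ha zinv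
        (fun i _ => ?_)
      exact hzinv i
    simp only [SetLike.mem_coe, RingHom.mem_ker]
    exact h0
end OT
end
end

section
/- For every linear relation L and every subset S ⊆ |L|, the element Q_{L,S} lies in the ideal of Ξ generated by the elements P_{L,T} with T ranging over all subsets of |L|. -/
open scoped TensorProduct
open MvPolynomial

noncomputable section

/-- `Q_{L,S} = Σ_{i∈|L|∖S} a_i · (−1)^{#{j∈S : j<i}} · t_{|L|∖(S∪{i})} · u_{S∪{i}}`. -/
def QLS {F : Type} [Field F] {m : ℕ} (a : Fin m → F) (S : Finset (Fin m)) : XiAlg F m :=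
  ∑ i ∈ lsupp a \ S,
    (C ((-1 : F) ^ (@Finset.filter _ (fun j => j < i) (Classical.decPred _) S).card * a i) *
        tMon (lsupp a \ insert i S)) ⊗ₜ[F] uM (insert i S)


section Aux

variable {F : Type} [Field F] {m : ℕ}

lemma uList_nil : uList ([] : List (Fin m)) = (1 : ExtAlg F m) := rfl

lemma uList_cons (x : Fin m) (l : List (Fin m)) :
    uList (x :: l) = (uGen x : ExtAlg F m) * uList l := by
  simp [uList]

lemma uList_append (l₁ l₂ : List (Fin m)) :
    uList (l₁ ++ l₂) = (uList l₁ : ExtAlg F m) * uList l₂ := by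
  simp [uList]

lemma uGen_sq (i : Fin m) : (uGen i : ExtAlg F m) * uGen i = 0 :=
  ExteriorAlgebra.ι_sq_zero _

lemma uGen_anticomm (i k : Fin m) :
    (uGen i : ExtAlg F m) * uGen k = -(uGen k * uGen i) := by
  rw [eq_neg_iff_add_eq_zero]
  exact ExteriorAlgebra.ι_add_mul_swap (R := F) (M := Fin m → F) (Pi.single i 1) (Pi.single k 1)

lemma uGen_mul_uList_of_mem {x : Fin m} {l : List (Fin m)} (h : x ∈ l) :
    (uGen x : ExtAlg F m) * uList l = 0 := by
  induction l with
  | nil => simp at h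
  | cons y t ih =>
    rw [uList_cons, ← mul_assoc]
    rcases List.mem_cons.mp h with rfl | hxt
    · rw [uGen_sq, zero_mul]
    · rw [uGen_anticomm, neg_mul, mul_assoc, ih hxt, mul_zero, neg_zero]

lemma uList_extract (l₁ : List (Fin m)) (x : Fin m) (l₂ : List (Fin m)) :
    uList (l₁ ++ x :: l₂) =
      ((-1 : F) ^ l₁.length) • ((uGen x : ExtAlg F m) * uList (l₁ ++ l₂)) := by
  induction l₁ with
  | nil => simp [uList_cons]
  | cons y t ih =>
    rw [List.cons_append, uList_cons, ih, List.cons_append, uList_cons, mul_smul_comm,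
      ← mul_assoc, uGen_anticomm y x, neg_mul, mul_assoc, smul_neg, ← neg_smul]
    congr 1
    simp [pow_succ, mul_comm]

def cpos (j : Fin m) (S : Finset (Fin m)) : ℕ :=
  (@Finset.filter _ (fun x => x < j) (Classical.decPred _) S).card

lemma sort_insert_eq {j : Fin m} {S : Finset (Fin m)} (hj : j ∉ S) :
    (insert j S).sort (· ≤ ·) = (S.sort (· ≤ ·)).orderedInsert (· ≤ ·) j := by
  haveI : IsAntisymm (Fin m) (· ≤ ·) := ⟨fun _ _ => le_antisymm⟩
  refine (fun hp h1 h2 => List.Perm.eq_of_pairwise' (r := (· ≤ ·)) h1 h2 hp) ?_ ?_ ?_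
  · refine ((Finset.sort_perm_toList _ _).trans ?_).trans
      (List.perm_orderedInsert _ _ _).symm
    refine (Finset.toList_insert hj).trans ?_
    exact (Finset.sort_perm_toList S _).symm.cons j
  · exact Finset.pairwise_sort _ _
  · exact (Finset.pairwise_sort _ _).orderedInsert _ _

lemma length_takeWhile_eq_countP (p : Fin m → Bool)
    (hp : ∀ x y : Fin m, x ≤ y → p y = true → p x = true) :
    ∀ l : List (Fin m), l.Pairwise (· ≤ ·) →
      (l.takeWhile p).length = l.countP p := by
  intro l hl
  induction l with
  | nil => rfl
  | cons x t ih =>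
    rcases List.pairwise_cons.mp hl with ⟨hx, ht⟩
    cases h : p x with
    | true =>
      rw [List.takeWhile_cons_of_pos h, List.countP_cons_of_pos h]
      simp [ih ht]
    | false =>
      rw [List.takeWhile_cons_of_neg (by simp [h]), List.countP_cons_of_neg (by simp [h])]
      symm
      rw [List.length_nil, List.countP_eq_zero]
      intro y hy hpy
      exact absurd (hp x y (hx y hy) hpy) (by simp [h])

lemma countP_sort_eq (j : Fin m) (S : Finset (Fin m)) :
    (S.sort (· ≤ ·)).countP (fun b => decide ¬(j ≤ b)) = cpos j S := by
  classical
  have h1 : Multiset.countP (fun b => ¬ (j ≤ b)) (S.val) =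
      (S.sort (· ≤ ·)).countP (fun b => decide ¬(j ≤ b)) := by
    rw [← Finset.sort_eq S (· ≤ ·), Multiset.coe_countP]
  rw [← h1, Multiset.countP_eq_card_filter, cpos, Finset.filter_congr_decidable,
    Finset.card_def, Finset.filter_val]
  congr 1
  exact Multiset.filter_congr (fun x _ => by simp [not_le])

lemma sort_insert_decomp {j : Fin m} {S : Finset (Fin m)} (hj : j ∉ S) :
    ∃ A B : List (Fin m), S.sort (· ≤ ·) = A ++ B ∧ A.length = cpos j S ∧
      (insert j S).sort (· ≤ ·) = A ++ j :: B := by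
  refine ⟨(S.sort (· ≤ ·)).takeWhile (fun b => decide ¬(j ≤ b)),
    (S.sort (· ≤ ·)).dropWhile (fun b => decide ¬(j ≤ b)),
    List.takeWhile_append_dropWhile.symm, ?_, ?_⟩
  · rw [length_takeWhile_eq_countP _ ?_ _ (Finset.pairwise_sort _ _), countP_sort_eq]
    intro x y hxy hy
    simp only [decide_eq_true_eq, not_le] at *
    exact lt_of_le_of_lt hxy hy
  · rw [sort_insert_eq hj, List.orderedInsert_eq_take_drop]

lemma uM_insert {j : Fin m} {S : Finset (Fin m)} (hj : j ∉ S) :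
    uM (insert j S) = ((-1 : F) ^ cpos j S) • ((uGen j : ExtAlg F m) * uM S) := by
  obtain ⟨A, B, hAB, hlen, hins⟩ := sort_insert_decomp hj
  rw [uM, hins, uList_extract, hlen, uM, hAB]

lemma neg_one_pow_sq (p : ℕ) : ((-1 : F) ^ p) * ((-1 : F) ^ p) = 1 := by
  rw [← pow_add]
  exact Even.neg_one_pow ⟨p, rfl⟩

lemma uGen_mul_uM {j : Fin m} {S : Finset (Fin m)} (hj : j ∉ S) :
    (uGen j : ExtAlg F m) * uM S = ((-1 : F) ^ cpos j S) • uM (insert j S) := by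
  rw [uM_insert hj, smul_smul, neg_one_pow_sq, one_smul]

lemma sum_range_add' {M : Type*} [AddCommMonoid M] (f : ℕ → M) (p q : ℕ) :
    ∑ s ∈ Finset.range (p + q), f s
      = ∑ s ∈ Finset.range p, f s + ∑ s ∈ Finset.range q, f (p + s) := by
  induction q with
  | zero => simp
  | succ q ih =>
    rw [← Nat.add_assoc, Finset.sum_range_succ, ih, Finset.sum_range_succ, add_assoc]

lemma main_ext {j i : Fin m} {S : Finset (Fin m)} (hj : j ∉ S) (hi : i ∉ S) (hij : i ≠ j) :
    (uGen j : ExtAlg F m) *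
        (uM S - ∑ s ∈ Finset.range ((S.sort (· ≤ ·)).length),
            uList ((S.sort (· ≤ ·)).set s i))
      - ((-1 : F) ^ cpos j S) •
        (uM (insert j S) - ∑ s ∈ Finset.range (((insert j S).sort (· ≤ ·)).length),
            uList (((insert j S).sort (· ≤ ·)).set s i))
    = ((-1 : F) ^ cpos i S) • uM (insert i S) := by
  obtain ⟨A, B, hAB, hlen, hins⟩ := sort_insert_decomp hj
  have hABlen : (S.sort (· ≤ ·)).length = cpos j S + B.length := by
    rw [hAB]; simp [hlen]
  have hins_len : ((insert j S).sort (· ≤ ·)).length = (S.sort (· ≤ ·)).length + 1 := by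
    rw [hins]; simp only [List.length_append, List.length_cons, hlen, hABlen]; omega
  set pos := cpos j S with hpos
  set f : ℕ → ExtAlg F m := fun s => uList ((S.sort (· ≤ ·)).set s i) with hf
  set g : ℕ → ExtAlg F m := fun s => uList (((insert j S).sort (· ≤ ·)).set s i) with hg
  have e1 : ∀ s, s < pos → g s = ((-1 : F) ^ pos) • ((uGen j : ExtAlg F m) * f s) := by
    intro s hs
    have hs' : s < A.length := by rw [hlen]; exact hs
    have hAs : (A.set s i).length = pos := by simp [hlen]
    simp only [hg, hf, hins, hAB, List.set_append_left _ _ hs']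
    rw [uList_extract, hAs]
  have e2 : g pos = (((-1 : F) ^ pos) * ((-1 : F) ^ cpos i S)) • uM (insert i S) := by
    have h0 : ((A ++ j :: B).set pos i) = A ++ i :: B := by
      rw [List.set_append_right _ _ (le_of_eq hlen)]
      simp [hlen]
    simp only [hg, hins, h0]
    rw [uList_extract, hlen, ← hAB]
    rw [show uList (S.sort (· ≤ ·)) = uM S from rfl, uGen_mul_uM hi, smul_smul]
  have e3 : ∀ s, g (pos + (s + 1)) = ((-1 : F) ^ pos) • ((uGen j : ExtAlg F m) * f (pos + s)) := by
    intro s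
    have h0 : ((A ++ j :: B).set (pos + (s + 1)) i) = A ++ j :: (B.set s i) := by
      rw [List.set_append_right _ _ (by rw [hlen]; omega)]
      congr 1
      rw [hlen, show pos + (s + 1) - pos = s + 1 from by omega]
      rfl
    have h1 : ((S.sort (· ≤ ·)).set (pos + s) i) = A ++ (B.set s i) := by
      rw [hAB, List.set_append_right _ _ (by rw [hlen]; omega), hlen,
        show pos + s - pos = s from by omega]
    simp only [hg, hf, hins, h0, h1]
    rw [uList_extract, hlen, ← h1, h1]
  have hsg : ∑ s ∈ Finset.range (((insert j S).sort (· ≤ ·)).length), g s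
      = ∑ s ∈ Finset.range pos, g s
        + (∑ s ∈ Finset.range B.length, g (pos + (s + 1)) + g (pos + 0)) := by
    rw [hins_len, show (S.sort (· ≤ ·)).length + 1 = pos + (B.length + 1) from by omega,
      sum_range_add' g pos (B.length + 1), Finset.sum_range_succ' (fun s => g (pos + s))]
  have hsf : ∑ s ∈ Finset.range ((S.sort (· ≤ ·)).length), f s
      = ∑ s ∈ Finset.range pos, f s + ∑ s ∈ Finset.range B.length, f (pos + s) := by
    rw [hABlen]; exact sum_range_add' f pos B.length
  rw [mul_sub, uGen_mul_uM hj, smul_sub, hsg, hsf, add_zero, e2,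
    Finset.sum_congr rfl (fun s hs => e1 s (Finset.mem_range.mp hs)),
    Finset.sum_congr rfl (fun s _ => e3 s)]
  rw [← Finset.smul_sum, ← Finset.smul_sum, smul_add, smul_add, smul_smul, neg_one_pow_sq,
    one_smul, smul_smul, neg_one_pow_sq, one_smul, smul_smul, ← mul_assoc, neg_one_pow_sq,
    one_mul, mul_add, Finset.mul_sum, Finset.mul_sum]
  simp only [← hpos]
  abel

lemma ext_j {j : Fin m} {S : Finset (Fin m)} (hj : j ∉ S) :
    (uGen j : ExtAlg F m) *
        (uM S - ∑ s ∈ Finset.range ((S.sort (· ≤ ·)).length),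
            uList ((S.sort (· ≤ ·)).set s j))
      = ((-1 : F) ^ cpos j S) • uM (insert j S) := by
  rw [mul_sub, uGen_mul_uM hj, Finset.mul_sum]
  have : ∀ s ∈ Finset.range ((S.sort (· ≤ ·)).length),
      (uGen j : ExtAlg F m) * uList ((S.sort (· ≤ ·)).set s j) = 0 := by
    intro s hs
    apply uGen_mul_uList_of_mem
    have hslt : s < ((S.sort (· ≤ ·)).set s j).length := by
      rw [List.length_set]; exact Finset.mem_range.mp hs
    have h1 := List.getElem_mem hslt
    rwa [List.getElem_set_self hslt] at h1
  rw [Finset.sum_congr rfl this, Finset.sum_const_zero, sub_zero]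

set_option maxHeartbeats 1000000 in
lemma key_identity (a : Fin m → F) (S : Finset (Fin m)) (hS : S ⊆ lsupp a)
    {j : Fin m} (hjmem : j ∈ lsupp a \ S) :
    QLS a S = ((1 : MvPolynomial (Fin m) F) ⊗ₜ[F] (uGen j : ExtAlg F m)) * PLS a S
      - ((-1 : F) ^ cpos j S) •
        (((X j : MvPolynomial (Fin m) F) ⊗ₜ[F] (1 : ExtAlg F m)) * PLS a (insert j S)) := by
  obtain ⟨hjL, hjS⟩ := Finset.mem_sdiff.mp hjmem
  have hdiff : lsupp a \ insert j S = (lsupp a \ S).erase j := by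
    ext x
    simp only [Finset.mem_sdiff, Finset.mem_erase, Finset.mem_insert, not_or]
    tauto
  set E := (lsupp a \ S).erase j with hE
  have hins : lsupp a \ S = insert j E := (Finset.insert_erase hjmem).symm
  -- expand products into sums
  rw [QLS, PLS, PLS, Finset.mul_sum, Finset.mul_sum, hdiff, Finset.smul_sum]
  simp only [Algebra.TensorProduct.tmul_mul_tmul, one_mul, mul_one]
  rw [hins, Finset.sum_insert (Finset.notMem_erase j _), Finset.sum_insert (Finset.notMem_erase j _)]
  -- the j-th term
  have hterm_j :
      (C ((-1 : F) ^ (@Finset.filter _ (fun x => x < j) (Classical.decPred _) S).card * a j) *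
          tMon (lsupp a \ insert j S)) ⊗ₜ[F] uM (insert j S)
        = (C (a j) * tMon (lsupp a \ insert j S)) ⊗ₜ[F]
            ((uGen j : ExtAlg F m) *
              (uM S - ∑ s ∈ Finset.range (S.sort (· ≤ ·)).length,
                uList ((S.sort (· ≤ ·)).set s j))) := by
    rw [ext_j hjS, TensorProduct.tmul_smul, map_mul, mul_assoc, ← smul_eq_C_mul, TensorProduct.smul_tmul']
    rfl
  -- the other terms
  have hterm : ∀ i ∈ E,
      (C ((-1 : F) ^ (@Finset.filter _ (fun x => x < i) (Classical.decPred _) S).card * a i) *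
          tMon (lsupp a \ insert i S)) ⊗ₜ[F] uM (insert i S)
        = (C (a i) * tMon (lsupp a \ insert i S)) ⊗ₜ[F]
            ((uGen j : ExtAlg F m) *
              (uM S - ∑ s ∈ Finset.range (S.sort (· ≤ ·)).length,
                uList ((S.sort (· ≤ ·)).set s i)))
          - ((-1 : F) ^ cpos j S) •
            ((X j * (C (a i) * tMon (lsupp a \ insert i (insert j S)))) ⊗ₜ[F]
              (uM (insert j S) - ∑ s ∈ Finset.range ((insert j S).sort (· ≤ ·)).length,
                uList (((insert j S).sort (· ≤ ·)).set s i))) := by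
    intro i hiE
    obtain ⟨hij, hiLS⟩ := Finset.mem_erase.mp hiE
    obtain ⟨hiL, hiS⟩ := Finset.mem_sdiff.mp hiLS
    have hpoly : X j * (C (a i) * tMon (lsupp a \ insert i (insert j S)))
        = C (a i) * tMon (lsupp a \ insert i S) := by
      rw [mul_left_comm]
      congr 1
      rw [tMon, tMon, ← Finset.prod_insert (by simp : j ∉ lsupp a \ insert i (insert j S))]
      congr 1
      ext x
      simp only [Finset.mem_insert, Finset.mem_sdiff, Finset.mem_insert, not_or]
      constructor
      · rintro (rfl | ⟨hx, hxi, hxj, hxS⟩)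
        · exact ⟨hjL, fun h => hij h.symm, hjS⟩
        · exact ⟨hx, hxi, hxS⟩
      · rintro ⟨hx, hxi, hxS⟩
        by_cases hxj : x = j
        · exact Or.inl hxj
        · exact Or.inr ⟨hx, hxi, hxj, hxS⟩
    rw [hpoly, ← TensorProduct.tmul_smul, ← TensorProduct.tmul_sub,
      main_ext hjS hiS hij, map_mul, mul_assoc, ← smul_eq_C_mul]
    exact TensorProduct.smul_tmul _ _ _
  rw [hterm_j, Finset.sum_congr rfl hterm, Finset.sum_sub_distrib]
  abel

end Aux

/-- For every linear relation `L` and every `S ⊆ |L|`, the element `Q_{L,S}`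
lies in the ideal of `Ξ` generated by the `P_{L,T}` with `T ⊆ |L|`. -/
theorem statement4
    (F : Type) [Field F] (n m : ℕ) (hn : 0 < n) (hm : 0 < m)
    (c : Fin m → Fin n → F) (hc : ∀ i, c i ≠ 0)
    (a : Fin m → F) (ha : IsLinRel c a)
    (S : Finset (Fin m)) (hS : S ⊆ lsupp a) :
    QLS a S ∈
      Ideal.span {ξ : XiAlg F m | ∃ T : Finset (Fin m), T ⊆ lsupp a ∧ ξ = PLS a T} := by
  by_cases hne : (lsupp a \ S).Nonempty
  · obtain ⟨j, hjmem⟩ := hne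
    obtain ⟨hjL, hjS⟩ := Finset.mem_sdiff.mp hjmem
    rw [key_identity a S hS hjmem]
    refine Submodule.sub_mem _ ?_ ?_
    · exact Ideal.mul_mem_left _ _ (Ideal.subset_span ⟨S, hS, rfl⟩)
    · exact Submodule.smul_of_tower_mem _ _
        (Ideal.mul_mem_left _ _
          (Ideal.subset_span ⟨insert j S, Finset.insert_subset hjL hS, rfl⟩))
  · rw [QLS, Finset.not_nonempty_iff_eq_empty.mp hne, Finset.sum_empty]
    exact Ideal.zero_mem _
end
end

section
/- Let V ⊆ F^n be a special subspace. Then, under the surjective F-algebra homomorphism π : F[t_1, …, t_m] → F[t_j : j ∈ S_V] with π(t_i) = 0 for i ∉ S_V and π(t_j) = t_j for j ∈ S_V, one has π^{-1}(I_V) = I + (t_i : i ∉ S_V); equivalently, π induces an isomorphism of F-algebras F[t_1, …, t_m]/(I + (t_i : i ∉ S_V)) ≅ F[t_j : j ∈ S_V]/I_V. -/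
open scoped TensorProduct
open MvPolynomial

noncomputable section

/-- The linear functional on `F^n` corresponding to `z_i`. -/
def lfun {F : Type} [Field F] {n m : ℕ} (c : Fin m → Fin n → F) (i : Fin m) :
    (Fin n → F) →ₗ[F] F :=
  ∑ j, c i j • (LinearMap.proj j : (Fin n → F) →ₗ[F] F)

/-- A subspace `V ⊆ F^n` is special if it is an intersection of hyperplanes `ker z_i`. -/
def IsSpecial {F : Type} [Field F] {n m : ℕ} (c : Fin m → Fin n → F)
    (V : Submodule F (Fin n → F)) : Prop :=
  ∃ S₀ : Finset (Fin m), V = ⨅ i ∈ S₀, LinearMap.ker (lfun c i)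

/-- `S_V = {i : V ⊆ ker z_i}`. -/
def SV {F : Type} [Field F] {n m : ℕ} (c : Fin m → Fin n → F)
    (V : Submodule F (Fin n → F)) : Finset (Fin m) :=
  @Finset.filter _ (fun i => V ≤ LinearMap.ker (lfun c i)) (Classical.decPred _) Finset.univ



/-- uniqueness of inverses -/
lemma st5_inv_unique {S : Type*} [CommMonoid S] {a b b' : S} (h : a * b = 1)
    (h' : a * b' = 1) : b = b' := by
  calc b = b * (a * b') := by rw [h', mul_one]
  _ = b' * (a * b) := by ac_rfl
  _ = b' := by rw [h, mul_one]

/-- a ring hom out of a localization that agrees with an injective map on the base is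
injective -/
lemma st5_loc_inj {A S P : Type*} [CommRing A] [CommRing S] [CommRing P] [Algebra A S]
    {M : Submonoid A} [IsLocalization M S] (χ : S →+* P) (g : A →+* P)
    (hg : Function.Injective g) (hcomp : ∀ a, χ (algebraMap A S a) = g a) :
    Function.Injective χ := by
  rw [injective_iff_map_eq_zero]
  intro z hz
  obtain ⟨⟨a, s⟩, hs⟩ := IsLocalization.surj M z
  have h2 : χ z * χ (algebraMap A S s) = χ (algebraMap A S a) := by
    rw [← map_mul, hs]
  rw [hz, zero_mul, hcomp] at h2
  have ha : a = 0 := hg (by rw [← h2, map_zero])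
  rw [ha, map_zero] at hs
  exact ((IsLocalization.map_units S s).mul_left_eq_zero).mp hs

lemma st5_lfun_apply {F : Type} [Field F] {n m : ℕ} (c : Fin m → Fin n → F) (i : Fin m)
    (x : Fin n → F) : lfun c i x = ∑ j, c i j * x j := by
  simp [lfun, smul_eq_mul]

lemma st5_eval_zpoly {F : Type} [Field F] {n m : ℕ} (c : Fin m → Fin n → F) (i : Fin m)
    (x : Fin n → F) : eval x (zpoly c i) = ∑ j, c i j * x j := by
  simp [zpoly]

lemma st5_zpoly_ne_zero {F : Type} [Field F] {n m : ℕ} (c : Fin m → Fin n → F) (i : Fin m)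
    (hc : c i ≠ 0) : zpoly c i ≠ 0 := by
  obtain ⟨j, hj⟩ := Function.ne_iff.mp hc
  simp only [Pi.zero_apply] at hj
  intro h
  apply hj
  have := congrArg (eval (Pi.single j 1)) h
  rw [st5_eval_zpoly, map_zero] at this
  rw [← this]
  rw [Finset.sum_eq_single j]
  · simp
  · intro b _ hb; simp [Pi.single_eq_of_ne hb]
  · simp

set_option maxHeartbeats 1000000
set_option synthInstance.maxHeartbeats 1000000

lemma st5_sigma {F : Type} [Field F] {n m k : ℕ} (c : Fin m → Fin n → F)
    (bv : Fin k → Fin n → F) {L : Type} [CommRing L]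
    (gA : MvPolynomial (Fin n ⊕ Fin k) F →+* L) (e : L) (i : Fin m) :
    eval₂ (gA.comp (MvPolynomial.C : F →+* MvPolynomial (Fin n ⊕ Fin k) F))
      (fun j => e * gA (∑ r, MvPolynomial.C (bv r j) * X (Sum.inr r)) + gA (X (Sum.inl j)))
      (zpoly c i)
    = e * gA (∑ r, MvPolynomial.C (∑ j, c i j * bv r j) * X (Sum.inr r))
      + gA (rename Sum.inl (zpoly c i)) := by
  have hrn : (rename Sum.inl (zpoly c i) : MvPolynomial (Fin n ⊕ Fin k) F)
      = ∑ j, MvPolynomial.C (c i j) * X (Sum.inl j) := by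
    simp [zpoly]
  rw [hrn, zpoly, eval₂_sum]
  simp only [eval₂_mul, eval₂_C, eval₂_X, RingHom.coe_comp, Function.comp_apply]
  simp only [mul_add, Finset.sum_add_distrib]
  congr 1
  · have h1 : ∀ j, gA (MvPolynomial.C (c i j)) *
        (e * gA (∑ r, MvPolynomial.C (bv r j) * X (Sum.inr r)))
        = e * gA (∑ r, MvPolynomial.C (c i j * bv r j) * X (Sum.inr r)) := by
      intro j
      rw [mul_left_comm, ← map_mul, Finset.mul_sum]
      congr 2
      apply Finset.sum_congr rfl
      intro r _
      rw [← mul_assoc, ← MvPolynomial.C_mul]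
    rw [Finset.sum_congr rfl (fun j _ => h1 j), ← Finset.mul_sum]
    congr 1
    rw [← map_sum gA]
    congr 1
    rw [Finset.sum_comm]
    apply Finset.sum_congr rfl
    intro r _
    rw [← Finset.sum_mul, map_sum]
  · rw [map_sum gA]
    exact Finset.sum_congr rfl fun j _ => (map_mul gA _ _).symm

/-- The "evaluation at ε = 0" argument. -/
lemma st5_eps {F : Type} [Field F] {m : ℕ} {K₀ : Type} [Field K₀] (gK₀ : F →+* K₀)
    (S : Finset (Fin m)) (Z W : Fin m → K₀)
    (hZ : ∀ i, Z i ≠ 0) (hW0 : ∀ i ∈ S, W i = 0) (hWne : ∀ i, i ∉ S → W i ≠ 0)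
    (u : Fin m → FractionRing (Polynomial K₀))
    (hu : ∀ i, algebraMap (Polynomial K₀) (FractionRing (Polynomial K₀))
          (Polynomial.C (W i) + Polynomial.X * Polynomial.C (Z i)) * u i
        = algebraMap (Polynomial K₀) (FractionRing (Polynomial K₀)) Polynomial.X)
    (p : MvPolynomial (Fin m) F)
    (hp : eval₂ ((algebraMap (Polynomial K₀) (FractionRing (Polynomial K₀))).comp
        ((Polynomial.C : K₀ →+* Polynomial K₀).comp gK₀)) u p = 0) :
    eval₂ gK₀ (fun i => if i ∈ S then (Z i)⁻¹ else 0) p = 0 := by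
  classical
  set ιP : Polynomial K₀ →+* FractionRing (Polynomial K₀) :=
    algebraMap (Polynomial K₀) (FractionRing (Polynomial K₀)) with hιP
  have hιPinj : Function.Injective ιP := IsFractionRing.injective (Polynomial K₀) (FractionRing (Polynomial K₀))
  set M : Submonoid (Polynomial K₀) :=
    { carrier := {f : Polynomial K₀ | Polynomial.eval 0 f ≠ 0}
      mul_mem' := by
        intro a b ha hb
        simp only [Set.mem_setOf_eq] at *
        rw [Polynomial.eval_mul]
        exact mul_ne_zero ha hb
      one_mem' := by simp } with hM
  have hMmem : ∀ f : Polynomial K₀, f ∈ M ↔ Polynomial.eval 0 f ≠ 0 := fun f => Iff.rfl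
  have hMunitL : ∀ y : M, IsUnit (ιP y) := by
    intro y
    rw [isUnit_iff_ne_zero]
    intro h
    have h0 : ιP y.1 = ιP 0 := by rw [h, map_zero]
    have h1 : (y : Polynomial K₀) = 0 := hιPinj h0
    exact ((hMmem _).mp y.2) (by rw [h1]; simp)
  set jOL : Localization M →+* FractionRing (Polynomial K₀) := IsLocalization.lift (M := M) (S := Localization M) hMunitL with hjOL
  have hja : ∀ a : Polynomial K₀, jOL (algebraMap (Polynomial K₀) (Localization M) a) = ιP a := fun a => IsLocalization.lift_eq (M := M) (S := Localization M) hMunitL a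
  have hjinj : Function.Injective jOL := st5_loc_inj (M := M) jOL ιP hιPinj hja
  have hev0u : ∀ y : M, IsUnit ((Polynomial.evalRingHom (0 : K₀)) y) := by
    intro y
    rw [isUnit_iff_ne_zero]
    exact (hMmem _).mp y.2
  set ev0 : Localization M →+* K₀ := IsLocalization.lift (M := M) (S := Localization M) hev0u with hev0
  have heva : ∀ a : Polynomial K₀, ev0 (algebraMap (Polynomial K₀) (Localization M) a) = Polynomial.eval 0 a :=
    fun a => IsLocalization.lift_eq (M := M) (S := Localization M) hev0u a
  have hεne : ιP Polynomial.X ≠ 0 := fun hh =>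
    Polynomial.X_ne_zero (hιPinj (by rw [hh, map_zero]))
  have hCZM : ∀ i, Polynomial.C (Z i) ∈ M := by
    intro i; rw [hMmem]; simpa using hZ i
  have hqM : ∀ i, i ∉ S → (Polynomial.C (W i) + Polynomial.X * Polynomial.C (Z i)) ∈ M := by
    intro i hi
    have he : Polynomial.eval 0 (Polynomial.C (W i) + Polynomial.X * Polynomial.C (Z i)) = W i := by
      simp
    rw [hMmem, he]
    exact hWne i hi
  set o : Fin m → Localization M := fun i =>
    if h : i ∈ S then IsLocalization.mk' (Localization M) (1 : Polynomial K₀) ⟨_, hCZM i⟩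
    else IsLocalization.mk' (Localization M) Polynomial.X ⟨_, hqM i h⟩ with ho
  have hjo : ∀ i, jOL (o i) = u i := by
    intro i
    by_cases h : i ∈ S
    · have h1 : jOL (o i) * ιP (Polynomial.C (Z i)) = 1 := by
        rw [ho]; simp only [dif_pos h]
        rw [← hja, ← map_mul, IsLocalization.mk'_spec, map_one, map_one]
      have h2 : ιP (Polynomial.C (Z i)) * u i = 1 := by
        have h3 := hu i
        rw [hW0 i h, map_zero, zero_add, map_mul] at h3
        apply mul_left_cancel₀ hεne
        rw [mul_one, ← mul_assoc, h3]
      exact st5_inv_unique (by rw [mul_comm] at h1; exact h1) h2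
    · have h1 : jOL (o i) * ιP (Polynomial.C (W i) + Polynomial.X * Polynomial.C (Z i))
          = ιP Polynomial.X := by
        rw [ho]; simp only [dif_neg h]
        rw [← hja, ← map_mul, IsLocalization.mk'_spec, hja]
      have h2 := hu i
      have hqne : ιP (Polynomial.C (W i) + Polynomial.X * Polynomial.C (Z i)) ≠ 0 := by
        intro hh
        have h1' : Polynomial.C (W i) + Polynomial.X * Polynomial.C (Z i) = 0 :=
          hιPinj (by rw [hh, map_zero])
        exact ((hMmem _).mp (hqM i h)) (by rw [h1']; simp)
      apply mul_left_cancel₀ hqne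
      rw [mul_comm _ (jOL (o i)), h1, h2]
  have h2 : eval₂ ((algebraMap (Polynomial K₀) (Localization M)).comp
      ((Polynomial.C : K₀ →+* Polynomial K₀).comp gK₀)) o p = 0 := by
    apply hjinj
    rw [map_zero, eval₂_comp_left jOL]
    have e1 : jOL.comp ((algebraMap (Polynomial K₀) (Localization M)).comp
        ((Polynomial.C : K₀ →+* Polynomial K₀).comp gK₀))
        = ιP.comp ((Polynomial.C : K₀ →+* Polynomial K₀).comp gK₀) :=
      RingHom.ext fun a => hja _
    rw [e1, show (⇑jOL ∘ o) = u from funext hjo]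
    exact hp
  have hev0o : ∀ i, ev0 (o i) = if i ∈ S then (Z i)⁻¹ else 0 := by
    intro i
    by_cases h : i ∈ S
    · rw [if_pos h]
      have h1 : ev0 (o i) * Polynomial.eval 0 (Polynomial.C (Z i)) = 1 := by
        rw [ho]; simp only [dif_pos h]
        rw [← heva, ← map_mul, IsLocalization.mk'_spec, heva]
        simp
      rw [Polynomial.eval_C] at h1
      exact eq_inv_of_mul_eq_one_left h1
    · rw [if_neg h]
      have h1 : ev0 (o i) * Polynomial.eval 0
          (Polynomial.C (W i) + Polynomial.X * Polynomial.C (Z i))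
          = Polynomial.eval 0 (Polynomial.X : Polynomial K₀) := by
        rw [ho]; simp only [dif_neg h]
        rw [← heva, ← map_mul, IsLocalization.mk'_spec, heva]
      have he : Polynomial.eval (0 : K₀)
          (Polynomial.C (W i) + Polynomial.X * Polynomial.C (Z i)) = W i := by simp
      rw [he, Polynomial.eval_X] at h1
      rcases mul_eq_zero.mp h1 with h2 | h2
      · exact h2
      · exact absurd h2 (hWne i h)
  have h3 := congrArg ev0 h2
  rw [map_zero, eval₂_comp_left ev0] at h3
  have e2 : ev0.comp ((algebraMap (Polynomial K₀) (Localization M)).comp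
      ((Polynomial.C : K₀ →+* Polynomial K₀).comp gK₀)) = gK₀ := by
    apply RingHom.ext; intro a
    show ev0 (algebraMap (Polynomial K₀) (Localization M) (Polynomial.C (gK₀ a))) = gK₀ a
    rw [heva, Polynomial.eval_C]
  rw [e2, show (⇑ev0 ∘ o) = (fun i => if i ∈ S then (Z i)⁻¹ else 0) from funext hev0o] at h3
  exact h3


lemma st5_key {F : Type} [Field F] {n m : ℕ} (c : Fin m → Fin n → F) (hc : ∀ i, c i ≠ 0)
    (V : Submodule F (Fin n → F))
    (R : Type) [CommRing R] [Algebra F R] [Algebra (MvPolynomial (Fin n) F) R]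
    [IsScalarTower F (MvPolynomial (Fin n) F) R]
    [IsLocalization.Away (∏ i, zpoly c i) R]
    (zinv : Fin m → R)
    (hzinv : ∀ i, algebraMap (MvPolynomial (Fin n) F) R (zpoly c i) * zinv i = 1)
    (R' : Type) [CommRing R'] [Algebra F R'] [Algebra (MvPolynomial (Fin n) F) R']
    [IsScalarTower F (MvPolynomial (Fin n) F) R']
    [IsLocalization.Away (∏ j ∈ SV c V, zpoly c j) R']
    (zinvV : Fin m → R')
    (hzinvV : ∀ j ∈ SV c V, algebraMap (MvPolynomial (Fin n) F) R' (zpoly c j) * zinvV j = 1)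
    (p : MvPolynomial (Fin m) F) (hp : MvPolynomial.aeval zinv p = 0) :
    MvPolynomial.aeval (fun i : Fin m => if i ∈ SV c V then zinvV i else 0) p = 0 := by
  classical
  haveI hfin : Module.Finite F ↥V := Module.Finite.iff_fg.mpr (IsNoetherian.noetherian V)
  obtain ⟨k, ⟨b⟩⟩ : ∃ k : ℕ, Nonempty (Module.Basis (Fin k) F ↥V) :=
    ⟨Module.finrank F ↥V, ⟨Module.finBasis F ↥V⟩⟩
  have hinjA : Function.Injective (algebraMap (MvPolynomial (Fin n ⊕ Fin k) F) (FractionRing (MvPolynomial (Fin n ⊕ Fin k) F))) :=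
    IsFractionRing.injective _ _
  set zx : Fin m → MvPolynomial (Fin n ⊕ Fin k) F := fun i => rename Sum.inl (zpoly c i) with hzxd
  set Zx : Fin m → FractionRing (MvPolynomial (Fin n ⊕ Fin k) F) := fun i => algebraMap _ _ (zx i) with hZxd
  set wp : Fin m → MvPolynomial (Fin n ⊕ Fin k) F :=
    fun i => ∑ r, MvPolynomial.C (lfun c i ((b r : Fin n → F))) * X (Sum.inr r) with hwpd
  set Wv : Fin m → FractionRing (MvPolynomial (Fin n ⊕ Fin k) F) := fun i => algebraMap _ _ (wp i) with hWvd
  have hzxne : ∀ i, zx i ≠ 0 := by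
    intro i h
    apply st5_zpoly_ne_zero c i (hc i)
    apply MvPolynomial.rename_injective (Sum.inl : Fin n → Fin n ⊕ Fin k) Sum.inl_injective
    rw [map_zero]
    simpa [hzxd] using h
  have hZxne : ∀ i, Zx i ≠ 0 := by
    intro i h
    exact hzxne i (hinjA (by rw [map_zero]; simpa [hZxd] using h))
  have hmemSV : ∀ i, i ∈ SV c V ↔ V ≤ LinearMap.ker (lfun c i) := by
    intro i
    constructor
    · intro h; exact (Finset.mem_filter.mp h).2
    · intro h; exact Finset.mem_filter.mpr ⟨Finset.mem_univ i, h⟩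
  have hW0 : ∀ i ∈ SV c V, Wv i = 0 := by
    intro i hi
    have hle : V ≤ LinearMap.ker (lfun c i) := (hmemSV i).mp hi
    have hwz : wp i = 0 := by
      rw [hwpd]
      simp only []
      apply Finset.sum_eq_zero
      intro r _
      have h0 : lfun c i ((b r : Fin n → F)) = 0 := LinearMap.mem_ker.mp (hle (b r).2)
      rw [h0, map_zero, zero_mul]
    rw [hWvd]
    simp only [hwz, map_zero]
  have hWne : ∀ i, i ∉ SV c V → Wv i ≠ 0 := by
    intro i hi h
    have hwp0 : wp i = 0 := hinjA (by rw [map_zero]; simpa [hWvd] using h)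
    have hall : ∀ r, lfun c i ((b r : Fin n → F)) = 0 := by
      intro r
      have hs : (∑ r', MvPolynomial.C (lfun c i ((b r' : Fin n → F))) * X (Sum.inr r')
          : MvPolynomial (Fin n ⊕ Fin k) F) = 0 := by
        have h' := hwp0
        rw [hwpd] at h'
        simpa using h' 
      have hev := congrArg (eval (Sum.elim (fun _ : Fin n => (0 : F))
        (fun r' : Fin k => if r' = r then 1 else 0))) hs
      rw [map_zero, map_sum] at hev
      simpa [mul_ite, Finset.sum_ite_eq'] using hev
    apply hi
    rw [hmemSV]
    have hg : ((lfun c i).comp V.subtype : ↥V →ₗ[F] F) = 0 :=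
      b.ext fun r => by simpa using hall r
    intro v hv
    rw [LinearMap.mem_ker]
    have h2 := LinearMap.congr_fun hg ⟨v, hv⟩
    simpa using h2
  have hιPinj : Function.Injective (algebraMap (Polynomial (FractionRing (MvPolynomial (Fin n ⊕ Fin k) F))) (FractionRing (Polynomial (FractionRing (MvPolynomial (Fin n ⊕ Fin k) F))))) := IsFractionRing.injective _ _
  have hεne : (algebraMap (Polynomial (FractionRing (MvPolynomial (Fin n ⊕ Fin k) F))) (FractionRing (Polynomial (FractionRing (MvPolynomial (Fin n ⊕ Fin k) F))))) Polynomial.X ≠ 0 := by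
    intro h
    exact Polynomial.X_ne_zero (hιPinj (by rw [map_zero]; exact h))
  set ιL : MvPolynomial (Fin n ⊕ Fin k) F →+* FractionRing (Polynomial (FractionRing (MvPolynomial (Fin n ⊕ Fin k) F))) :=
    ((algebraMap (Polynomial (FractionRing (MvPolynomial (Fin n ⊕ Fin k) F))) (FractionRing (Polynomial (FractionRing (MvPolynomial (Fin n ⊕ Fin k) F))))).comp (Polynomial.C : FractionRing (MvPolynomial (Fin n ⊕ Fin k) F) →+* Polynomial (FractionRing (MvPolynomial (Fin n ⊕ Fin k) F)))).comp
      (algebraMap (MvPolynomial (Fin n ⊕ Fin k) F) (FractionRing (MvPolynomial (Fin n ⊕ Fin k) F))) with hιLd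
  have hιC : ∀ a : MvPolynomial (Fin n ⊕ Fin k) F, ιL a
      = algebraMap (Polynomial (FractionRing (MvPolynomial (Fin n ⊕ Fin k) F))) (FractionRing (Polynomial (FractionRing (MvPolynomial (Fin n ⊕ Fin k) F)))) (Polynomial.C (algebraMap (MvPolynomial (Fin n ⊕ Fin k) F) (FractionRing (MvPolynomial (Fin n ⊕ Fin k) F)) a)) := fun a => rfl
  set εinv : FractionRing (Polynomial (FractionRing (MvPolynomial (Fin n ⊕ Fin k) F))) := ((algebraMap (Polynomial (FractionRing (MvPolynomial (Fin n ⊕ Fin k) F))) (FractionRing (Polynomial (FractionRing (MvPolynomial (Fin n ⊕ Fin k) F))))) Polynomial.X)⁻¹ with hεinvd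
  set σ : MvPolynomial (Fin n) F →+* FractionRing (Polynomial (FractionRing (MvPolynomial (Fin n ⊕ Fin k) F))) :=
    eval₂Hom (ιL.comp (MvPolynomial.C : F →+* MvPolynomial (Fin n ⊕ Fin k) F))
      (fun j => εinv * ιL (∑ r, MvPolynomial.C ((b r : Fin n → F) j) * X (Sum.inr r))
        + ιL (X (Sum.inl j))) with hσd
  have hσz : ∀ i, σ (zpoly c i) = εinv * ιL (wp i) + ιL (zx i) := by
    intro i
    have hcomp := st5_sigma c (fun r => ((b r : Fin n → F))) ιL εinv i
    have hσeq : σ (zpoly c i) = eval₂ (ιL.comp (MvPolynomial.C : F →+* MvPolynomial (Fin n ⊕ Fin k) F))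
      (fun j => εinv * ιL (∑ r, MvPolynomial.C ((b r : Fin n → F) j) * X (Sum.inr r))
        + ιL (X (Sum.inl j))) (zpoly c i) := rfl
    have hwp' : wp i = ∑ r, MvPolynomial.C (∑ j, c i j * (b r : Fin n → F) j) * X (Sum.inr r) := by
      simp only [hwpd]
      apply Finset.sum_congr rfl
      intro r _
      rw [st5_lfun_apply]
    have hzx' : zx i = rename Sum.inl (zpoly c i) := by simp only [hzxd]
    rw [hσeq, hcomp, hwp', hzx']
  have hεσ : ∀ i, (algebraMap (Polynomial (FractionRing (MvPolynomial (Fin n ⊕ Fin k) F))) (FractionRing (Polynomial (FractionRing (MvPolynomial (Fin n ⊕ Fin k) F))))) Polynomial.X * σ (zpoly c i)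
      = algebraMap (Polynomial (FractionRing (MvPolynomial (Fin n ⊕ Fin k) F))) (FractionRing (Polynomial (FractionRing (MvPolynomial (Fin n ⊕ Fin k) F)))) (Polynomial.C (Wv i) + Polynomial.X * Polynomial.C (Zx i)) := by
    intro i
    rw [hσz i, mul_add, ← mul_assoc, hεinvd, mul_inv_cancel₀ hεne, one_mul]
    rw [map_add, map_mul, hιC, hιC]
  have hqne : ∀ i, (Polynomial.C (Wv i) + Polynomial.X * Polynomial.C (Zx i) : Polynomial (FractionRing (MvPolynomial (Fin n ⊕ Fin k) F))) ≠ 0 := by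
    intro i h
    have hco := congrArg (fun q : Polynomial (FractionRing (MvPolynomial (Fin n ⊕ Fin k) F)) => Polynomial.coeff q 1) h
    simp only [Polynomial.coeff_add, Polynomial.coeff_C, Polynomial.coeff_zero] at hco
    rw [show ((1:ℕ) = 0 + 1) from rfl, Polynomial.coeff_X_mul, Polynomial.coeff_C_zero] at hco
    simp at hco
    exact hZxne i hco
  have hQne : ∀ i, (algebraMap (Polynomial (FractionRing (MvPolynomial (Fin n ⊕ Fin k) F))) (FractionRing (Polynomial (FractionRing (MvPolynomial (Fin n ⊕ Fin k) F)))))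
      (Polynomial.C (Wv i) + Polynomial.X * Polynomial.C (Zx i)) ≠ 0 := by
    intro i h
    exact hqne i (hιPinj (by rw [map_zero]; exact h))
  have hσzne : ∀ i, σ (zpoly c i) ≠ 0 := by
    intro i h
    exact hQne i (by rw [← hεσ i, h, mul_zero])
  have hUnit : IsUnit (σ (∏ i, zpoly c i)) := by
    rw [isUnit_iff_ne_zero, map_prod]
    exact Finset.prod_ne_zero_iff.mpr fun i _ => hσzne i
  set σR : R →+* FractionRing (Polynomial (FractionRing (MvPolynomial (Fin n ⊕ Fin k) F))) := IsLocalization.Away.lift (∏ i, zpoly c i) hUnit with hσRd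
  have hσRa : ∀ a : MvPolynomial (Fin n) F, σR (algebraMap _ R a) = σ a :=
    fun a => IsLocalization.Away.lift_eq (∏ i, zpoly c i) hUnit a
  set u : Fin m → FractionRing (Polynomial (FractionRing (MvPolynomial (Fin n ⊕ Fin k) F))) := fun i => σR (zinv i) with hud
  have hu : ∀ i, (algebraMap (Polynomial (FractionRing (MvPolynomial (Fin n ⊕ Fin k) F))) (FractionRing (Polynomial (FractionRing (MvPolynomial (Fin n ⊕ Fin k) F)))))
      (Polynomial.C (Wv i) + Polynomial.X * Polynomial.C (Zx i)) * u i
      = algebraMap (Polynomial (FractionRing (MvPolynomial (Fin n ⊕ Fin k) F))) (FractionRing (Polynomial (FractionRing (MvPolynomial (Fin n ⊕ Fin k) F)))) Polynomial.X := by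
    intro i
    have hui : u i = σR (zinv i) := by rw [hud]
    have h1 : σ (zpoly c i) * u i = 1 := by
      rw [hui, ← hσRa, ← map_mul, hzinv i, map_one]
    rw [← hεσ i, mul_assoc, h1, mul_one]
  have h1 : eval₂ ((algebraMap (Polynomial (FractionRing (MvPolynomial (Fin n ⊕ Fin k) F))) (FractionRing (Polynomial (FractionRing (MvPolynomial (Fin n ⊕ Fin k) F))))).comp ((Polynomial.C : FractionRing (MvPolynomial (Fin n ⊕ Fin k) F) →+* Polynomial (FractionRing (MvPolynomial (Fin n ⊕ Fin k) F))).comp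
      ((algebraMap (MvPolynomial (Fin n ⊕ Fin k) F) (FractionRing (MvPolynomial (Fin n ⊕ Fin k) F))).comp (MvPolynomial.C : F →+* MvPolynomial (Fin n ⊕ Fin k) F)))) u p = 0 := by
    have h0 : σR (MvPolynomial.aeval zinv p) = 0 := by rw [hp, map_zero]
    rw [MvPolynomial.aeval_def, eval₂_comp_left σR] at h0
    have e1 : σR.comp (algebraMap F R) = (algebraMap (Polynomial (FractionRing (MvPolynomial (Fin n ⊕ Fin k) F))) (FractionRing (Polynomial (FractionRing (MvPolynomial (Fin n ⊕ Fin k) F))))).comp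
        ((Polynomial.C : FractionRing (MvPolynomial (Fin n ⊕ Fin k) F) →+* Polynomial (FractionRing (MvPolynomial (Fin n ⊕ Fin k) F))).comp
        ((algebraMap (MvPolynomial (Fin n ⊕ Fin k) F) (FractionRing (MvPolynomial (Fin n ⊕ Fin k) F))).comp (MvPolynomial.C : F →+* MvPolynomial (Fin n ⊕ Fin k) F))) := by
      rw [IsScalarTower.algebraMap_eq F (MvPolynomial (Fin n) F) R]
      apply RingHom.ext
      intro a
      rw [RingHom.comp_apply, RingHom.comp_apply, hσRa, MvPolynomial.algebraMap_eq]
      have : σ (MvPolynomial.C a) = ιL (MvPolynomial.C a) := by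
        rw [hσd]
        exact eval₂Hom_C _ _ a
      rw [this, hιC]
      rfl
    rw [e1] at h0
    have e2 : (⇑σR ∘ zinv) = u := by
      funext i
      rw [hud]
      rfl
    rw [e2] at h0
    exact h0
  have h2 := st5_eps ((algebraMap (MvPolynomial (Fin n ⊕ Fin k) F) (FractionRing (MvPolynomial (Fin n ⊕ Fin k) F))).comp (MvPolynomial.C : F →+* MvPolynomial (Fin n ⊕ Fin k) F))
    (SV c V) Zx Wv hZxne hW0 hWne u hu p h1
  -- transfer into R'
  set ι' : MvPolynomial (Fin n) F →+* FractionRing (MvPolynomial (Fin n ⊕ Fin k) F) :=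
    (algebraMap (MvPolynomial (Fin n ⊕ Fin k) F) (FractionRing (MvPolynomial (Fin n ⊕ Fin k) F))).comp
      (rename (Sum.inl : Fin n → Fin n ⊕ Fin k) : MvPolynomial (Fin n) F →ₐ[F] MvPolynomial (Fin n ⊕ Fin k) F).toRingHom
    with hι'd
  have hι'inj : Function.Injective ι' := by
    apply Function.Injective.comp hinjA
    exact MvPolynomial.rename_injective _ Sum.inl_injective
  have hι'z : ∀ i, ι' (zpoly c i) = Zx i := by
    intro i
    rw [hZxd, hzxd]
    rfl
  have hU' : IsUnit (ι' (∏ j ∈ SV c V, zpoly c j)) := by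
    rw [isUnit_iff_ne_zero, map_prod]
    apply Finset.prod_ne_zero_iff.mpr
    intro i _
    rw [hι'z i]
    exact hZxne i
  set φ : R' →+* FractionRing (MvPolynomial (Fin n ⊕ Fin k) F) := IsLocalization.Away.lift (∏ j ∈ SV c V, zpoly c j) hU' with hφd
  have hφa : ∀ a : MvPolynomial (Fin n) F, φ (algebraMap _ R' a) = ι' a :=
    fun a => IsLocalization.Away.lift_eq (∏ j ∈ SV c V, zpoly c j) hU' a
  have hφinj : Function.Injective φ :=
    st5_loc_inj (M := Submonoid.powers (∏ j ∈ SV c V, zpoly c j)) φ ι' hι'inj hφa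
  have hφz : ∀ i ∈ SV c V, φ (zinvV i) = (Zx i)⁻¹ := by
    intro i hi
    have hzz : Zx i * φ (zinvV i) = 1 := by
      rw [← hι'z i, ← hφa, ← map_mul, hzinvV i hi, map_one]
    exact eq_inv_of_mul_eq_one_right hzz
  apply hφinj
  rw [map_zero, MvPolynomial.aeval_def, eval₂_comp_left φ]
  have e2 : φ.comp (algebraMap F R')
      = (algebraMap (MvPolynomial (Fin n ⊕ Fin k) F) (FractionRing (MvPolynomial (Fin n ⊕ Fin k) F))).comp (MvPolynomial.C : F →+* MvPolynomial (Fin n ⊕ Fin k) F) := by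
    rw [IsScalarTower.algebraMap_eq F (MvPolynomial (Fin n) F) R']
    apply RingHom.ext
    intro a
    rw [RingHom.comp_apply, RingHom.comp_apply, hφa, MvPolynomial.algebraMap_eq]
    rw [hι'd]
    simp [rename_C]
  have e3 : (⇑φ ∘ fun i => if i ∈ SV c V then zinvV i else 0)
      = fun i => if i ∈ SV c V then (Zx i)⁻¹ else 0 := by
    funext i
    by_cases hi : i ∈ SV c V
    · simp only [Function.comp_apply, if_pos hi]
      exact hφz i hi
    · simp only [Function.comp_apply, if_neg hi, map_zero]
  rw [e2, e3]
  exact h2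

set_option synthInstance.maxHeartbeats 1000000
set_option maxHeartbeats 1000000

/-- For a special subspace `V`, under the projection
`π : F[t₁,…,t_m] → F[t_j : j ∈ S_V]` (killing the `t_i` with `i ∉ S_V`), one has
`π⁻¹(I_V) = I + (t_i : i ∉ S_V)`.  Here `I_V` is the kernel of `t_j ↦ z̄_j⁻¹`; since the
localized symmetric algebra of `(F^n/V)^*` embeds into the localization `R'` of
`F[x₁,…,x_n]` inverting the `z_j`, `j ∈ S_V`, the ideal `I_V` is the kernel of the map
to `R'`. -/
theorem statement5
    (F : Type) [Field F] (n m : ℕ) (hn : 0 < n) (hm : 0 < m)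
    (c : Fin m → Fin n → F) (hc : ∀ i, c i ≠ 0)
    (V : Submodule F (Fin n → F)) (hV : IsSpecial c V)
    (R : Type) [CommRing R] [Algebra F R] [Algebra (MvPolynomial (Fin n) F) R]
    [IsScalarTower F (MvPolynomial (Fin n) F) R]
    [IsLocalization.Away (∏ i, zpoly c i) R]
    (zinv : Fin m → R)
    (hzinv : ∀ i, algebraMap (MvPolynomial (Fin n) F) R (zpoly c i) * zinv i = 1)
    (R' : Type) [CommRing R'] [Algebra F R'] [Algebra (MvPolynomial (Fin n) F) R']
    [IsScalarTower F (MvPolynomial (Fin n) F) R']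
    [IsLocalization.Away (∏ j ∈ SV c V, zpoly c j) R']
    (zinvV : Fin m → R')
    (hzinvV : ∀ j ∈ SV c V, algebraMap (MvPolynomial (Fin n) F) R' (zpoly c j) * zinvV j = 1) :
    Ideal.comap
      (MvPolynomial.aeval (fun i : Fin m =>
          if h : i ∈ SV c V then (X (⟨i, h⟩ : {j : Fin m // j ∈ SV c V}) :
            MvPolynomial {j : Fin m // j ∈ SV c V} F) else 0) :
        MvPolynomial (Fin m) F →ₐ[F] MvPolynomial {j : Fin m // j ∈ SV c V} F).toRingHom
      (RingHom.ker (MvPolynomial.aeval (fun j : {j : Fin m // j ∈ SV c V} => zinvV j.1) :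
        MvPolynomial {j : Fin m // j ∈ SV c V} F →ₐ[F] R').toRingHom)
    = RingHom.ker (MvPolynomial.aeval zinv : MvPolynomial (Fin m) F →ₐ[F] R).toRingHom ⊔
        Ideal.span {p : MvPolynomial (Fin m) F |
          ∃ i : Fin m, i ∉ SV c V ∧ p = X i} := by
  classical
  apply le_antisymm
  · -- part A
    intro p hp
    rw [Ideal.mem_comap, RingHom.mem_ker] at hp
    have hp' : (MvPolynomial.aeval (fun j : {j : Fin m // j ∈ SV c V} => zinvV j.1))
        ((MvPolynomial.aeval (fun i : Fin m =>
          if h : i ∈ SV c V then (X (⟨i, h⟩ : {j : Fin m // j ∈ SV c V}) :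
            MvPolynomial {j : Fin m // j ∈ SV c V} F) else 0)) p) = 0 := hp
    have keysub : ∀ q : MvPolynomial (Fin m) F,
        q - rename Subtype.val ((MvPolynomial.aeval (fun i : Fin m =>
          if h : i ∈ SV c V then (X (⟨i, h⟩ : {j : Fin m // j ∈ SV c V}) :
            MvPolynomial {j : Fin m // j ∈ SV c V} F) else 0)) q) ∈
          Ideal.span {p : MvPolynomial (Fin m) F | ∃ i : Fin m, i ∉ SV c V ∧ p = X i} := by
      intro q
      induction q using MvPolynomial.induction_on with
      | C a => simp [aeval_C, MvPolynomial.algebraMap_eq]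
      | add q₁ q₂ h₁ h₂ =>
        rw [map_add, map_add]
        have := Ideal.add_mem _ h₁ h₂
        convert this using 1
        ring
      | mul_X q i hq =>
        rw [map_mul, map_mul, aeval_X]
        by_cases h : i ∈ SV c V
        · rw [dif_pos h, rename_X]
          have heq : q * X i - rename Subtype.val ((MvPolynomial.aeval (fun i : Fin m =>
              if h : i ∈ SV c V then (X (⟨i, h⟩ : {j : Fin m // j ∈ SV c V}) :
                MvPolynomial {j : Fin m // j ∈ SV c V} F) else 0)) q) * X i
              = (q - rename Subtype.val ((MvPolynomial.aeval (fun i : Fin m =>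
              if h : i ∈ SV c V then (X (⟨i, h⟩ : {j : Fin m // j ∈ SV c V}) :
                MvPolynomial {j : Fin m // j ∈ SV c V} F) else 0)) q)) * X i := by ring
          rw [heq]
          exact Ideal.mul_mem_right _ _ hq
        · rw [dif_neg h, map_zero, mul_zero, sub_zero]
          exact Ideal.mul_mem_left _ _ (Ideal.subset_span ⟨i, h, rfl⟩)
    -- the map ψ : R' →+* R
    have hUR : IsUnit (algebraMap (MvPolynomial (Fin n) F) R (∏ j ∈ SV c V, zpoly c j)) := by
      apply IsUnit.of_mul_eq_one (∏ j ∈ SV c V, zinv j)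
      rw [map_prod, ← Finset.prod_mul_distrib]
      exact Finset.prod_eq_one (fun j _ => hzinv j)
    set ψ : R' →+* R := IsLocalization.Away.lift (∏ j ∈ SV c V, zpoly c j) hUR with hψ
    have hψa : ∀ a : MvPolynomial (Fin n) F, ψ (algebraMap _ R' a) = algebraMap _ R a :=
      fun a => IsLocalization.Away.lift_eq _ hUR a
    have hψinv : ∀ j ∈ SV c V, ψ (zinvV j) = zinv j := by
      intro j hj
      have h1 : algebraMap (MvPolynomial (Fin n) F) R (zpoly c j) * ψ (zinvV j) = 1 := by
        rw [← hψa (zpoly c j), ← map_mul, hzinvV j hj, map_one]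
      exact st5_inv_unique h1 (hzinv j)
    have hψF : ψ.comp (algebraMap F R') = algebraMap F R := by
      rw [IsScalarTower.algebraMap_eq F (MvPolynomial (Fin n) F) R',
        IsScalarTower.algebraMap_eq F (MvPolynomial (Fin n) F) R, ← RingHom.comp_assoc]
      congr 1
      exact RingHom.ext hψa
    have key : ∀ w : MvPolynomial {j : Fin m // j ∈ SV c V} F,
        ψ ((MvPolynomial.aeval (fun j : {j : Fin m // j ∈ SV c V} => zinvV j.1)) w)
          = (MvPolynomial.aeval (zinv ∘ Subtype.val)) w := by
      intro w
      rw [MvPolynomial.aeval_def, eval₂_comp_left ψ, hψF, MvPolynomial.aeval_def]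
      congr 1
      funext j
      exact hψinv j.1 j.2
    have key2 : MvPolynomial.aeval zinv (rename Subtype.val
        ((MvPolynomial.aeval (fun i : Fin m =>
          if h : i ∈ SV c V then (X (⟨i, h⟩ : {j : Fin m // j ∈ SV c V}) :
            MvPolynomial {j : Fin m // j ∈ SV c V} F) else 0)) p)) = 0 := by
      rw [aeval_rename, ← key, hp', map_zero]
    have hmem : rename Subtype.val ((MvPolynomial.aeval (fun i : Fin m =>
          if h : i ∈ SV c V then (X (⟨i, h⟩ : {j : Fin m // j ∈ SV c V}) :
            MvPolynomial {j : Fin m // j ∈ SV c V} F) else 0)) p) ∈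
        RingHom.ker (MvPolynomial.aeval zinv :
          MvPolynomial (Fin m) F →ₐ[F] R).toRingHom := by
      rw [RingHom.mem_ker]
      exact key2
    have := Submodule.add_mem_sup hmem (keysub p)
    simpa using this
  · apply sup_le
    · intro p hp
      rw [RingHom.mem_ker] at hp
      rw [Ideal.mem_comap, RingHom.mem_ker]
      have hkey := st5_key c hc V R zinv hzinv R' zinvV hzinvV p hp
      have hcomp : (MvPolynomial.aeval (fun j : {j : Fin m // j ∈ SV c V} => zinvV j.1))
          ((MvPolynomial.aeval (fun i : Fin m =>
            if h : i ∈ SV c V then (X (⟨i, h⟩ : {j : Fin m // j ∈ SV c V}) :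
              MvPolynomial {j : Fin m // j ∈ SV c V} F) else 0)) p)
          = MvPolynomial.aeval (fun i : Fin m => if i ∈ SV c V then zinvV i else 0) p := by
        rw [comp_aeval_apply]
        have hfun : (fun i : Fin m => (MvPolynomial.aeval
            (fun j : {j : Fin m // j ∈ SV c V} => zinvV j.1))
            (if h : i ∈ SV c V then (X (⟨i, h⟩ : {j : Fin m // j ∈ SV c V}) :
              MvPolynomial {j : Fin m // j ∈ SV c V} F) else 0))
            = (fun i : Fin m => if i ∈ SV c V then zinvV i else 0) := by
          funext i
          by_cases h : i ∈ SV c V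
          · rw [dif_pos h, if_pos h, aeval_X]
          · rw [dif_neg h, if_neg h, map_zero]
        rw [hfun]
      exact hcomp.trans hkey
    · rw [Ideal.span_le]
      rintro q ⟨i, hi, rfl⟩
      rw [SetLike.mem_coe, Ideal.mem_comap, RingHom.mem_ker]
      show (MvPolynomial.aeval (fun j : {j : Fin m // j ∈ SV c V} => zinvV j.1))
        ((MvPolynomial.aeval (fun i : Fin m =>
          if h : i ∈ SV c V then (X (⟨i, h⟩ : {j : Fin m // j ∈ SV c V}) :
            MvPolynomial {j : Fin m // j ∈ SV c V} F) else 0)) (X i)) = 0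
      rw [aeval_X, dif_neg hi, map_zero]
end
end

section
/- For every linear relation L and every subset S ⊆ |L|, the element P_{L,S} lies in the kernel K of ψ; that is, ψ(P_{L,S}) = 0 in T. -/
open scoped TensorProduct
open MvPolynomial

noncomputable section

/-! ### Auxiliary lemmas -/

section Aux

variable {F : Type} [Field F] {n m : ℕ}

/-- The wedge product of the `ι (c i)` along a list of indices. -/
def wl (c : Fin m → Fin n → F) (l : List (Fin m)) : ExtAlg F n :=
  (l.map fun i => ExteriorAlgebra.ι F (c i)).prod

lemma wl_nil (c : Fin m → Fin n → F) : wl c ([] : List (Fin m)) = 1 := rfl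

lemma wl_cons (c : Fin m → Fin n → F) (i : Fin m) (t : List (Fin m)) :
    wl c (i :: t) = ExteriorAlgebra.ι F (c i) * wl c t := by
  simp [wl]

lemma wl_append (c : Fin m → Fin n → F) (s t : List (Fin m)) :
    wl c (s ++ t) = wl c s * wl c t := by
  simp [wl]

lemma iota_mul_wl (c : Fin m → Fin n → F) (x : Fin m) (t : List (Fin m)) (hx : x ∈ t) :
    ExteriorAlgebra.ι F (c x) * wl c t = 0 := by
  induction t with
  | nil => simp at hx
  | cons b t' ih =>
    rw [wl_cons, ← mul_assoc]
    rcases List.mem_cons.mp hx with h | h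
    · subst h; rw [ExteriorAlgebra.ι_sq_zero, zero_mul]
    · have hsw : ExteriorAlgebra.ι F (c x) * ExteriorAlgebra.ι F (c b)
          = -(ExteriorAlgebra.ι F (c b) * ExteriorAlgebra.ι F (c x)) := by
        rw [eq_neg_iff_add_eq_zero]
        exact ExteriorAlgebra.ι_add_mul_swap _ _
      rw [hsw, neg_mul, mul_assoc, ih h, mul_zero, neg_zero]

lemma wl_eq_zero_of_not_nodup (c : Fin m → Fin n → F) (t : List (Fin m)) (h : ¬ t.Nodup) :
    wl c t = 0 := by
  induction t with
  | nil => exact absurd List.nodup_nil h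
  | cons b t' ih =>
    rw [List.nodup_cons] at h
    by_cases hb : b ∈ t'
    · rw [wl_cons, iota_mul_wl c b t' hb]
    · rw [wl_cons, ih (fun hn => h ⟨hb, hn⟩), mul_zero]

lemma sum_range_getD {α M : Type} [AddCommMonoid M] (f : α → M) (d : α) (t : List α) :
    ∑ s ∈ Finset.range t.length, f (t.getD s d) = (t.map f).sum := by
  induction t with
  | nil => simp
  | cons b t' ih =>
    rw [List.length_cons, Finset.sum_range_succ']
    simp only [List.getD_cons_succ, List.getD_cons_zero, ih, List.map_cons, List.sum_cons]
    exact add_comm _ _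

lemma finset_sum_sort {α M : Type} [LinearOrder α] [AddCommMonoid M] (S : Finset α) (f : α → M) :
    ∑ j ∈ S, f j = ((S.sort (· ≤ ·)).map f).sum := by
  rw [← Finset.sum_map_toList]
  exact (List.Perm.sum_eq ((Finset.sort_perm_toList (r := (· ≤ ·)) (s := S)).map f)).symm

lemma finset_prod_sort {α M : Type} [LinearOrder α] [CommMonoid M] (S : Finset α) (f : α → M) :
    ∏ j ∈ S, f j = ((S.sort (· ≤ ·)).map f).prod := by
  rw [← Finset.prod_map_toList]
  exact (List.Perm.prod_eq ((Finset.sort_perm_toList (r := (· ≤ ·)) (s := S)).map f)).symm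

end Aux

set_option maxHeartbeats 1600000 in
/-- For every linear relation `L` and every `S ⊆ |L|`, `ψ(P_{L,S}) = 0` in `T`. -/
theorem statement10
    (F : Type) [Field F] (n m : ℕ) (hn : 0 < n) (hm : 0 < m)
    (c : Fin m → Fin n → F) (hc : ∀ i, c i ≠ 0)
    (R : Type) [CommRing R] [Algebra F R] [Algebra (MvPolynomial (Fin n) F) R]
    [IsScalarTower F (MvPolynomial (Fin n) F) R]
    [IsLocalization.Away (∏ i, zpoly c i) R]
    (zinv : Fin m → R)
    (hzinv : ∀ i, algebraMap (MvPolynomial (Fin n) F) R (zpoly c i) * zinv i = 1)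
    (ψ : XiAlg F m →ₐ[F] R ⊗[F] ExtAlg F n)
    (hψt : ∀ i, ψ ((X i : MvPolynomial (Fin m) F) ⊗ₜ[F] 1) = zinv i ⊗ₜ[F] 1)
    (hψu : ∀ i, ψ ((1 : MvPolynomial (Fin m) F) ⊗ₜ[F] uGen i)
        = zinv i ⊗ₜ[F] ExteriorAlgebra.ι F (c i))
    (a : Fin m → F) (ha : IsLinRel c a)
    (S : Finset (Fin m)) (hS : S ⊆ lsupp a) :
    ψ (PLS a S) = 0 := by
  classical
  obtain ⟨-, hrel⟩ := ha
  set L := lsupp a with hLdef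
  set l : List (Fin m) := S.sort (· ≤ ·) with hldef
  set φ := algebraMap (MvPolynomial (Fin n) F) R with hφdef
  set Z : Finset (Fin m) → R := fun M => ∏ j ∈ M, zinv j with hZdef
  have i₀ : Fin m := ⟨0, hm⟩
  -- basic facts about the sorted list
  have hmeml : ∀ {x : Fin m}, x ∈ l ↔ x ∈ S := fun {x} => Finset.mem_sort _
  -- ψ on pure tensors
  have hψtM : ∀ M : Finset (Fin m),
      ψ (tMon M ⊗ₜ[F] (1 : ExtAlg F m)) = Z M ⊗ₜ[F] (1 : ExtAlg F n) := by
    intro M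
    induction M using Finset.induction_on with
    | empty =>
      have h0 : (tMon (∅ : Finset (Fin m)) ⊗ₜ[F] (1 : ExtAlg F m) : XiAlg F m) = 1 := by
        simp [tMon, Algebra.TensorProduct.one_def]
      rw [h0, map_one]
      simp [hZdef, Algebra.TensorProduct.one_def]
    | @insert j M' hj ih =>
      have h1 : (tMon (insert j M') : MvPolynomial (Fin m) F) = X j * tMon M' :=
        Finset.prod_insert hj
      have h2 : Z (insert j M') = zinv j * Z M' := Finset.prod_insert hj
      have h3 : (tMon (insert j M') ⊗ₜ[F] (1 : ExtAlg F m) : XiAlg F m)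
          = ((X j : MvPolynomial (Fin m) F) ⊗ₜ[F] (1 : ExtAlg F m))
            * (tMon M' ⊗ₜ[F] (1 : ExtAlg F m)) := by
        rw [Algebra.TensorProduct.tmul_mul_tmul, ← h1, mul_one]
      rw [h3, map_mul, hψt, ih, Algebra.TensorProduct.tmul_mul_tmul, mul_one, h2]
  have hψul : ∀ t : List (Fin m),
      ψ ((1 : MvPolynomial (Fin m) F) ⊗ₜ[F] uList t) = (t.map zinv).prod ⊗ₜ[F] wl c t := by
    intro t
    induction t with
    | nil =>
      have h0 : ((1 : MvPolynomial (Fin m) F) ⊗ₜ[F] uList ([] : List (Fin m)) : XiAlg F m) = 1 := by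
        simp [uList, Algebra.TensorProduct.one_def]
      rw [h0, map_one]
      simp [wl_nil, Algebra.TensorProduct.one_def]
    | cons b t' ih =>
      have h1 : (uList (b :: t') : ExtAlg F m) = uGen b * uList t' := by simp [uList]
      have h2 : ((1 : MvPolynomial (Fin m) F) ⊗ₜ[F] uList (b :: t') : XiAlg F m)
          = ((1 : MvPolynomial (Fin m) F) ⊗ₜ[F] uGen b)
            * ((1 : MvPolynomial (Fin m) F) ⊗ₜ[F] uList t') := by
        rw [Algebra.TensorProduct.tmul_mul_tmul, ← h1, mul_one]
      rw [h2, map_mul, hψu, ih, Algebra.TensorProduct.tmul_mul_tmul, wl_cons]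
      rw [List.map_cons, List.prod_cons]
  have hψmul : ∀ (M : Finset (Fin m)) (t : List (Fin m)),
      ψ (tMon M ⊗ₜ[F] uList t) = (Z M * (t.map zinv).prod) ⊗ₜ[F] wl c t := by
    intro M t
    have h1 : (tMon M ⊗ₜ[F] uList t : XiAlg F m)
        = (tMon M ⊗ₜ[F] (1 : ExtAlg F m))
          * ((1 : MvPolynomial (Fin m) F) ⊗ₜ[F] uList t) := by
      rw [Algebra.TensorProduct.tmul_mul_tmul, mul_one, one_mul]
    rw [h1, map_mul, hψtM, hψul, Algebra.TensorProduct.tmul_mul_tmul, one_mul]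
  -- the vector-level linear relation
  have hvec : ∑ i ∈ L, a i • c i = 0 := by
    funext j
    have h2 := congrArg (MvPolynomial.coeff (Finsupp.single j 1)) hrel
    rw [MvPolynomial.coeff_sum, MvPolynomial.coeff_zero] at h2
    have h3 : ∀ i ∈ L,
        MvPolynomial.coeff (Finsupp.single j 1) (C (a i) * zpoly c i) = a i * c i j := by
      intro i _
      rw [MvPolynomial.coeff_C_mul, zpoly, MvPolynomial.coeff_sum]
      have h4 : ∀ j' : Fin n,
          MvPolynomial.coeff (Finsupp.single j 1) (C (c i j') * X j')
            = if j' = j then c i j' else 0 := by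
        intro j'
        rw [MvPolynomial.coeff_C_mul, MvPolynomial.coeff_X']
        by_cases hj' : j' = j
        · subst hj'; simp
        · rw [if_neg (fun h => hj' (Finsupp.single_left_injective one_ne_zero h)),
            if_neg hj', mul_zero]
      rw [Finset.sum_congr rfl fun j' _ => h4 j', Finset.sum_ite_eq' Finset.univ j (c i)]
      simp
    rw [Finset.sum_congr rfl h3] at h2
    have h5 : (∑ i ∈ L, a i • c i) j = ∑ i ∈ L, a i * c i j := by
      rw [Finset.sum_apply]
      simp
    rw [h5, h2]
    simp
  -- localization facts
  have hZS : Z S = (l.map zinv).prod := finset_prod_sort S zinv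
  have f2 : ∀ i ∈ L, Z (L.erase i) = φ (zpoly c i) * Z L := by
    intro i hi
    have hB : zinv i * Z (L.erase i) = Z L := Finset.mul_prod_erase L zinv hi
    calc Z (L.erase i) = (φ (zpoly c i) * zinv i) * Z (L.erase i) := by
          rw [hzinv i, one_mul]
      _ = φ (zpoly c i) * (zinv i * Z (L.erase i)) := by ring
      _ = φ (zpoly c i) * Z L := by rw [hB]
  have hsetu : ∀ i ∈ L \ S, (L \ insert i S) ∪ S = L.erase i := by
    intro i hi
    rw [Finset.mem_sdiff] at hi
    ext x
    simp only [Finset.mem_union, Finset.mem_sdiff, Finset.mem_insert, Finset.mem_erase]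
    constructor
    · rintro (⟨hxL, hx⟩ | hxS)
      · exact ⟨fun h => hx (Or.inl h), hxL⟩
      · exact ⟨fun h => hi.2 (h ▸ hxS), hS hxS⟩
    · rintro ⟨hne, hxL⟩
      by_cases hxS : x ∈ S
      · exact Or.inr hxS
      · exact Or.inl ⟨hxL, fun h => h.elim hne hxS⟩
  have f3 : ∀ i ∈ L \ S, Z (L \ insert i S) * Z S = Z (L.erase i) := by
    intro i hi
    have hdisj : Disjoint (L \ insert i S) S :=
      Finset.disjoint_of_subset_right (Finset.subset_insert i S) Finset.sdiff_disjoint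
    show (∏ j ∈ L \ insert i S, zinv j) * ∏ j ∈ S, zinv j = ∏ j ∈ L.erase i, zinv j
    rw [← Finset.prod_union hdisj, hsetu i hi]
  -- the key localization identity for the "set" terms
  have f4 : ∀ i ∈ L \ S, ∀ s ∈ Finset.range l.length,
      Z (L \ insert i S) * ((l.set s i).map zinv).prod = Z (L.erase (l.getD s i₀)) := by
    intro i hi s hs
    rw [Finset.mem_range] at hs
    obtain ⟨l₁, l₂, hdec, hlen1, hset⟩ := List.exists_of_set (a' := i) hs
    have hjs : l.getD s i₀ = l[s] := List.getD_eq_getElem l i₀ hs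
    set js := l[s] with hjsdef
    have hjsl : js ∈ l := by
      rw [hdec]; exact List.mem_append_right _ List.mem_cons_self
    have hjsS : js ∈ S := hmeml.mp hjsl
    have hjsL : js ∈ L := hS hjsS
    have hiL : i ∈ L := (Finset.mem_sdiff.mp hi).1
    have hvjs : φ (zpoly c js) * zinv js = 1 := hzinv js
    have hZl : (l.map zinv).prod = (l₁.map zinv).prod * (zinv js * (l₂.map zinv).prod) := by
      rw [hdec]; simp
    have hZset : ((l.set s i).map zinv).prod
        = (l₁.map zinv).prod * (zinv i * (l₂.map zinv).prod) := by
      rw [hset]; simp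
    have hBi : zinv i * Z (L.erase i) = Z L := Finset.mul_prod_erase L zinv hiL
    have hBjs : zinv js * Z (L.erase js) = Z L := Finset.mul_prod_erase L zinv hjsL
    rw [hjs]
    calc Z (L \ insert i S) * ((l.set s i).map zinv).prod
        = (φ (zpoly c js) * zinv js)
            * (Z (L \ insert i S) * ((l.set s i).map zinv).prod) := by rw [hvjs, one_mul]
      _ = zinv i * (φ (zpoly c js)
            * (Z (L \ insert i S)
              * ((l₁.map zinv).prod * (zinv js * (l₂.map zinv).prod)))) := by
          rw [hZset]; ring
      _ = zinv i * (φ (zpoly c js) * (Z (L \ insert i S) * Z S)) := by rw [← hZl, ← hZS]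
      _ = zinv i * (φ (zpoly c js) * Z (L.erase i)) := by rw [f3 i hi]
      _ = φ (zpoly c js) * (zinv i * Z (L.erase i)) := by ring
      _ = φ (zpoly c js) * Z L := by rw [hBi]
      _ = φ (zpoly c js) * (zinv js * Z (L.erase js)) := by rw [hBjs]
      _ = (φ (zpoly c js) * zinv js) * Z (L.erase js) := by ring
      _ = Z (L.erase js) := by rw [hvjs, one_mul]
  -- the exterior-algebra collapse
  have g1 : ∀ s ∈ Finset.range l.length,
      ∑ i ∈ L \ S, a i • wl c (l.set s i) = -(a (l.getD s i₀)) • wl c l := by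
    intro s hs
    rw [Finset.mem_range] at hs
    obtain ⟨l₁, l₂, hdec, hlen1, -⟩ := List.exists_of_set (a' := i₀) hs
    have hjs : l.getD s i₀ = l[s] := List.getD_eq_getElem l i₀ hs
    set js := l[s] with hjsdef
    have hjsl : js ∈ l := by
      rw [hdec]; exact List.mem_append_right _ List.mem_cons_self
    have hjsS : js ∈ S := hmeml.mp hjsl
    have hsetx : ∀ x : Fin m, l.set s x = l₁ ++ x :: l₂ := by
      intro x
      rw [hdec, List.set_append_right _ _ hlen1.le, hlen1]
      simp
    have hwl : ∀ x : Fin m,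
        wl c (l.set s x) = wl c l₁ * (ExteriorAlgebra.ι F (c x) * wl c l₂) := by
      intro x
      rw [hsetx x, wl_append, wl_cons]
    have hsplit : ∑ i ∈ L \ S, a i • c i = -∑ j ∈ S, a j • c j := by
      have h6 := Finset.sum_sdiff (f := fun i => a i • c i) hS
      rw [hvec] at h6
      exact eq_neg_of_add_eq_zero_left h6
    have hι : ∀ (T : Finset (Fin m)), ExteriorAlgebra.ι F (∑ i ∈ T, a i • c i)
        = ∑ i ∈ T, a i • ExteriorAlgebra.ι F (c i) := by
      intro T
      rw [map_sum]
      exact Finset.sum_congr rfl fun i _ => by rw [map_smul]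
    have hdist : ∀ (T : Finset (Fin m)),
        wl c l₁ * (ExteriorAlgebra.ι F (∑ i ∈ T, a i • c i) * wl c l₂)
          = ∑ i ∈ T, a i • (wl c l₁ * (ExteriorAlgebra.ι F (c i) * wl c l₂)) := by
      intro T
      rw [hι, Finset.sum_mul, Finset.mul_sum]
      exact Finset.sum_congr rfl fun i _ => by
        rw [smul_mul_assoc, mul_smul_comm]
    have hzeroj : ∀ j ∈ S, j ≠ js →
        wl c l₁ * (ExteriorAlgebra.ι F (c j) * wl c l₂) = 0 := by
      intro j hjS hne
      have hjl : j ∈ l := hmeml.mpr hjS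
      rw [hdec] at hjl
      rcases List.mem_append.mp hjl with h | h
      · -- j ∈ l₁ : duplicate
        rw [← wl_cons, ← wl_append]
        apply wl_eq_zero_of_not_nodup
        intro hnd
        rcases List.nodup_append'.mp hnd with ⟨-, -, hdisj⟩
        exact hdisj h List.mem_cons_self
      · rcases List.mem_cons.mp h with h' | h'
        · exact absurd h' hne
        · rw [iota_mul_wl c j l₂ h', mul_zero]
    calc ∑ i ∈ L \ S, a i • wl c (l.set s i)
        = ∑ i ∈ L \ S, a i • (wl c l₁ * (ExteriorAlgebra.ι F (c i) * wl c l₂)) :=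
          Finset.sum_congr rfl fun i _ => by rw [hwl]
      _ = wl c l₁ * (ExteriorAlgebra.ι F (∑ i ∈ L \ S, a i • c i) * wl c l₂) :=
          (hdist (L \ S)).symm
      _ = -(wl c l₁ * (ExteriorAlgebra.ι F (∑ j ∈ S, a j • c j) * wl c l₂)) := by
          rw [hsplit, map_neg, neg_mul, mul_neg]
      _ = -∑ j ∈ S, a j • (wl c l₁ * (ExteriorAlgebra.ι F (c j) * wl c l₂)) := by
          rw [hdist S]
      _ = -(a js • (wl c l₁ * (ExteriorAlgebra.ι F (c js) * wl c l₂))) := by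
          rw [Finset.sum_eq_single js (fun j hjS hne => by rw [hzeroj j hjS hne, smul_zero])
            (fun h => absurd hjsS h)]
      _ = -(a js • wl c l) := by rw [← hwl js, hsetx js, ← hdec]
      _ = -(a (l.getD s i₀)) • wl c l := by rw [hjs, neg_smul]
  -- the coefficient sum vanishes
  have hpoly0 : ∑ i ∈ L, a i • zpoly c i = 0 := by
    have h7 : ∀ i ∈ L, a i • zpoly c i = C (a i) * zpoly c i := fun i _ =>
      MvPolynomial.smul_eq_C_mul _ _
    rw [Finset.sum_congr rfl h7, hrel]
  have hzero : ∑ i ∈ L, a i • Z (L.erase i) = 0 := by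
    set Φ := IsScalarTower.toAlgHom F (MvPolynomial (Fin n) F) R with hΦdef
    have hΦφ : ∀ p, Φ p = φ p := fun p => rfl
    calc ∑ i ∈ L, a i • Z (L.erase i)
        = ∑ i ∈ L, a i • (φ (zpoly c i) * Z L) :=
          Finset.sum_congr rfl fun i hi => by rw [f2 i hi]
      _ = (∑ i ∈ L, a i • φ (zpoly c i)) * Z L := by
          rw [Finset.sum_mul]
          exact Finset.sum_congr rfl fun i _ => by rw [smul_mul_assoc]
      _ = Φ (∑ i ∈ L, a i • zpoly c i) * Z L := by
          rw [map_sum]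
          congr 1
          exact Finset.sum_congr rfl fun i _ => by rw [map_smul, hΦφ]
      _ = 0 := by rw [hpoly0, map_zero, zero_mul]
  -- assemble
  have key : ∀ i ∈ L \ S,
      ψ ((C (a i) * tMon (L \ insert i S)) ⊗ₜ[F]
        (uM S - ∑ s ∈ Finset.range l.length, uList (l.set s i)))
      = a i • (Z (L.erase i) ⊗ₜ[F] wl c l)
        - ∑ s ∈ Finset.range l.length,
            a i • (Z (L.erase (l.getD s i₀)) ⊗ₜ[F] wl c (l.set s i)) := by
    intro i hi
    have huMS : (uM S : ExtAlg F m) = uList l := rfl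
    rw [← MvPolynomial.smul_eq_C_mul, ← TensorProduct.smul_tmul', map_smul,
      TensorProduct.tmul_sub, TensorProduct.tmul_sum, map_sub, map_sum, huMS,
      hψmul (L \ insert i S) l]
    have hc1 : Z (L \ insert i S) * (l.map zinv).prod = Z (L.erase i) := by
      rw [← hZS]; exact f3 i hi
    rw [hc1]
    have hc2 : ∀ s ∈ Finset.range l.length,
        ψ (tMon (L \ insert i S) ⊗ₜ[F] uList (l.set s i))
          = Z (L.erase (l.getD s i₀)) ⊗ₜ[F] wl c (l.set s i) := by
      intro s hs
      rw [hψmul, f4 i hi s hs]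
    rw [Finset.sum_congr rfl hc2, smul_sub, Finset.smul_sum]
  have hPLS : PLS a S = ∑ i ∈ L \ S,
      (C (a i) * tMon (L \ insert i S)) ⊗ₜ[F]
        (uM S - ∑ s ∈ Finset.range l.length, uList (l.set s i)) := rfl
  rw [hPLS, map_sum, Finset.sum_congr rfl key, Finset.sum_sub_distrib, Finset.sum_comm]
  have hinner : ∀ s ∈ Finset.range l.length,
      ∑ i ∈ L \ S, a i • (Z (L.erase (l.getD s i₀)) ⊗ₜ[F] wl c (l.set s i))
        = -(a (l.getD s i₀)) • (Z (L.erase (l.getD s i₀)) ⊗ₜ[F] wl c l) := by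
    intro s hs
    have h8 : ∀ i ∈ L \ S,
        a i • (Z (L.erase (l.getD s i₀)) ⊗ₜ[F] wl c (l.set s i))
          = Z (L.erase (l.getD s i₀)) ⊗ₜ[F] (a i • wl c (l.set s i)) := fun i _ =>
      (TensorProduct.tmul_smul _ _ _).symm
    rw [Finset.sum_congr rfl h8, ← TensorProduct.tmul_sum, g1 s hs,
      TensorProduct.tmul_smul]
  rw [Finset.sum_congr rfl hinner]
  have h9 : ∑ s ∈ Finset.range l.length,
      -(a (l.getD s i₀)) • (Z (L.erase (l.getD s i₀)) ⊗ₜ[F] wl c l)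
      = -∑ j ∈ S, a j • (Z (L.erase j) ⊗ₜ[F] wl c l) := by
    have h10 : ∀ s ∈ Finset.range l.length,
        -(a (l.getD s i₀)) • (Z (L.erase (l.getD s i₀)) ⊗ₜ[F] wl c l)
          = -(a (l.getD s i₀) • (Z (L.erase (l.getD s i₀)) ⊗ₜ[F] wl c l)) := fun s _ =>
      neg_smul _ _
    rw [Finset.sum_congr rfl h10, Finset.sum_neg_distrib,
      sum_range_getD (fun j => a j • (Z (L.erase j) ⊗ₜ[F] wl c l)) i₀ l,
      ← finset_sum_sort]
  rw [h9, sub_neg_eq_add, Finset.sum_sdiff hS]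
  have h11 : ∀ i ∈ L, a i • (Z (L.erase i) ⊗ₜ[F] wl c l)
      = (a i • Z (L.erase i)) ⊗ₜ[F] wl c l := fun i _ =>
    (TensorProduct.smul_tmul' _ _ _)
  rw [Finset.sum_congr rfl h11, ← TensorProduct.sum_tmul, hzero,
    TensorProduct.zero_tmul]
end
end

section
/- For every linear relation L and every index i ∈ |L|, the identity u_i · P_L − t_i · P_{L,{i}} = Q_{L,∅} holds in Ξ, where Q_{L,∅} = Σ_{j∈|L|} a_j t_{|L|∖{j}} u_j. -/
open scoped TensorProduct
open MvPolynomial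

noncomputable section

set_option maxHeartbeats 1000000 in
/-- For every linear relation `L` and every `i ∈ |L|`,
`u_i · P_L − t_i · P_{L,{i}} = Q_{L,∅} = Σ_{j∈|L|} a_j t_{|L|∖{j}} u_j` in `Ξ`. -/
theorem statement11
    (F : Type) [Field F] (n m : ℕ) (hn : 0 < n) (hm : 0 < m)
    (c : Fin m → Fin n → F) (hc : ∀ i, c i ≠ 0)
    (a : Fin m → F) (ha : IsLinRel c a)
    (i : Fin m) (hi : i ∈ lsupp a) :
    ((1 : MvPolynomial (Fin m) F) ⊗ₜ[F] uGen i) * (PL a ⊗ₜ[F] (1 : ExtAlg F m))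
      - ((X i : MvPolynomial (Fin m) F) ⊗ₜ[F] (1 : ExtAlg F m)) * PLS a {i}
      = ∑ j ∈ lsupp a, (C (a j) * tMon (lsupp a \ {j})) ⊗ₜ[F] uGen j := by
  classical
  have key : ∀ j ∈ lsupp a \ {i},
      (X i : MvPolynomial (Fin m) F) * tMon (lsupp a \ insert j {i}) = tMon (lsupp a \ {j}) := by
    intro j hj
    simp only [Finset.mem_sdiff, Finset.mem_singleton] at hj
    have h1 : lsupp a \ insert j {i} = (lsupp a \ {j}).erase i := by
      ext k
      simp only [Finset.mem_sdiff, Finset.mem_insert, Finset.mem_singleton, Finset.mem_erase]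
      tauto
    have h2 : i ∈ lsupp a \ {j} := by
      simp only [Finset.mem_sdiff, Finset.mem_singleton]
      exact ⟨hi, fun h => hj.2 h.symm⟩
    rw [h1, tMon, tMon, Finset.mul_prod_erase _ _ h2]
  have hPLS : PLS a {i} = ∑ j ∈ lsupp a \ {i},
      (C (a j) * tMon (lsupp a \ insert j {i})) ⊗ₜ[F] (uGen i - uGen j) := by
    unfold PLS
    refine Finset.sum_congr rfl fun j hj => ?_
    congr 1
    simp [uM, uList, Finset.sort_singleton]
  rw [hPLS, PL, TensorProduct.sum_tmul, Finset.mul_sum, Finset.mul_sum]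
  simp only [Algebra.TensorProduct.tmul_mul_tmul, one_mul, mul_one]
  have h2 : ∑ j ∈ lsupp a \ {i},
      ((X i : MvPolynomial (Fin m) F) * (C (a j) * tMon (lsupp a \ insert j {i}))) ⊗ₜ[F]
        (uGen i - uGen j)
      = ∑ j ∈ lsupp a \ {i}, ((C (a j) * tMon (lsupp a \ {j})) ⊗ₜ[F] (uGen i - uGen j) : XiAlg F m) := by
    refine Finset.sum_congr rfl fun j hj => ?_
    rw [mul_left_comm, key j hj]
  rw [h2]
  have hs1 : ∑ j ∈ lsupp a, ((C (a j) * tMon (lsupp a \ {j})) ⊗ₜ[F] uGen i : XiAlg F m)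
      = (∑ j ∈ lsupp a \ {i}, (C (a j) * tMon (lsupp a \ {j})) ⊗ₜ[F] uGen i)
        + (C (a i) * tMon (lsupp a \ {i})) ⊗ₜ[F] uGen i :=
    Finset.sum_eq_sum_sdiff_singleton_add hi _
  have hs2 : ∑ j ∈ lsupp a, ((C (a j) * tMon (lsupp a \ {j})) ⊗ₜ[F] uGen j : XiAlg F m)
      = (∑ j ∈ lsupp a \ {i}, (C (a j) * tMon (lsupp a \ {j})) ⊗ₜ[F] uGen j)
        + (C (a i) * tMon (lsupp a \ {i})) ⊗ₜ[F] uGen i :=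
    Finset.sum_eq_sum_sdiff_singleton_add hi _
  rw [hs1, hs2]
  have h3 : (∑ j ∈ lsupp a \ {i}, (C (a j) * tMon (lsupp a \ {j})) ⊗ₜ[F] uGen i : XiAlg F m)
      - ∑ j ∈ lsupp a \ {i}, ((C (a j) * tMon (lsupp a \ {j})) ⊗ₜ[F] (uGen i - uGen j) : XiAlg F m)
      = ∑ j ∈ lsupp a \ {i}, ((C (a j) * tMon (lsupp a \ {j})) ⊗ₜ[F] uGen j : XiAlg F m) := by
    rw [← Finset.sum_sub_distrib]
    refine Finset.sum_congr rfl fun j hj => ?_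
    rw [← TensorProduct.tmul_sub, sub_sub_cancel]
  rw [← h3]
  abel
end
end
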